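/- arXiv:2103.06468 — 7 statements merged into one kernel-verified Lean document; each statement's English description precedes it below -/
import Mathlib

section
/- Let H be a simple r-uniform r-partite hypergraph with r-partition (X_1,...,X_r), and let I = I(H) be its edge ideal in k[V(H)]. Then for every m ≥ 1, the minimal degree of a monomial in the m-th symbolic power I^(m) equals rm. -/
open MvPolynomial


section CommAlg

variable {R : Type*} [CommRing R]

lemma mem_comap_map_loc_iff (p : Ideal R) [p.IsPrime] (J : Ideal R) (r : R) :
    r ∈ Ideal.comap (algebraMap R (Localization p.primeCompl))
        (Ideal.map (algebraMap R (Localization p.primeCompl)) J) ↔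
      ∃ s, s ∉ p ∧ s * r ∈ J := by
  constructor
  · intro h
    rw [Ideal.mem_comap, IsLocalization.mem_map_algebraMap_iff p.primeCompl] at h
    obtain ⟨⟨j, s⟩, hj⟩ := h
    rw [← map_mul, IsLocalization.eq_iff_exists p.primeCompl] at hj
    obtain ⟨c, hc⟩ := hj
    refine ⟨(c : R) * (s : R), p.primeCompl.mul_mem c.2 s.2, ?_⟩
    have : (c : R) * (r * (s : R)) = (c : R) * (j : R) := hc
    have h2 : (c : R) * (s : R) * r = (c : R) * (j : R) := by rw [← this]; ring
    rw [h2]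
    exact J.mul_mem_left _ j.2
  · rintro ⟨s, hs, hsr⟩
    rw [Ideal.mem_comap, IsLocalization.mem_map_algebraMap_iff p.primeCompl]
    refine ⟨⟨⟨s * r, hsr⟩, ⟨s, hs⟩⟩, ?_⟩
    simp only [← map_mul]
    ring_nf

lemma minimalPrime_mem_associatedPrimes [IsNoetherianRing R] {I p : Ideal R}
    (hp : p ∈ I.minimalPrimes) : p ∈ associatedPrimes R (R ⧸ I) := by
  obtain ⟨⟨hpp, hIp⟩, hmin⟩ := hp
  set φ := algebraMap R (Localization p.primeCompl) with hφ
  set K : Ideal R := Ideal.comap φ (Ideal.map φ I) with hK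
  have memK : ∀ r : R, r ∈ K ↔ ∃ s, s ∉ p ∧ s * r ∈ I := fun r =>
    mem_comap_map_loc_iff p I r
  have hIK : I ≤ K := Ideal.le_comap_map
  have hKtop : K ≠ ⊤ := by
    intro h
    obtain ⟨s, hs, hsI⟩ := (memK 1).mp (h ▸ Submodule.mem_top)
    rw [mul_one] at hsI
    exact hs (hIp hsI)
  have hKprim : ∀ x y : R, x * y ∈ K → x ∉ p → y ∈ K := by
    intro x y hxy hx
    obtain ⟨s, hs, hsI⟩ := (memK _).mp hxy
    refine (memK y).mpr ⟨s * x, fun h => ?_, by rwa [mul_assoc]⟩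
    rcases hpp.mem_or_mem h with h | h
    exacts [hs h, hx h]
  -- p ≤ radical K
  have hpKrad : p ≤ K.radical := by
    intro z hz
    have : φ z ∈ (Ideal.map φ I).radical := by
      rw [Ideal.radical_eq_sInf]
      refine Submodule.mem_sInf.mpr ?_
      rintro q ⟨hq1, hq2⟩
      have hcq : Ideal.comap φ q ≤ p := by
        intro w hw
        by_contra hwp
        have : IsUnit (φ w) := IsLocalization.map_units _ (⟨w, hwp⟩ : p.primeCompl)
        exact hq2.ne_top (Ideal.eq_top_of_isUnit_mem q hw this)
      have : p ≤ Ideal.comap φ q :=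
        hmin ⟨hq2.comap φ, le_trans hIK (Ideal.comap_mono hq1)⟩ hcq
      exact this hz
    obtain ⟨n, hn⟩ := Ideal.mem_radical_iff.mp this
    exact Ideal.mem_radical_iff.mpr ⟨n, by rwa [Ideal.mem_comap, map_pow]⟩
  -- radical K = p
  have hradK : K.radical = p := by
    refine le_antisymm ?_ hpKrad
    intro z hz
    obtain ⟨n, hn⟩ := Ideal.mem_radical_iff.mp hz
    obtain ⟨s, hs, hsI⟩ := (memK _).mp hn
    rcases hpp.mem_or_mem (hIp hsI) with h | h
    · exact absurd h hs
    · exact hpp.mem_of_pow_mem n h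
  -- find minimal power
  have hfg : p.FG := IsNoetherian.noetherian p
  have hpow : ∃ n, p ^ n ≤ K :=
    Ideal.exists_pow_le_of_le_radical_of_fg (hradK ▸ le_refl p) hfg
  classical
  have hn₀pos : Nat.find hpow ≠ 0 := by
    intro h
    apply hKtop
    have := Nat.find_spec hpow
    rw [h, pow_zero, Ideal.one_eq_top] at this
    exact top_le_iff.mp this
  obtain ⟨n', hn'⟩ : ∃ n', Nat.find hpow = n' + 1 :=
    ⟨Nat.find hpow - 1, (Nat.succ_pred_eq_of_pos (Nat.pos_of_ne_zero hn₀pos)).symm⟩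
  have hn₀spec : p ^ (n' + 1) ≤ K := hn' ▸ Nat.find_spec hpow
  have hnot : ¬ p ^ n' ≤ K := Nat.find_min hpow (by omega)
  obtain ⟨y, hy, hyK⟩ := SetLike.not_le_iff_exists.mp hnot
  obtain ⟨T, hT⟩ := hfg
  have hty : ∀ t ∈ T, t * y ∈ K := by
    intro t ht
    have htp : t ∈ p := hT ▸ Ideal.subset_span ht
    have : y * t ∈ p ^ n' * p := Ideal.mul_mem_mul hy htp
    rw [← pow_succ] at this
    exact hn₀spec (by rwa [mul_comm] at this)
  have hchoice : ∀ t : R, ∃ s : R, (t ∈ T → s ∉ p ∧ s * (t * y) ∈ I) ∧ (t ∉ T → s = 1) := by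
    intro t
    by_cases ht : t ∈ T
    · obtain ⟨s, hs, hsI⟩ := (memK _).mp (hty t ht)
      exact ⟨s, fun _ => ⟨hs, hsI⟩, fun h => absurd ht h⟩
    · exact ⟨1, fun h => absurd h ht, fun _ => rfl⟩
  choose f hf using hchoice
  set s : R := ∏ t ∈ T, f t with hsdef
  have hsp : s ∉ p := by
    rw [hsdef]
    intro h
    obtain ⟨t, ht, htp⟩ := Ideal.IsPrime.prod_mem_iff.mp h
    exact ((hf t).1 ht).1 htp
  set x := s * y with hx
  have hxK : x ∉ K := by
    intro h
    exact hyK (hKprim s y h hsp)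
  have hcolon : I.colon (Submodule.span R {x}) = p := by
    refine le_antisymm ?_ ?_
    · intro z hz
      rw [Submodule.mem_colon_span_singleton] at hz
      by_contra hzp
      exact hxK (hKprim z x (hIK hz) hzp)
    · rw [← hT, Ideal.span_le]
      intro t ht
      rw [SetLike.mem_coe, Submodule.mem_colon_span_singleton, smul_eq_mul]
      have key : t * x = (∏ u ∈ T.erase t, f u) * (f t * (t * y)) := by
        rw [hx, hsdef, ← Finset.mul_prod_erase T f ht]; ring
      rw [key]
      exact I.mul_mem_left _ (((hf t).1 ht).2)
  rw [AssociatedPrimes.mem_iff, isAssociatedPrime_iff]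
  refine ⟨hpp, Ideal.Quotient.mk I x, ?_⟩
  ext z
  rw [Submodule.mem_colon_singleton, Submodule.mem_bot, ← hcolon, Submodule.mem_colon_span_singleton,
    smul_eq_mul]
  have : z • (Ideal.Quotient.mk I x) = Ideal.Quotient.mk I (z * x) := by
    rw [Algebra.smul_def, Ideal.Quotient.algebraMap_eq, ← map_mul]
  rw [this, Ideal.Quotient.eq_zero_iff_mem]

end CommAlg


section Poly
variable {k : Type*} [Field k] {V : Type*} [DecidableEq V]

noncomputable def kill (C : Finset V) : MvPolynomial V k →ₐ[k] MvPolynomial V k :=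
  aeval (fun x => if x ∈ C then 0 else X x)

lemma sub_kill_mem_span (C : Finset V) (f : MvPolynomial V k) :
    f - kill C f ∈ Ideal.span ((fun x => (X x : MvPolynomial V k)) '' ↑C) := by
  induction f using MvPolynomial.induction_on with
  | C c => simp [kill]
  | add f g hf hg =>
    have := Ideal.add_mem _ hf hg
    rw [map_add]
    convert this using 1
    ring
  | mul_X f x hf =>
    by_cases hx : x ∈ C
    · have h0 : kill (k := k) C (f * X x) = 0 := by
        rw [map_mul]
        have : kill (k := k) C (X x) = 0 := by simp [kill, hx]
        rw [this, mul_zero]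
      rw [h0, sub_zero]
      exact Ideal.mul_mem_left _ f (Ideal.subset_span ⟨x, hx, rfl⟩)
    · have h1 : kill (k := k) C (f * X x) = kill C f * X x := by
        rw [map_mul]
        congr 1
        simp [kill, hx]
      rw [h1]
      have : f * X x - kill C f * X x = (f - kill C f) * X x := by ring
      rw [this]
      exact Ideal.mul_mem_right _ _ hf

lemma span_eq_ker (C : Finset V) :
    Ideal.span ((fun x => (X x : MvPolynomial V k)) '' ↑C)
      = RingHom.ker (kill (k := k) C) := by
  apply le_antisymm
  · rw [Ideal.span_le]
    rintro _ ⟨x, hx, rfl⟩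
    simp [RingHom.mem_ker, kill, Finset.mem_coe.mp hx]
  · intro f hf
    rw [RingHom.mem_ker] at hf
    have := sub_kill_mem_span C f
    rwa [hf, sub_zero] at this

lemma span_vars_isPrime (C : Finset V) :
    (Ideal.span ((fun x => (X x : MvPolynomial V k)) '' ↑C)).IsPrime := by
  rw [span_eq_ker]
  exact RingHom.ker_isPrime _

lemma X_mem_span_vars_iff (C : Finset V) (x : V) :
    (X x : MvPolynomial V k) ∈ Ideal.span ((fun x => (X x : MvPolynomial V k)) '' ↑C)
      ↔ x ∈ C := by
  constructor
  · intro h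
    rw [span_eq_ker, RingHom.mem_ker] at h
    by_contra hx
    simp only [kill, aeval_X, if_neg hx] at h
    exact X_ne_zero x h
  · intro h
    exact Ideal.subset_span ⟨x, h, rfl⟩

noncomputable def psi (C : Finset V) :
    MvPolynomial V k →ₐ[k] Polynomial (MvPolynomial V k) :=
  aeval (fun x => if x ∈ C then Polynomial.C (X x) * Polynomial.X else Polynomial.C (X x))

lemma psi_monomial (C : Finset V) (a : V →₀ ℕ) :
    psi (k := k) C (monomial a 1)
      = Polynomial.C (monomial a 1) * Polynomial.X ^ (∑ x ∈ C, a x) := by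
  induction a using Finsupp.induction with
  | zero => simp
  | single_add x n b hxb hn ih =>
    have hsplit : (monomial (Finsupp.single x n + b) (1 : k))
        = monomial (Finsupp.single x n) 1 * monomial b 1 := by
      rw [monomial_mul, one_mul]
    have hXpow : (monomial (Finsupp.single x n) (1 : k)) = X x ^ n :=
      X_pow_eq_monomial.symm
    have hsum : (∑ y ∈ C, (Finsupp.single x n + b) y)
        = (if x ∈ C then n else 0) + ∑ y ∈ C, b y := by
      simp only [Finsupp.add_apply, Finset.sum_add_distrib]
      congr 1
      simp only [Finsupp.single_apply]
      exact Finset.sum_ite_eq C x (fun _ => n)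
    rw [hsplit, map_mul, hXpow, map_pow, ih, hsum]
    by_cases hx : x ∈ C
    · simp only [psi, aeval_X, if_pos hx, hsplit, hXpow]
      simp only [Polynomial.C_mul, Polynomial.C_pow]
      ring
    · simp only [psi, aeval_X, if_neg hx, hsplit, hXpow]
      simp only [Polynomial.C_mul, Polynomial.C_pow]
      ring

lemma constantCoeff_psi (C : Finset V) (f : MvPolynomial V k) :
    Polynomial.constantCoeff (psi (k := k) C f) = kill C f := by
  induction f using MvPolynomial.induction_on with
  | C c =>
    simp [psi, kill, MvPolynomial.algebraMap_eq, Polynomial.algebraMap_apply]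
  | add f g hf hg => simp [map_add, hf, hg]
  | mul_X f x hf =>
    rw [map_mul, map_mul, map_mul, hf]
    by_cases hx : x ∈ C <;> simp [psi, kill, hx]

lemma monomial_sum_single (e : Finset V) (m : ℕ) :
    (monomial (∑ x ∈ e, Finsupp.single x m) (1 : k)) = (∏ x ∈ e, X x) ^ m := by
  classical
  induction e using Finset.induction with
  | empty => simp
  | insert x s hx ih =>
    rw [Finset.sum_insert hx, Finset.prod_insert hx, mul_pow, ← ih]
    rw [X_pow_eq_monomial, monomial_mul, one_mul]

lemma degree_sum_single (e : Finset V) (m : ℕ) :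
    ((∑ x ∈ e, Finsupp.single x m : V →₀ ℕ).sum fun _ n => n) = e.card * m := by
  classical
  induction e using Finset.induction with
  | empty => simp
  | insert x s hx ih =>
    rw [Finset.sum_insert hx, Finsupp.sum_add_index' (fun _ => rfl) (fun _ _ _ => rfl),
      Finsupp.sum_single_index rfl, ih, Finset.card_insert_of_notMem hx]
    ring

end Poly

noncomputable def symbolicPower {R : Type*} [CommRing R] (I : Ideal R) (n : ℕ) : Ideal R :=
  sInf { J : Ideal R | ∃ (p : Ideal R) (hp : p.IsPrime),
    p ∈ associatedPrimes R (R ⧸ I) ∧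
    J = Ideal.comap (algebraMap R (Localization (@Ideal.primeCompl R _ p hp)))
        (Ideal.map (algebraMap R (Localization (@Ideal.primeCompl R _ p hp))) (I ^ n)) }

noncomputable def edgeIdeal (k : Type*) {V : Type*} [CommRing k] [DecidableEq V]
    (E : Finset (Finset V)) : Ideal (MvPolynomial V k) :=
  Ideal.span ((fun e : Finset V => ∏ x ∈ e, (X x : MvPolynomial V k)) '' ↑E)

/-- For a simple r-uniform r-partite hypergraph H with edge ideal I,
the minimal degree of a monomial in I^(m) equals r*m, for every m ≥ 1. -/
theorem stmt0 {k V : Type*} [Field k] [Fintype V] [DecidableEq V]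
    (r : ℕ) (hr : 1 ≤ r) (E : Finset (Finset V)) (hE : E.Nonempty)
    (huniform : ∀ e ∈ E, e.card = r)
    (Xp : Fin r → Finset V)
    (hdisj : Pairwise fun i j => Disjoint (Xp i) (Xp j))
    (hcover : ∀ v : V, ∃ i, v ∈ Xp i)
    (hpartite : ∀ e ∈ E, ∀ i, (e ∩ Xp i).card = 1)
    (m : ℕ) (hm : 1 ≤ m) :
    IsLeast { d : ℕ | ∃ a : V →₀ ℕ,
        (monomial a (1 : k)) ∈ symbolicPower (edgeIdeal k E) m ∧
        (a.sum fun _ e => e) = d } (r * m) := by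
  classical
  set I := edgeIdeal k E with hI
  have hsym_le : I ^ m ≤ symbolicPower I m :=
    le_sInf (by rintro J ⟨p, hp, hass, rfl⟩; exact Ideal.le_comap_map)
  constructor
  · -- membership
    obtain ⟨e, he⟩ := hE
    refine ⟨∑ x ∈ e, Finsupp.single x m, ?_, ?_⟩
    · have hgen : (∏ x ∈ e, (X x : MvPolynomial V k)) ∈ I :=
        Ideal.subset_span ⟨e, Finset.mem_coe.mpr he, rfl⟩
      have hpow : (∏ x ∈ e, (X x : MvPolynomial V k)) ^ m ∈ I ^ m :=
        Ideal.pow_mem_pow hgen m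
      rw [monomial_sum_single]
      exact hsym_le hpow
    · rw [degree_sum_single, huniform e he]
  · -- lower bound
    rintro d ⟨a, haSym, had⟩
    have key : ∀ i : Fin r, m ≤ ∑ x ∈ Xp i, a x := by
      intro i
      set P := Ideal.span ((fun x => (X x : MvPolynomial V k)) '' ↑(Xp i)) with hP
      have hPprime : P.IsPrime := span_vars_isPrime _
      have hIP : I ≤ P := by
        rw [hI, edgeIdeal, Ideal.span_le]
        rintro _ ⟨e, he, rfl⟩
        obtain ⟨v, hv⟩ := Finset.card_eq_one.mp (hpartite e (Finset.mem_coe.mp he) i)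
        have hv' : v ∈ e ∩ Xp i := by rw [hv]; exact Finset.mem_singleton_self v
        obtain ⟨hv1, hv2⟩ := Finset.mem_inter.mp hv'
        show (∏ x ∈ e, (X x : MvPolynomial V k)) ∈ P
        rw [← Finset.mul_prod_erase e _ hv1]
        exact Ideal.mul_mem_right _ _ (Ideal.subset_span ⟨v, Finset.mem_coe.mpr hv2, rfl⟩)
      obtain ⟨p, hpmin, hpP⟩ := Ideal.exists_minimalPrimes_le hIP
      have hpprime : p.IsPrime := hpmin.1.1
      have hIp : I ≤ p := hpmin.1.2
      have hassoc : p ∈ associatedPrimes _ (MvPolynomial V k ⧸ I) :=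
        minimalPrime_mem_associatedPrimes hpmin
      have hle : symbolicPower I m ≤
          Ideal.comap (algebraMap _ (Localization p.primeCompl))
            (Ideal.map (algebraMap _ (Localization p.primeCompl)) (I ^ m)) :=
        sInf_le ⟨p, hpprime, hassoc, rfl⟩
      obtain ⟨s, hs, hsmem⟩ := (mem_comap_map_loc_iff p (I ^ m) _).mp (hle haSym)
      set C : Finset V := (Xp i).filter (fun x => (X x : MvPolynomial V k) ∈ p) with hC
      have hCsub : C ⊆ Xp i := Finset.filter_subset _ _
      set p' := Ideal.span ((fun x => (X x : MvPolynomial V k)) '' ↑C) with hp'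
      have hp'p : p' ≤ p := by
        rw [hp', Ideal.span_le]
        rintro _ ⟨x, hx, rfl⟩
        exact (Finset.mem_filter.mp (Finset.mem_coe.mp hx)).2
      have hIp' : I ≤ p' := by
        rw [hI, edgeIdeal, Ideal.span_le]
        rintro _ ⟨e, he, rfl⟩
        have hin : (∏ x ∈ e, (X x : MvPolynomial V k)) ∈ p :=
          hIp (Ideal.subset_span ⟨e, he, rfl⟩)
        obtain ⟨x, hxe, hxp⟩ := Ideal.IsPrime.prod_mem_iff.mp hin
        have hxXi : x ∈ Xp i := by
          have hxP : (X x : MvPolynomial V k) ∈ P := hpP hxp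
          exact (X_mem_span_vars_iff _ x).mp hxP
        have hxC : x ∈ C := Finset.mem_filter.mpr ⟨hxXi, hxp⟩
        show (∏ x ∈ e, (X x : MvPolynomial V k)) ∈ p'
        rw [← Finset.mul_prod_erase e _ hxe]
        exact Ideal.mul_mem_right _ _ (Ideal.subset_span ⟨x, Finset.mem_coe.mpr hxC, rfl⟩)
      have hsm : s * monomial a 1 ∈ p' ^ m := Ideal.pow_right_mono hIp' m hsmem
      have hdvd : (Polynomial.X : Polynomial (MvPolynomial V k)) ^ m ∣
          psi (k := k) C (s * monomial a 1) := by
        have hmap : Ideal.map (psi (k := k) C).toRingHom p' ≤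
            Ideal.span {(Polynomial.X : Polynomial (MvPolynomial V k))} := by
          rw [hp', Ideal.map_span, Ideal.span_le]
          rintro _ ⟨_, ⟨x, hx, rfl⟩, rfl⟩
          simp only [AlgHom.toRingHom_eq_coe, RingHom.coe_coe, SetLike.mem_coe]
          have hXx : psi (k := k) C (X x) = Polynomial.C (X x) * Polynomial.X := by
            simp [psi, Finset.mem_coe.mp hx]
          rw [hXx]
          exact Ideal.mul_mem_left _ _ (Ideal.subset_span rfl)
        have h1 : psi (k := k) C (s * monomial a 1) ∈
            Ideal.span {(Polynomial.X : Polynomial (MvPolynomial V k))} ^ m := by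
          have h2 := Ideal.mem_map_of_mem (psi (k := k) C).toRingHom hsm
          rw [Ideal.map_pow] at h2
          exact Ideal.pow_right_mono hmap m h2
        rw [Ideal.span_singleton_pow, Ideal.mem_span_singleton] at h1
        exact h1
      rw [map_mul, psi_monomial] at hdvd
      by_contra hlt
      push_neg at hlt
      have hdC : (∑ x ∈ C, a x) < m :=
        lt_of_le_of_lt (Finset.sum_le_sum_of_subset hCsub) hlt
      set d0 := ∑ x ∈ C, a x with hd0
      have hre : psi (k := k) C s * (Polynomial.C (monomial a 1) * Polynomial.X ^ d0)
          = (psi (k := k) C s * Polynomial.C (monomial a 1)) * Polynomial.X ^ d0 := by ring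
      rw [hre] at hdvd
      have hm' : (Polynomial.X : Polynomial (MvPolynomial V k)) ^ (m - d0) *
          Polynomial.X ^ d0 = Polynomial.X ^ m := by
        rw [← pow_add]; congr 1; omega
      have hXd0 : (Polynomial.X : Polynomial (MvPolynomial V k)) ^ d0 ≠ 0 :=
        pow_ne_zero _ Polynomial.X_ne_zero
      have hdvd2 : (Polynomial.X : Polynomial (MvPolynomial V k)) ^ (m - d0) ∣
          psi (k := k) C s * Polynomial.C (monomial a 1) := by
        rw [← hm'] at hdvd
        exact (mul_dvd_mul_iff_right hXd0).mp hdvd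
      have hXdvd : (Polynomial.X : Polynomial (MvPolynomial V k)) ∣
          psi (k := k) C s * Polynomial.C (monomial a 1) :=
        dvd_trans (dvd_pow_self _ (by omega : m - d0 ≠ 0)) hdvd2
      rw [Polynomial.X_dvd_iff] at hXdvd
      have hcc : Polynomial.constantCoeff
          (psi (k := k) C s * Polynomial.C (monomial a 1)) = 0 := hXdvd
      rw [map_mul, constantCoeff_psi] at hcc
      simp only [Polynomial.constantCoeff_apply, Polynomial.coeff_C_zero] at hcc
      have hks : kill (k := k) C s ≠ 0 := by
        intro h0
        apply hs
        apply hp'p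
        rw [hp', span_eq_ker]
        exact h0
      have hmono : (monomial a (1 : k)) ≠ 0 := by
        intro h0
        have := MvPolynomial.monomial_eq_zero.mp h0
        exact one_ne_zero this
      exact (mul_ne_zero hks hmono) hcc
    rw [← had]
    have h1 : (a.sum fun _ n => n) = ∑ x : V, a x := Finsupp.sum_fintype _ _ (fun _ => rfl)
    have huniv : Finset.univ.biUnion Xp = (Finset.univ : Finset V) := by
      ext v
      simp only [Finset.mem_biUnion, Finset.mem_univ, true_and, iff_true]
      exact hcover v
    have hdisj' : (↑(Finset.univ : Finset (Fin r)) : Set (Fin r)).PairwiseDisjoint Xp :=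
      fun i _ j _ hij => hdisj hij
    calc r * m = ∑ _i : Fin r, m := by
          rw [Finset.sum_const, Finset.card_univ, Fintype.card_fin, smul_eq_mul]
      _ ≤ ∑ i : Fin r, ∑ x ∈ Xp i, a x := Finset.sum_le_sum (fun i _ => key i)
      _ = ∑ x ∈ Finset.univ.biUnion Xp, a x := (Finset.sum_biUnion hdisj').symm
      _ = ∑ x : V, a x := by rw [huniv]
      _ = a.sum fun _ n => n := h1.symm
end

section
/- Let H be a simple r-uniform r-partite hypergraph with at least one hyperedge of size ≥ 2. Then the fractional chromatic number of H equals r/(r−1). -/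
/-- fractional chromatic number of a hypergraph on a finite vertex set,
as the optimum of the LP relaxation via fractional covers by independent sets. -/
noncomputable def fracChromatic {V : Type*} [Fintype V] [DecidableEq V]
    (E : Finset (Finset V)) : ℝ :=
  sInf { s : ℝ | ∃ w : Finset V → ℝ,
    (∀ W, 0 ≤ w W) ∧
    (∀ W, w W ≠ 0 → ∀ e ∈ E, ¬ e ⊆ W) ∧
    (∀ v : V, 1 ≤ ∑ W ∈ Finset.univ.filter (fun W => v ∈ W), w W) ∧
    s = ∑ W : Finset V, w W }

/-- the fractional chromatic number of a simple r-uniform r-partite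
hypergraph with a hyperedge of size ≥ 2 equals r/(r-1). -/
theorem stmt2 {V : Type*} [Fintype V] [DecidableEq V]
    (r : ℕ) (hr : 1 ≤ r) (E : Finset (Finset V))
    (huniform : ∀ e ∈ E, e.card = r)
    (Xp : Fin r → Finset V)
    (hdisj : Pairwise fun i j => Disjoint (Xp i) (Xp j))
    (hcover : ∀ v : V, ∃ i, v ∈ Xp i)
    (hpartite : ∀ e ∈ E, ∀ i, (e ∩ Xp i).card = 1)
    (hbig : ∃ e ∈ E, 2 ≤ e.card) :
    fracChromatic E = (r : ℝ) / ((r : ℝ) - 1) := by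
  classical
  obtain ⟨e0, he0E, he0big⟩ := hbig
  have hr2 : 2 ≤ r := by
    have := huniform e0 he0E; omega
  have hrR : (1 : ℝ) < (r : ℝ) := by exact_mod_cast hr2.trans_lt' (by norm_num)
  have hpos : (0 : ℝ) < (r : ℝ) - 1 := by linarith
  set c : ℝ := 1 / ((r : ℝ) - 1) with hc
  have hcpos : 0 < c := by positivity
  -- the candidate weight function
  set w : Finset V → ℝ := fun W =>
    ∑ i : Fin r, if W = Finset.univ \ Xp i then c else 0 with hw
  -- lower bound for any feasible solution
  have hlb : ∀ s ∈ { s : ℝ | ∃ w : Finset V → ℝ,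
      (∀ W, 0 ≤ w W) ∧
      (∀ W, w W ≠ 0 → ∀ e ∈ E, ¬ e ⊆ W) ∧
      (∀ v : V, 1 ≤ ∑ W ∈ Finset.univ.filter (fun W => v ∈ W), w W) ∧
      s = ∑ W : Finset V, w W }, (r : ℝ) / ((r : ℝ) - 1) ≤ s := by
    rintro s ⟨u, hpos', hind, hvert, rfl⟩
    have key : (r : ℝ) ≤ ((r : ℝ) - 1) * ∑ W : Finset V, u W := by
      have h1 : (r : ℝ) ≤ ∑ v ∈ e0, ∑ W ∈ Finset.univ.filter (fun W => v ∈ W), u W := by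
        calc (r : ℝ) = ∑ v ∈ e0, 1 := by
              rw [Finset.sum_const, huniform e0 he0E]; simp
          _ ≤ _ := Finset.sum_le_sum fun v _ => hvert v
      have h2 : ∑ v ∈ e0, ∑ W ∈ Finset.univ.filter (fun W => v ∈ W), u W
          = ∑ W : Finset V, ((e0.filter (· ∈ W)).card : ℝ) * u W := by
        have : ∀ v, ∑ W ∈ Finset.univ.filter (fun W => v ∈ W), u W
            = ∑ W : Finset V, if v ∈ W then u W else 0 := by
          intro v; rw [Finset.sum_filter]
        simp_rw [this]
        rw [Finset.sum_comm]
        refine Finset.sum_congr rfl fun W _ => ?_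
        rw [← Finset.sum_filter, Finset.sum_const, nsmul_eq_mul]
      have h3 : ∑ W : Finset V, ((e0.filter (· ∈ W)).card : ℝ) * u W
          ≤ ∑ W : Finset V, ((r : ℝ) - 1) * u W := by
        refine Finset.sum_le_sum fun W _ => ?_
        rcases eq_or_ne (u W) 0 with h | h
        · simp [h]
        · have hn : ¬ e0 ⊆ W := hind W h e0 he0E
          have hlt : (e0.filter (· ∈ W)).card < r := by
            rw [← huniform e0 he0E]
            refine Finset.card_lt_card ?_
            refine ⟨Finset.filter_subset _ _, fun hsub => hn fun x hx => ?_⟩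
            exact (Finset.mem_filter.mp (hsub hx)).2
          have : ((e0.filter (· ∈ W)).card : ℝ) ≤ (r : ℝ) - 1 := by
            have : (e0.filter (· ∈ W)).card + 1 ≤ r := hlt
            have := Nat.cast_le (α := ℝ).mpr this
            push_cast at this; linarith
          exact mul_le_mul_of_nonneg_right this (hpos' W)
      rw [← Finset.mul_sum] at h3
      linarith [h1.trans (h2.le.trans h3)]
    rw [div_le_iff₀ hpos]
    linarith
  have hmem : (r : ℝ) / ((r : ℝ) - 1) ∈ { s : ℝ | ∃ w : Finset V → ℝ,
      (∀ W, 0 ≤ w W) ∧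
      (∀ W, w W ≠ 0 → ∀ e ∈ E, ¬ e ⊆ W) ∧
      (∀ v : V, 1 ≤ ∑ W ∈ Finset.univ.filter (fun W => v ∈ W), w W) ∧
      s = ∑ W : Finset V, w W } := by
    refine ⟨w, ?_, ?_, ?_, ?_⟩
    · intro W
      exact Finset.sum_nonneg fun i _ => by positivity
    · intro W hW e he hsub
      obtain ⟨i, _, hi⟩ := Finset.exists_ne_zero_of_sum_ne_zero hW
      have hWi : W = Finset.univ \ Xp i := by
        by_contra h; simp [h] at hi
      have h1 : (e ∩ Xp i).card = 1 := hpartite e he i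
      obtain ⟨x, hx⟩ := Finset.card_eq_one.mp h1
      have hxe : x ∈ e ∩ Xp i := hx ▸ Finset.mem_singleton_self x
      have hxe' := Finset.mem_inter.mp hxe
      have := hsub hxe'.1
      rw [hWi, Finset.mem_sdiff] at this
      exact this.2 hxe'.2
    · intro v
      obtain ⟨i0, hi0⟩ := hcover v
      have huniq : ∀ i, v ∈ Xp i ↔ i = i0 := by
        intro i
        constructor
        · intro hi
          by_contra h
          exact Finset.disjoint_left.mp (hdisj h) hi hi0
        · rintro rfl; exact hi0
      have key : ∑ W ∈ Finset.univ.filter (fun W => v ∈ W), w W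
          = ∑ i : Fin r, if i = i0 then 0 else c := by
        rw [Finset.sum_filter]
        have step : ∀ W : Finset V, (if v ∈ W then w W else 0)
            = ∑ i : Fin r, if W = Finset.univ \ Xp i then (if v ∈ W then c else 0) else 0 := by
          intro W
          by_cases h1 : v ∈ W
          · simp only [h1, if_true, hw]
          · simp [h1]
        simp_rw [step]
        rw [Finset.sum_comm]
        refine Finset.sum_congr rfl fun i _ => ?_
        rw [Finset.sum_ite_eq' Finset.univ]
        simp only [Finset.mem_univ, if_true, Finset.mem_sdiff]
        by_cases h : i = i0
        · subst h; simp [hi0]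
        · have hv : v ∉ Xp i := fun hv => h ((huniq i).mp hv)
          simp [hv, h]
      rw [key]
      have : (fun i : Fin r => if i = i0 then (0:ℝ) else c)
          = fun i => c - (if i = i0 then c else 0) := by
        funext i; split <;> ring
      rw [this, Finset.sum_sub_distrib, Finset.sum_const, Finset.sum_ite_eq' Finset.univ,
        Finset.card_univ, Fintype.card_fin]
      simp only [Finset.mem_univ, if_true, nsmul_eq_mul]
      rw [hc]
      have heq : (r:ℝ) * (1 / ((r:ℝ) - 1)) - 1 / ((r:ℝ) - 1) = 1 := by field_simp
      linarith
    · rw [hw]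
      rw [Finset.sum_comm]
      have : ∀ i : Fin r, (∑ W : Finset V, if W = Finset.univ \ Xp i then c else 0) = c := by
        intro i
        rw [Finset.sum_ite_eq' Finset.univ]
        simp
      simp_rw [this]
      rw [Finset.sum_const, Finset.card_univ, Fintype.card_fin, nsmul_eq_mul, hc]
      field_simp
  refine le_antisymm (csInf_le ⟨_, hlb⟩ hmem) (le_csInf ⟨_, hmem⟩ hlb)
end

section
/- Let H be a complete r-uniform r-partite hypergraph such that one of the parts X_1 = {x} consists of a single vertex. Then the edge ideal J = I(H) satisfies J^(n) = J^n for all n ≥ 1. -/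
open MvPolynomial

set_option linter.unusedSectionVars false
set_option linter.unusedVariables false

namespace Stmt3Aux

variable {k V : Type*} [Field k] [Fintype V] [DecidableEq V]

def wdeg (B : Finset V) (d : V →₀ ℕ) : ℕ := ∑ v ∈ B, d v

noncomputable def phi (k : Type*) [Field k] {V : Type*} [Fintype V] [DecidableEq V]
    (B : Finset V) : MvPolynomial V k →ₐ[k] Polynomial (MvPolynomial V k) :=
  aeval (fun v => if v ∈ B then Polynomial.X * Polynomial.C (X v) else Polynomial.C (X v))

noncomputable def P (k : Type*) [Field k] {V : Type*} [DecidableEq V]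
    (B : Finset V) : Ideal (MvPolynomial V k) :=
  Ideal.span ((fun v => (X v : MvPolynomial V k)) '' ↑B)

lemma phi_monomial (B : Finset V) (d : V →₀ ℕ) (c : k) :
    phi k B (monomial d c) =
      Polynomial.C (monomial d c) * Polynomial.X ^ wdeg B d := by
  classical
  rw [phi, aeval_monomial]
  have hfac : ∀ v ∈ d.support,
      (if v ∈ B then Polynomial.X * Polynomial.C (X v : MvPolynomial V k)
        else Polynomial.C (X v)) ^ d v
      = Polynomial.X ^ (if v ∈ B then d v else 0) * Polynomial.C ((X v : MvPolynomial V k) ^ d v) := by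
    intro v _
    by_cases hv : v ∈ B
    · rw [if_pos hv, if_pos hv, mul_pow, map_pow, mul_comm]
    · rw [if_neg hv, if_neg hv, map_pow, pow_zero, one_mul]
  rw [Finsupp.prod, Finset.prod_congr rfl hfac, Finset.prod_mul_distrib,
    Finset.prod_pow_eq_pow_sum, ← map_prod (Polynomial.C : MvPolynomial V k →+* _) _ _]
  have hsum : ∑ v ∈ d.support, (if v ∈ B then d v else 0) = wdeg B d := by
    have h1 : ∑ v ∈ d.support, (if v ∈ B then d v else 0)
        = ∑ v ∈ Finset.univ, (if v ∈ B then d v else 0) :=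
      Finset.sum_subset (Finset.subset_univ _)
        (fun v _ hv => by simp [Finsupp.notMem_support_iff.mp hv])
    rw [h1, Finset.sum_ite_mem, Finset.univ_inter, wdeg]
  rw [hsum, monomial_eq, Finsupp.prod, map_mul]
  have halg : (algebraMap k (Polynomial (MvPolynomial V k))) c = Polynomial.C (C c) := by
    rw [IsScalarTower.algebraMap_apply k (MvPolynomial V k) (Polynomial (MvPolynomial V k))]
    rfl
  rw [halg]; ring


lemma coeff_phi (B : Finset V) (f : MvPolynomial V k) (m : ℕ) :
    (phi k B f).coeff m = ∑ d ∈ f.support, if wdeg B d = m then monomial d (coeff d f) else 0 := by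
  conv_lhs => rw [← support_sum_monomial_coeff f]
  rw [map_sum, Polynomial.finset_sum_coeff]
  refine Finset.sum_congr rfl fun d hd => ?_
  rw [phi_monomial, Polynomial.coeff_C_mul, Polynomial.coeff_X_pow]
  by_cases h : wdeg B d = m
  · simp [h]
  · simp only [if_neg h, if_neg (fun hm : m = wdeg B d => h hm.symm), mul_zero]


lemma supp_of_dvd {B : Finset V} {f : MvPolynomial V k} {n : ℕ}
    (h : Polynomial.X ^ n ∣ phi k B f) : ∀ d ∈ f.support, n ≤ wdeg B d := by
  intro d hd
  by_contra hlt
  push_neg at hlt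
  have h0 : (phi k B f).coeff (wdeg B d) = 0 := Polynomial.X_pow_dvd_iff.mp h _ hlt
  have hne : coeff d f ≠ 0 := mem_support_iff.mp hd
  apply hne
  have hc : coeff d ((phi k B f).coeff (wdeg B d)) = coeff d f := by
    rw [coeff_phi, MvPolynomial.coeff_sum]
    rw [Finset.sum_eq_single d]
    · simp [coeff_monomial]
    · intro b hb hbd
      by_cases hw : wdeg B b = wdeg B d <;> simp [hw, coeff_monomial, hbd]
    · intro hds; exact absurd hd hds
  rw [h0] at hc
  simpa using hc.symm

lemma mem_of_monomials {I : Ideal (MvPolynomial V k)} {f : MvPolynomial V k}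
    (h : ∀ d ∈ f.support, monomial d (coeff d f) ∈ I) : f ∈ I := by
  rw [← support_sum_monomial_coeff f]; exact Ideal.sum_mem _ h

lemma prod_X_eq {ι : Type*} [DecidableEq ι] (s : Finset ι) (w : ι → V) :
    (∏ i ∈ s, (X (w i) : MvPolynomial V k)) =
      monomial (∑ i ∈ s, Finsupp.single (w i) 1) 1 := by
  induction s using Finset.induction with
  | empty => simp
  | insert _ _ h ih =>
      rw [Finset.prod_insert h, Finset.sum_insert h, ih, X, monomial_mul, mul_one]

lemma wdeg_sum_single {ι : Type*} [DecidableEq ι] (B : Finset V) (s : Finset ι) (w : ι → V) :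
    wdeg B (∑ i ∈ s, Finsupp.single (w i) 1) = (s.filter (fun i => w i ∈ B)).card := by
  rw [wdeg]
  have : ∀ v ∈ B, (∑ i ∈ s, Finsupp.single (w i) 1) v = ∑ i ∈ s, if w i = v then 1 else 0 := by
    intro v _
    rw [Finsupp.finset_sum_apply]
    exact Finset.sum_congr rfl fun i _ => Finsupp.single_apply
  rw [Finset.sum_congr rfl this, Finset.sum_comm]
  rw [Finset.sum_congr rfl (fun i _ => Finset.sum_ite_eq B (w i) (fun _ => 1))]
  rw [Finset.sum_ite, Finset.sum_const, Finset.sum_const]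
  simp

lemma mono_P {B : Finset V} {d : V →₀ ℕ} (c : k) (h : 1 ≤ wdeg B d) :
    monomial d c ∈ P k B := by
  have : ∃ v ∈ B, d v ≠ 0 := by
    by_contra hc
    push_neg at hc
    simp only [wdeg] at h
    rw [Finset.sum_congr rfl (fun v hv => hc v hv)] at h
    simp at h
  obtain ⟨v, hvB, hdv⟩ := this
  have hle : Finsupp.single v 1 + (d - Finsupp.single v 1) = d := by
    apply add_tsub_cancel_of_le
    intro u
    rcases eq_or_ne v u with rfl | hu
    · simpa [Finsupp.single_apply] using Nat.one_le_iff_ne_zero.mpr hdv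
    · simp [Finsupp.single_apply, hu]
  have : monomial d c = X v * monomial (d - Finsupp.single v 1) c := by
    rw [X, monomial_mul, one_mul, hle]
  rw [this]
  exact Ideal.mul_mem_right _ _ (Ideal.subset_span ⟨v, hvB, rfl⟩)

lemma P_le_comap (B : Finset V) :
    P k B ≤ Ideal.comap (phi k B).toRingHom (Ideal.span {Polynomial.X}) := by
  rw [P, Ideal.span_le]
  rintro _ ⟨v, hv, rfl⟩
  simp only [SetLike.mem_coe, Ideal.mem_comap, AlgHom.toRingHom_eq_coe, RingHom.coe_coe]
  rw [Ideal.mem_span_singleton]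
  rw [phi, aeval_X, if_pos (Finset.mem_coe.mp hv)]
  exact Dvd.intro _ rfl

lemma dvd_mem_P {B : Finset V} {f : MvPolynomial V k}
    (h : Polynomial.X ∣ phi k B f) : f ∈ P k B := by
  refine mem_of_monomials fun d hd => mono_P _ ?_
  simpa using supp_of_dvd (by simpa using h) d hd

lemma P_prime (B : Finset V) : (P k B).IsPrime := by
  constructor
  · intro htop
    have h1 : (1 : MvPolynomial V k) ∈ P k B := htop ▸ Submodule.mem_top
    have := P_le_comap B h1
    rw [Ideal.mem_comap, Ideal.mem_span_singleton] at this
    simp only [AlgHom.toRingHom_eq_coe, RingHom.coe_coe, map_one] at this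
    exact Polynomial.not_isUnit_X (isUnit_of_dvd_one this)
  · intro f g hfg
    have := P_le_comap B hfg
    rw [Ideal.mem_comap, Ideal.mem_span_singleton] at this
    simp only [AlgHom.toRingHom_eq_coe, RingHom.coe_coe, map_mul] at this
    rcases (Polynomial.prime_X.2.2 _ _ this) with h | h
    · exact Or.inl (dvd_mem_P h)
    · exact Or.inr (dvd_mem_P h)

lemma pow_le_comap {B : Finset V} {I : Ideal (MvPolynomial V k)}
    (hI : I ≤ Ideal.comap (phi k B).toRingHom (Ideal.span {Polynomial.X})) (n : ℕ) :
    I ^ n ≤ Ideal.comap (phi k B).toRingHom (Ideal.span {Polynomial.X ^ n}) := by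
  induction n with
  | zero => simp [Ideal.span_singleton_one]
  | succ n ih =>
      rw [pow_succ]
      refine Ideal.mul_le.mpr fun a ha b hb => ?_
      rw [Ideal.mem_comap]
      have h1 := ih ha
      have h2 := hI hb
      rw [Ideal.mem_comap, Ideal.mem_span_singleton] at h1 h2
      rw [Ideal.mem_span_singleton]
      simp only [AlgHom.toRingHom_eq_coe, RingHom.coe_coe, map_mul] at *
      rw [pow_succ]
      exact mul_dvd_mul h1 h2

section Graph

variable {r : ℕ} {E : Finset (Finset V)} {Xp : Fin r → Finset V}
  (hdisj : Pairwise fun i j => Disjoint (Xp i) (Xp j))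
  (hcomplete : ∀ f : Fin r → V, (∀ i, f i ∈ Xp i) → Finset.image f Finset.univ ∈ E)

include hdisj in
lemma trans_inj {w : Fin r → V} (hw : ∀ j, w j ∈ Xp j) : Function.Injective w := by
  intro i j hij
  by_contra hne
  exact Finset.disjoint_left.mp (hdisj hne) (hw i) (hij ▸ hw j)

include hdisj hcomplete in
lemma trans_mem (w : Fin r → V) (hw : ∀ j, w j ∈ Xp j) :
    monomial (∑ j, Finsupp.single (w j) 1) (1 : k) ∈ edgeIdeal k E := by
  rw [← prod_X_eq]
  have himg : (∏ u ∈ Finset.image w Finset.univ, (X u : MvPolynomial V k))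
      = ∏ j, (X (w j) : MvPolynomial V k) :=
    Finset.prod_image (fun a _ b _ h => trans_inj hdisj hw h)
  rw [← himg]
  exact Ideal.subset_span ⟨_, hcomplete w hw, rfl⟩

variable (hpartite : ∀ e ∈ E, ∀ i, (e ∩ Xp i).card = 1)

include hpartite in
lemma edge_le_comap (i : Fin r) :
    edgeIdeal k E ≤ Ideal.comap (phi k (Xp i)).toRingHom (Ideal.span {Polynomial.X}) := by
  rw [edgeIdeal, Ideal.span_le]
  rintro _ ⟨e, he, rfl⟩
  simp only [SetLike.mem_coe, Ideal.mem_comap, AlgHom.toRingHom_eq_coe, RingHom.coe_coe,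
    Ideal.mem_span_singleton]
  rw [show (∏ x ∈ e, (X x : MvPolynomial V k)) = monomial (∑ u ∈ e, Finsupp.single u 1) 1
    from prod_X_eq e (fun u => u), phi_monomial]
  have : wdeg (Xp i) (∑ u ∈ e, Finsupp.single u 1) = 1 := by
    rw [wdeg_sum_single]
    simpa [Finset.filter_mem_eq_inter] using hpartite e (Finset.mem_coe.mp he) i
  rw [this, pow_one]
  exact dvd_mul_left _ _

include hdisj hcomplete in
lemma mono_pow_J (n : ℕ) (d : V →₀ ℕ) (c : k)
    (h : ∀ i, n ≤ wdeg (Xp i) d) : monomial d c ∈ (edgeIdeal k E) ^ n := by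
  induction n generalizing d with
  | zero => simp
  | succ n ih =>
      have hex : ∀ i : Fin r, ∃ v ∈ Xp i, d v ≠ 0 := by
        intro i
        by_contra hc
        push_neg at hc
        have : wdeg (Xp i) d = 0 := by
          rw [wdeg]
          exact Finset.sum_eq_zero hc
        have := h i
        omega
      choose v hv1 hv2 using hex
      have hvinj : Function.Injective v := trans_inj hdisj hv1
      set g : V →₀ ℕ := ∑ i, Finsupp.single (v i) 1 with hg
      have hgle : ∀ u, g u ≤ d u := by
        intro u
        have hgu : g u = ∑ i, if v i = u then 1 else 0 := by
          rw [hg, Finsupp.finset_sum_apply]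
          exact Finset.sum_congr rfl fun i _ => Finsupp.single_apply
        by_cases hex2 : ∃ i, v i = u
        · obtain ⟨i, rfl⟩ := hex2
          have h1 : ∑ i', (if v i' = v i then 1 else 0) = 1 := by
            rw [Finset.sum_eq_single i (fun j _ hj => if_neg (fun hh => hj (hvinj hh)))
              (fun hi => absurd (Finset.mem_univ i) hi)]
            simp
          rw [hgu, h1]
          exact Nat.one_le_iff_ne_zero.mpr (hv2 i)
        · push_neg at hex2
          rw [hgu, Finset.sum_eq_zero (fun i _ => if_neg (hex2 i))]
          exact Nat.zero_le _
      have hsplit : g + (d - g) = d := by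
        apply add_tsub_cancel_of_le
        exact (Finsupp.le_def).mpr hgle
      have hmono : monomial d c = monomial g 1 * monomial (d - g) (c : k) := by
        rw [monomial_mul, one_mul, hsplit]
      have h1 : monomial g (1 : k) ∈ edgeIdeal k E := trans_mem hdisj hcomplete v hv1
      have h2 : monomial (d - g) c ∈ (edgeIdeal k E) ^ n := by
        apply ih
        intro i
        have hgw : wdeg (Xp i) g = 1 := by
          rw [hg, wdeg_sum_single]
          have hf : Finset.univ.filter (fun j => v j ∈ Xp i) = {i} := by
            ext j
            simp only [Finset.mem_filter, Finset.mem_univ, true_and, Finset.mem_singleton]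
            constructor
            · intro hj
              by_contra hne
              exact Finset.disjoint_left.mp (hdisj hne) (hv1 j) hj
            · rintro rfl
              exact hv1 _
          rw [hf, Finset.card_singleton]
        have hdw : wdeg (Xp i) (d - g) + wdeg (Xp i) g = wdeg (Xp i) d := by
          rw [wdeg, wdeg, wdeg, ← Finset.sum_add_distrib]
          refine Finset.sum_congr rfl fun u _ => ?_
          rw [Finsupp.tsub_apply]
          exact Nat.sub_add_cancel (hgle u)
        have := h i
        omega
      rw [hmono, pow_succ']
      exact Ideal.mul_mem_mul h1 h2

section AP
variable (hne : ∀ i, (Xp i).Nonempty)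

include hdisj hcomplete hpartite hne in
lemma P_assoc (i : Fin r) :
    P k (Xp i) ∈ associatedPrimes (MvPolynomial V k)
      ((MvPolynomial V k) ⧸ (edgeIdeal k E)) := by
  classical
  set t : Fin r → V := fun j => (hne j).choose with htdef
  have ht : ∀ j, t j ∈ Xp j := fun j => (hne j).choose_spec
  set m : MvPolynomial V k :=
    monomial (∑ j ∈ Finset.univ.erase i, Finsupp.single (t j) 1) (1 : k) with hm
  refine isAssociatedPrime_iff.mpr ⟨P_prime _, Submodule.Quotient.mk m, ?_⟩
  ext a
  rw [Submodule.mem_colon_singleton, Submodule.mem_bot, ← Submodule.Quotient.mk_smul,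
    Submodule.Quotient.mk_eq_zero, smul_eq_mul]
  constructor
  · -- a ∈ P → a * m ∈ J
    intro ha
    have key : ∀ v ∈ Xp i, (X v : MvPolynomial V k) * m ∈ edgeIdeal k E := by
      intro v hv
      set w : Fin r → V := fun j => if j = i then v else t j with hw
      have hwmem : ∀ j, w j ∈ Xp j := by
        intro j
        by_cases hj : j = i
        · subst hj; simp only [hw, if_pos rfl]; exact hv
        · simp only [hw, if_neg hj]; exact ht j
      have hsum : (∑ j, Finsupp.single (w j) 1 : V →₀ ℕ)
          = Finsupp.single v 1 + ∑ j ∈ Finset.univ.erase i, Finsupp.single (t j) 1 := by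
        rw [← Finset.add_sum_erase _ _ (Finset.mem_univ i)]
        congr 1
        · simp [hw]
        · refine Finset.sum_congr rfl fun j hj => ?_
          rw [hw]
          simp [Finset.mem_erase.mp hj |>.1]
      have : monomial (∑ j, Finsupp.single (w j) 1) (1 : k) ∈ edgeIdeal k E :=
        trans_mem hdisj hcomplete w hwmem
      rw [hsum] at this
      rwa [hm, X, monomial_mul, one_mul]
    -- span induction
    refine Submodule.span_induction ?_ ?_ ?_ ?_ ha
    · rintro _ ⟨v, hv, rfl⟩; exact key v hv
    · simp
    · intro f g _ _ hf hg; rw [add_mul]; exact Ideal.add_mem _ hf hg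
    · intro c f _ hf; rw [smul_eq_mul, mul_assoc]; exact Ideal.mul_mem_left _ _ hf
  · -- a * m ∈ J → a ∈ P
    intro ham
    have hdvd : Polynomial.X ∣ phi k (Xp i) a * phi k (Xp i) m := by
      have := edge_le_comap hpartite i ham
      rw [Ideal.mem_comap, Ideal.mem_span_singleton] at this
      simpa using this
    have hwm : wdeg (Xp i) (∑ j ∈ Finset.univ.erase i, Finsupp.single (t j) 1) = 0 := by
      rw [wdeg_sum_single]
      rw [Finset.card_eq_zero, Finset.filter_eq_empty_iff]
      intro j hj
      exact Finset.disjoint_left.mp (hdisj (Finset.mem_erase.mp hj).1) (ht j)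
    have hnm : ¬ Polynomial.X ∣ phi k (Xp i) m := by
      rw [hm, phi_monomial, hwm, pow_zero, mul_one, Polynomial.X_dvd_iff,
        Polynomial.coeff_C_zero]
      simp
    rcases Polynomial.prime_X.2.2 _ _ hdvd with h | h
    · exact dvd_mem_P h
    · exact absurd h hnm

end AP

end Graph

end Stmt3Aux

open Stmt3Aux in
/-- for a complete r-uniform r-partite hypergraph one of whose parts
is a single vertex, all symbolic powers of the edge ideal agree with ordinary powers. -/
theorem stmt3 {k V : Type*} [Field k] [Fintype V] [DecidableEq V]
    (r : ℕ) (hr : 1 ≤ r) (E : Finset (Finset V))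
    (huniform : ∀ e ∈ E, e.card = r)
    (Xp : Fin r → Finset V)
    (hdisj : Pairwise fun i j => Disjoint (Xp i) (Xp j))
    (hcover : ∀ v : V, ∃ i, v ∈ Xp i)
    (hpartite : ∀ e ∈ E, ∀ i, (e ∩ Xp i).card = 1)
    (hcomplete : ∀ f : Fin r → V, (∀ i, f i ∈ Xp i) → Finset.image f Finset.univ ∈ E)
    (x : V) (i₀ : Fin r) (hx : Xp i₀ = {x}) :
    ∀ n : ℕ, 1 ≤ n → symbolicPower (edgeIdeal k E) n = (edgeIdeal k E) ^ n := by
  intro n hn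
  by_cases hne : ∀ i, (Xp i).Nonempty
  · -- main case
    apply le_antisymm
    · -- symbolic ≤ ordinary
      intro a ha
      have key : ∀ i : Fin r, ∀ d ∈ a.support, n ≤ wdeg (Xp i) d := by
        intro i
        haveI hPp : (P k (Xp i)).IsPrime := P_prime _
        have hCi : a ∈ Ideal.comap
            (algebraMap (MvPolynomial V k) (Localization (P k (Xp i)).primeCompl))
            (Ideal.map (algebraMap (MvPolynomial V k)
              (Localization (P k (Xp i)).primeCompl)) ((edgeIdeal k E) ^ n)) :=
          Submodule.mem_sInf.mp ha _
            ⟨P k (Xp i), hPp, P_assoc hdisj hcomplete hpartite hne i, rfl⟩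
        rw [Ideal.mem_comap,
          IsLocalization.mem_map_algebraMap_iff (P k (Xp i)).primeCompl] at hCi
        obtain ⟨⟨y, s⟩, hys⟩ := hCi
        have hinj : Function.Injective
            (algebraMap (MvPolynomial V k) (Localization (P k (Xp i)).primeCompl)) :=
          IsLocalization.injective _ (P k (Xp i)).primeCompl_le_nonZeroDivisors
        have has : a * (s : MvPolynomial V k) = y := hinj (by rw [map_mul]; exact hys)
        have hy : a * (s : MvPolynomial V k) ∈ (edgeIdeal k E) ^ n := has ▸ y.2
        have hdvd : Polynomial.X ^ n ∣ phi k (Xp i) (a * s) := by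
          have := pow_le_comap (edge_le_comap hpartite i) n hy
          rw [Ideal.mem_comap, Ideal.mem_span_singleton] at this
          simpa using this
        rw [map_mul] at hdvd
        have hns : ¬ Polynomial.X ∣ phi k (Xp i) (s : MvPolynomial V k) :=
          fun hd => s.2 (dvd_mem_P hd)
        exact supp_of_dvd (Polynomial.prime_X.pow_dvd_of_dvd_mul_right n hns hdvd)
      exact mem_of_monomials fun d hd =>
        mono_pow_J hdisj hcomplete n d _ (fun i => key i d hd)
    · -- ordinary ≤ symbolic
      refine le_sInf ?_
      rintro K ⟨p, hp, hass, rfl⟩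
      exact Ideal.le_comap_map
  · -- degenerate case : an empty part, so no edges
    push_neg at hne
    obtain ⟨i, hi⟩ := hne
    have hE : E = ∅ := by
      rw [Finset.eq_empty_iff_forall_notMem]
      intro e he
      have := hpartite e he i
      rw [hi, Finset.inter_empty] at this
      simp at this
    have hJ : edgeIdeal k E = ⊥ := by
      rw [edgeIdeal, hE]
      simp
    rw [hJ]
    have hbot : (⊥ : Ideal (MvPolynomial V k)) ^ n = ⊥ := by
      rw [← Ideal.zero_eq_bot, zero_pow (by omega)]
    rw [hbot]
    apply le_antisymm _ bot_le
    haveI hbp : (⊥ : Ideal (MvPolynomial V k)).IsPrime := Ideal.bot_prime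
    have hass : (⊥ : Ideal (MvPolynomial V k)) ∈ associatedPrimes (MvPolynomial V k)
        ((MvPolynomial V k) ⧸ (⊥ : Ideal (MvPolynomial V k))) := by
      refine isAssociatedPrime_iff.mpr ⟨hbp, Submodule.Quotient.mk 1, ?_⟩
      ext a
      rw [Submodule.mem_colon_singleton,
        Submodule.mem_bot (R := MvPolynomial V k) (M := MvPolynomial V k ⧸ (⊥ : Ideal (MvPolynomial V k))),
        ← Submodule.Quotient.mk_smul,
        Submodule.Quotient.mk_eq_zero, smul_eq_mul, mul_one]
    refine le_trans (sInf_le ⟨⊥, hbp, hass, rfl⟩) ?_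
    rw [hbot, Ideal.map_bot]
    have hinj : Function.Injective
        (algebraMap (MvPolynomial V k) (Localization (⊥ : Ideal (MvPolynomial V k)).primeCompl)) :=
      IsLocalization.injective _ (⊥ : Ideal (MvPolynomial V k)).primeCompl_le_nonZeroDivisors
    intro a haa
    rw [Ideal.mem_comap, Ideal.mem_bot] at haa
    rw [Ideal.mem_bot]
    exact hinj (by rw [haa, map_zero])
end

section
/- Let H be a complete r-uniform r-partite hypergraph and J = I(H) its edge ideal. Then J^(n) = J^n for all n ≥ 1. -/
open MvPolynomial

set_option linter.unusedSectionVars false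
open Pointwise

section Aux
variable {k V : Type*} [Field k] [Fintype V] [DecidableEq V]

def wS (S : Finset V) (m : V →₀ ℕ) : ℕ := ∑ v ∈ S, m v

noncomputable def PS (k : Type*) [Field k] {V : Type*} [Fintype V] [DecidableEq V] (S : Finset V) :
    Ideal (MvPolynomial V k) := Ideal.span (X '' ↑S)

lemma wS_add (S : Finset V) (a b : V →₀ ℕ) : wS S (a + b) = wS S a + wS S b := by
  simp [wS, Finset.sum_add_distrib]

lemma wS_single (S : Finset V) {v : V} (hv : v ∈ S) : wS S (Finsupp.single v 1) = 1 := by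
  simp [wS, Finsupp.single_apply, Finset.sum_ite_eq, hv]

lemma mem_PS {S : Finset V} {f : MvPolynomial V k} (hf : f ∈ PS k S) :
    ∀ m ∈ f.support, 1 ≤ wS S m := by
  refine Submodule.span_induction ?_ ?_ ?_ ?_ hf
  · rintro _ ⟨v, hv, rfl⟩ m hm
    rw [MvPolynomial.support_X] at hm
    simp only [Finset.mem_singleton] at hm
    subst hm
    rw [wS_single S hv]
  · intro m hm; simp at hm
  · intro x y _ _ hx hy m hm
    rcases Finset.mem_union.mp (Finsupp.support_add hm) with h | h
    · exact hx m h
    · exact hy m h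
  · intro r x _ hx m hm
    rw [smul_eq_mul] at hm
    rcases Finset.mem_add.mp (MvPolynomial.support_mul r x hm) with ⟨a, ha, b, hb, rfl⟩
    have := hx b hb
    rw [wS_add]; omega

lemma monomial_mem_PS_pow {S : Finset V} {n : ℕ} {m : V →₀ ℕ} (h : n ≤ wS S m) (c : k) :
    monomial m c ∈ PS k S ^ n := by
  induction n generalizing m with
  | zero => simp
  | succ n ih =>
    have hw : wS S m ≠ 0 := by omega
    have : ∃ v ∈ S, m v ≠ 0 := by
      by_contra hc
      push_neg at hc
      exact hw (Finset.sum_eq_zero hc)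
    obtain ⟨v, hvS, hmv⟩ := this
    set m' : V →₀ ℕ := m - Finsupp.single v 1 with hm'
    have hkey : Finsupp.single v 1 + m' = m := by
      ext u
      rw [Finsupp.add_apply, Finsupp.tsub_apply]
      rcases eq_or_ne u v with rfl | hne
      · simp only [Finsupp.single_eq_same]; omega
      · simp [Finsupp.single_apply, Ne.symm hne]
    have hw' : n ≤ wS S m' := by
      have := wS_add S (Finsupp.single v 1) m'
      rw [hkey, wS_single S hvS] at this
      omega
    have : monomial m c = X v * monomial m' c := by
      rw [show (X v : MvPolynomial V k) = monomial (Finsupp.single v 1) 1 from rfl,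
        monomial_mul, one_mul, hkey]
    rw [this, pow_succ']
    exact Ideal.mul_mem_mul (Ideal.subset_span ⟨v, hvS, rfl⟩) (ih hw')

lemma mem_PS_pow_iff {S : Finset V} {n : ℕ} {f : MvPolynomial V k} :
    f ∈ PS k S ^ n ↔ ∀ m ∈ f.support, n ≤ wS S m := by
  constructor
  · intro hf
    induction n generalizing f with
    | zero => intro m hm; omega
    | succ n ih =>
      rw [pow_succ] at hf
      refine Submodule.mul_induction_on hf ?_ ?_
      · intro p hp q hq m hm
        rcases Finset.mem_add.mp (MvPolynomial.support_mul p q hm) with ⟨a, ha, b, hb, rfl⟩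
        have h1 := ih hp a ha
        have h2 := mem_PS hq b hb
        rw [wS_add]; omega
      · intro x y hx hy m hm
        rcases Finset.mem_union.mp (Finsupp.support_add hm) with h | h
        · exact hx m h
        · exact hy m h
  · intro h
    rw [f.as_sum]
    exact Ideal.sum_mem _ fun m hm => monomial_mem_PS_pow (h m hm) _

lemma coeff_filter (p : (V →₀ ℕ) → Prop) [DecidablePred p] (f : MvPolynomial V k) (m : V →₀ ℕ) :
    coeff m (AddMonoidAlgebra.ofCoeff (Finsupp.filter p (AddMonoidAlgebra.coeff f)) : MvPolynomial V k) = if p m then coeff m f else 0 := Finsupp.filter_apply _ _ _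

lemma PS_primary {S : Finset V} {n : ℕ} {s x : MvPolynomial V k}
    (hsx : s * x ∈ PS k S ^ n) (hs : s ∉ PS k S) : x ∈ PS k S ^ n := by
  classical
  by_contra hx
  rw [mem_PS_pow_iff] at hx
  push_neg at hx
  obtain ⟨m', hm', hm'w⟩ := hx
  have hxne : x.support.Nonempty := ⟨m', hm'⟩
  set d0 := x.support.inf' hxne (wS S) with hd0
  have hd0lt : d0 < n := lt_of_le_of_lt (Finset.inf'_le _ hm') hm'w
  have hd0min : ∀ b ∈ x.support, d0 ≤ wS S b := fun b hb => Finset.inf'_le _ hb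
  have hs0ex : ∃ m1 ∈ s.support, wS S m1 = 0 := by
    by_contra h
    push_neg at h
    refine hs ?_
    rw [← pow_one (PS k S)]
    exact mem_PS_pow_iff.mpr fun m hm => Nat.one_le_iff_ne_zero.mpr (h m hm)
  obtain ⟨m1, hm1, hm1w⟩ := hs0ex
  set s0 : MvPolynomial V k := AddMonoidAlgebra.ofCoeff (Finsupp.filter (fun m => wS S m = 0) (AddMonoidAlgebra.coeff s)) with hs0def
  set xd : MvPolynomial V k := AddMonoidAlgebra.ofCoeff (Finsupp.filter (fun m => wS S m = d0) (AddMonoidAlgebra.coeff x)) with hxddef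
  have hs0ne : s0 ≠ 0 := by
    intro h
    have := coeff_filter (fun m => wS S m = 0) s m1
    rw [← hs0def, h, if_pos hm1w] at this
    exact mem_support_iff.mp hm1 (by simpa using this.symm)
  have hxdne : xd ≠ 0 := by
    obtain ⟨m2, hm2, hm2eq⟩ := Finset.exists_mem_eq_inf' hxne (wS S)
    intro h
    have := coeff_filter (fun m => wS S m = d0) x m2
    rw [← hxddef, h, if_pos (by omega : wS S m2 = d0)] at this
    exact mem_support_iff.mp hm2 (by simpa using this.symm)
  obtain ⟨m, hm⟩ := ne_zero_iff.mp (mul_ne_zero hs0ne hxdne)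
  have hmsupp : m ∈ (s0 * xd).support := mem_support_iff.mpr hm
  obtain ⟨a, ha, b, hb, rfl⟩ := Finset.mem_add.mp (MvPolynomial.support_mul s0 xd hmsupp)
  have hwa : wS S a = 0 := by
    by_contra h
    have := coeff_filter (fun m => wS S m = 0) s a
    rw [← hs0def, if_neg h] at this
    exact mem_support_iff.mp ha this
  have hwb : wS S b = d0 := by
    by_contra h
    have := coeff_filter (fun m => wS S m = d0) x b
    rw [← hxddef, if_neg h] at this
    exact mem_support_iff.mp hb this
  have hwab : wS S (a + b) = d0 := by rw [wS_add, hwa, hwb, zero_add]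
  have key : coeff (a + b) (s * x) = coeff (a + b) (s0 * xd) := by
    rw [coeff_mul, coeff_mul]
    refine Finset.sum_congr rfl ?_
    rintro ⟨a', b'⟩ hab
    rw [Finset.HasAntidiagonal.mem_antidiagonal] at hab
    have hw : wS S a' + wS S b' = d0 := by rw [← wS_add, hab, hwab]
    simp only [hs0def, hxddef, coeff_filter]
    by_cases h0 : wS S a' = 0
    · rw [if_pos h0, if_pos (by omega : wS S b' = d0)]
    · rw [if_neg h0, zero_mul]
      have hb' : coeff b' x = 0 := by
        by_contra hc
        have := hd0min b' (mem_support_iff.mpr hc)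
        omega
      rw [hb', mul_zero]
  have : (a + b) ∈ (s * x).support := mem_support_iff.mpr (by rw [key]; exact hm)
  have := mem_PS_pow_iff.mp hsx _ this
  omega

lemma PS_prime (S : Finset V) : (PS k S).IsPrime := by
  refine Ideal.isPrime_iff.mpr ⟨?_, ?_⟩
  · intro h
    have h1 : (1 : MvPolynomial V k) ∈ PS k S := h ▸ Submodule.mem_top
    have h0 : (0 : V →₀ ℕ) ∈ (1 : MvPolynomial V k).support :=
      mem_support_iff.mpr (by simp)
    have := mem_PS h1 0 h0
    simp [wS] at this
  · intro f g hfg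
    by_cases hf : f ∈ PS k S
    · exact Or.inl hf
    · refine Or.inr ?_
      have := PS_primary (n := 1) (by rwa [pow_one]) hf
      rwa [pow_one] at this


lemma prod_monomial {ι : Type*} (t : Finset ι) (g : ι → (V →₀ ℕ)) :
    ∏ j ∈ t, (monomial (g j) (1:k)) = monomial (∑ j ∈ t, g j) 1 := by
  classical
  induction t using Finset.induction with
  | empty => simp
  | insert _ _ hnotmem ih =>
    rw [Finset.prod_insert hnotmem, Finset.sum_insert hnotmem, ih, monomial_mul, one_mul]

lemma prod_X_eq {ι : Type*} (t : Finset ι) (c : ι → V) :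
    ∏ j ∈ t, (X (c j) : MvPolynomial V k) =
      monomial (∑ j ∈ t, Finsupp.single (c j) 1) 1 := by
  classical
  induction t using Finset.induction with
  | empty => simp
  | insert _ _ hnotmem ih =>
    rw [Finset.prod_insert hnotmem, Finset.sum_insert hnotmem, ih,
      show (X (c _) : MvPolynomial V k) = monomial (Finsupp.single (c _) 1) 1 from rfl,
      monomial_mul, one_mul]

lemma inter_to_prod {r : ℕ} {Xp : Fin r → Finset V}
    (hdisj : Pairwise fun i j => Disjoint (Xp i) (Xp j))
    (hcover : ∀ v : V, ∃ i, v ∈ Xp i) {n : ℕ} {x : MvPolynomial V k}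
    (h : ∀ i, x ∈ PS k (Xp i) ^ n) : x ∈ ∏ i, PS k (Xp i) ^ n := by
  classical
  rw [x.as_sum]
  refine Ideal.sum_mem _ fun m hm => ?_
  have hwt : ∀ i, n ≤ wS (Xp i) m := fun i => mem_PS_pow_iff.mp (h i) m hm
  set mi : Fin r → (V →₀ ℕ) := fun i => Finsupp.filter (· ∈ Xp i) m with hmi
  have hsum : ∑ i, mi i = m := by
    ext v
    obtain ⟨i0, hi0⟩ := hcover v
    have : (∑ i, mi i) v = ∑ i, mi i v := by simp
    rw [this, Finset.sum_eq_single i0]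
    · simp [hmi, Finsupp.filter_apply, hi0]
    · intro j _ hji
      have hvj : v ∉ Xp j := fun hvj => Finset.disjoint_left.mp (hdisj hji) hvj hi0
      simp [hmi, Finsupp.filter_apply, hvj]
    · intro habs; exact absurd (Finset.mem_univ i0) habs
  have hmono : (monomial m (coeff m x) : MvPolynomial V k)
      = C (coeff m x) * ∏ i, monomial (mi i) 1 := by
    rw [prod_monomial, hsum, C_mul_monomial, mul_one]
  rw [hmono]
  refine Ideal.mul_mem_left _ _ (Ideal.prod_mem_prod fun i _ => ?_)
  refine mem_PS_pow_iff.mpr fun mm hmm => ?_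
  rw [support_monomial, if_neg one_ne_zero, Finset.mem_singleton] at hmm
  subst hmm
  have : wS (Xp i) (mi i) = wS (Xp i) m :=
    Finset.sum_congr rfl fun v hv => by simp [hmi, Finsupp.filter_apply, hv]
  rw [this]
  exact hwt i


lemma J_le_PS {r : ℕ} {E : Finset (Finset V)} {Xp : Fin r → Finset V}
    (hpartite : ∀ e ∈ E, ∀ i, (e ∩ Xp i).card = 1) (i : Fin r) :
    edgeIdeal k E ≤ PS k (Xp i) := by
  rw [edgeIdeal]
  refine Ideal.span_le.mpr ?_
  rintro _ ⟨e, he, rfl⟩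
  obtain ⟨x0, hx0⟩ := Finset.card_eq_one.mp (hpartite e he i)
  have hx0m : x0 ∈ e ∩ Xp i := hx0 ▸ Finset.mem_singleton_self x0
  have hx0e : x0 ∈ e := (Finset.mem_inter.mp hx0m).1
  have hx0X : x0 ∈ Xp i := (Finset.mem_inter.mp hx0m).2
  simp only [SetLike.mem_coe]
  rw [← Finset.mul_prod_erase e _ hx0e]
  exact Ideal.mul_mem_right _ _ (Ideal.subset_span ⟨x0, hx0X, rfl⟩)

lemma J_eq_prod {r : ℕ} {E : Finset (Finset V)} {Xp : Fin r → Finset V}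
    (hdisj : Pairwise fun i j => Disjoint (Xp i) (Xp j))
    (hcover : ∀ v : V, ∃ i, v ∈ Xp i)
    (hpartite : ∀ e ∈ E, ∀ i, (e ∩ Xp i).card = 1)
    (hcomplete : ∀ f : Fin r → V, (∀ i, f i ∈ Xp i) → Finset.image f Finset.univ ∈ E) :
    edgeIdeal k E = ∏ i, PS k (Xp i) := by
  apply le_antisymm
  · rw [edgeIdeal]
    refine Ideal.span_le.mpr ?_
    rintro _ ⟨e, he, rfl⟩
    have hesplit : e = Finset.univ.biUnion (fun i => e ∩ Xp i) := by
      ext x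
      simp only [Finset.mem_biUnion, Finset.mem_univ, Finset.mem_inter, true_and]
      constructor
      · intro hx
        obtain ⟨i, hi⟩ := hcover x
        exact ⟨i, hx, hi⟩
      · rintro ⟨i, hx, _⟩
        exact hx
    have hpd : (↑(Finset.univ : Finset (Fin r)) : Set (Fin r)).PairwiseDisjoint
        (fun i => e ∩ Xp i) := by
      intro i _ j _ hij
      exact Finset.disjoint_left.mpr fun a ha hb =>
        Finset.disjoint_left.mp (hdisj hij) (Finset.mem_inter.mp ha).2
          (Finset.mem_inter.mp hb).2
    simp only [SetLike.mem_coe]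
    rw [hesplit, Finset.prod_biUnion hpd]
    refine Ideal.prod_mem_prod fun i _ => ?_
    obtain ⟨x0, hx0⟩ := Finset.card_eq_one.mp (hpartite e he i)
    rw [hx0, Finset.prod_singleton]
    exact Ideal.subset_span ⟨x0, (Finset.mem_inter.mp (hx0 ▸ Finset.mem_singleton_self x0)).2, rfl⟩
  · rw [show (∏ i, PS k (Xp i)) = Ideal.span (∏ i, (X '' ↑(Xp i) : Set (MvPolynomial V k)))
      from Ideal.prod_span Finset.univ _]
    refine Ideal.span_le.mpr ?_
    intro a ha
    rw [SetLike.mem_coe]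
    obtain ⟨g, hg, ha⟩ := (Set.mem_finset_prod _ _ _).mp ha
    have hch : ∀ i : Fin r, ∃ v, v ∈ Xp i ∧ X v = g i :=
      fun i => by
        obtain ⟨v, hv1, hv2⟩ := hg (Finset.mem_univ i)
        exact ⟨v, hv1, hv2⟩
    choose v hv hXv using hch
    have hinj : Function.Injective v := by
      intro a b hab
      by_contra hne
      exact Finset.disjoint_left.mp (hdisj hne) (hv a) (hab ▸ hv b)
    have : a = ∏ x ∈ Finset.image v Finset.univ, X x := by
      rw [Finset.prod_image (fun a _ b _ hab => hinj hab), ← ha]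
      exact (Finset.prod_congr rfl fun i _ => (hXv i).symm)
    rw [this, edgeIdeal]
    exact Ideal.subset_span ⟨Finset.image v Finset.univ, hcomplete v hv, rfl⟩

lemma ann_eq {r : ℕ} {E : Finset (Finset V)} {Xp : Fin r → Finset V}
    (hdisj : Pairwise fun i j => Disjoint (Xp i) (Xp j))
    (hpartite : ∀ e ∈ E, ∀ i, (e ∩ Xp i).card = 1)
    (hcomplete : ∀ f : Fin r → V, (∀ i, f i ∈ Xp i) → Finset.image f Finset.univ ∈ E)
    (c : Fin r → V) (hc : ∀ i, c i ∈ Xp i) (i : Fin r) :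
    PS k (Xp i) =
      (Submodule.span (MvPolynomial V k)
        {Ideal.Quotient.mk (edgeIdeal k E)
          (∏ j ∈ Finset.univ.erase i, (X (c j) : MvPolynomial V k))}).annihilator := by
  set fI : MvPolynomial V k := ∏ j ∈ Finset.univ.erase i, (X (c j)) with hfI
  have hfI_not : fI ∉ PS k (Xp i) := by
    rw [hfI, prod_X_eq]
    intro hmem
    have hsupp : (∑ j ∈ Finset.univ.erase i, Finsupp.single (c j) 1) ∈
        (monomial (∑ j ∈ Finset.univ.erase i, Finsupp.single (c j) 1) (1:k)).support :=
      mem_support_iff.mpr (by simp)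
    have h1 := mem_PS hmem _ hsupp
    have h0 : wS (Xp i) (∑ j ∈ Finset.univ.erase i, Finsupp.single (c j) 1) = 0 := by
      refine Finset.sum_eq_zero fun v hv => ?_
      have : (∑ j ∈ Finset.univ.erase i, Finsupp.single (c j) 1) v
          = ∑ j ∈ Finset.univ.erase i, Finsupp.single (c j) 1 v := by simp
      rw [this]
      refine Finset.sum_eq_zero fun j hj => ?_
      have hji : j ≠ i := Finset.ne_of_mem_erase hj
      have : c j ≠ v := fun h =>
        Finset.disjoint_left.mp (hdisj hji) (hc j) (h ▸ hv)
      simp [Finsupp.single_apply, this]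
    omega
  ext g
  rw [Submodule.mem_annihilator_span_singleton]
  have hsm : g • Ideal.Quotient.mk (edgeIdeal k E) fI
      = Ideal.Quotient.mk (edgeIdeal k E) (g * fI) := rfl
  rw [hsm, Ideal.Quotient.eq_zero_iff_mem]
  constructor
  · intro hg
    refine Submodule.span_induction ?_ ?_ ?_ ?_ hg
    · rintro _ ⟨w, hw, rfl⟩
      set g' : Fin r → V := Function.update c i w with hg'
      have hg'mem : ∀ j, g' j ∈ Xp j := by
        intro j
        rcases eq_or_ne j i with rfl | h
        · rw [hg', Function.update_self]; exact hw
        · rw [hg', Function.update_of_ne h]; exact hc j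
      have hinj : Function.Injective g' := by
        intro a b hab
        by_contra hne
        exact Finset.disjoint_left.mp (hdisj hne) (hg'mem a) (hab ▸ hg'mem b)
      have hkey : (X w : MvPolynomial V k) * fI
          = ∏ x ∈ Finset.image g' Finset.univ, X x := by
        rw [Finset.prod_image (fun a _ b _ hab => hinj hab),
          ← Finset.mul_prod_erase Finset.univ (fun j => (X (g' j) : MvPolynomial V k))
            (Finset.mem_univ i)]
        congr 1
        · rw [hg', Function.update_self]
        · exact Finset.prod_congr rfl fun j hj => by
            rw [hg', Function.update_of_ne (Finset.ne_of_mem_erase hj)]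
      rw [hkey, edgeIdeal]
      exact Ideal.subset_span ⟨Finset.image g' Finset.univ, hcomplete g' hg'mem, rfl⟩
    · simp
    · intro x y _ _ hx hy
      rw [add_mul]
      exact Ideal.add_mem _ hx hy
    · intro a x _ hx
      rw [smul_eq_mul, mul_assoc]
      exact Ideal.mul_mem_left _ _ hx
  · intro hgf
    have h1 : g * fI ∈ PS k (Xp i) := J_le_PS hpartite i hgf
    have := PS_primary (n := 1) (s := fI)
      (by rw [pow_one, mul_comm]; exact h1) hfI_not
    rwa [pow_one] at this

lemma loc_le {R : Type*} [CommRing R] {p I Jn : Ideal R} (hp : p.IsPrime)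
    (hJI : Jn ≤ I) (hprim : ∀ s x : R, s * x ∈ I → s ∉ p → x ∈ I) :
    Ideal.comap (algebraMap R (Localization p.primeCompl))
      (Ideal.map (algebraMap R (Localization p.primeCompl)) Jn) ≤ I := by
  intro x hx
  rw [Ideal.mem_comap] at hx
  obtain ⟨⟨a, s⟩, h⟩ := (IsLocalization.mem_map_algebraMap_iff p.primeCompl _).mp hx
  rw [← map_mul] at h
  obtain ⟨t, ht⟩ := (IsLocalization.eq_iff_exists p.primeCompl _).mp h
  have haI : (↑t * ↑a : R) ∈ I := I.mul_mem_left _ (hJI a.2)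
  have hmem : (↑t * ↑s : R) * x ∈ I := by
    have : (↑t * ↑s : R) * x = ↑t * (x * ↑s) := by ring
    rw [this, ht]
    exact haI
  refine hprim _ _ hmem ?_
  intro hts
  rcases hp.mem_or_mem hts with h' | h'
  · exact t.2 h'
  · exact s.2 h'

end Aux

lemma symbolicPower_le {R : Type*} [CommRing R] {I : Ideal R} (n : ℕ) (p : Ideal R)
    (hp : p.IsPrime) (hass : p ∈ associatedPrimes R (R ⧸ I)) :
    symbolicPower I n ≤ Ideal.comap (algebraMap R (Localization (@Ideal.primeCompl R _ p hp)))
      (Ideal.map (algebraMap R (Localization (@Ideal.primeCompl R _ p hp))) (I ^ n)) :=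
  sInf_le ⟨p, hp, hass, rfl⟩

/-- for a complete r-uniform r-partite hypergraph, all symbolic powers
of the edge ideal agree with ordinary powers. -/
theorem stmt4 {k V : Type*} [Field k] [Fintype V] [DecidableEq V]
    (r : ℕ) (hr : 1 ≤ r) (E : Finset (Finset V))
    (huniform : ∀ e ∈ E, e.card = r)
    (Xp : Fin r → Finset V)
    (hdisj : Pairwise fun i j => Disjoint (Xp i) (Xp j))
    (hcover : ∀ v : V, ∃ i, v ∈ Xp i)
    (hpartite : ∀ e ∈ E, ∀ i, (e ∩ Xp i).card = 1)
    (hcomplete : ∀ f : Fin r → V, (∀ i, f i ∈ Xp i) → Finset.image f Finset.univ ∈ E) :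
    ∀ n : ℕ, 1 ≤ n → symbolicPower (edgeIdeal k E) n = (edgeIdeal k E) ^ n := by
  intro n hn
  apply le_antisymm
  · by_cases hpart : ∀ i, (Xp i).Nonempty
    · choose c hc using fun i => hpart i
      intro x hx
      have hxi : ∀ i, x ∈ PS k (Xp i) ^ n := by
        intro i
        have hass : PS k (Xp i) ∈ associatedPrimes (MvPolynomial V k)
            ((MvPolynomial V k) ⧸ (edgeIdeal k E)) :=
          isAssociatedPrime_iff.mpr ⟨PS_prime _, _, by
            rw [Submodule.bot_colon']; exact ann_eq hdisj hpartite hcomplete c hc i⟩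
        have hxQ := symbolicPower_le n (PS k (Xp i)) (PS_prime _) hass hx
        exact loc_le (PS_prime _) (Ideal.pow_right_mono (J_le_PS hpartite i) n)
          (fun s y hsy hs => PS_primary hsy hs) hxQ
      have hmem := inter_to_prod hdisj hcover hxi
      rw [Finset.prod_pow] at hmem
      rwa [J_eq_prod hdisj hcover hpartite hcomplete]
    · push_neg at hpart
      obtain ⟨i, hi⟩ := hpart
      have hXe : Xp i = ∅ := hi
      have hE : E = ∅ := by
        rw [Finset.eq_empty_iff_forall_notMem]
        intro e he
        have := hpartite e he i
        rw [hXe] at this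
        simp at this
      have hJ : edgeIdeal k E = ⊥ := by
        rw [hE]
        simp [edgeIdeal]
      rw [hJ]
      have hbn : (⊥ : Ideal (MvPolynomial V k)) ^ n = ⊥ := by
        rw [← Ideal.zero_eq_bot, zero_pow (by omega : n ≠ 0)]
      rw [hbn]
      have hbp : (⊥ : Ideal (MvPolynomial V k)).IsPrime := Ideal.bot_prime
      have hass : (⊥ : Ideal (MvPolynomial V k)) ∈ associatedPrimes (MvPolynomial V k)
          ((MvPolynomial V k) ⧸ (⊥ : Ideal (MvPolynomial V k))) := by
        refine isAssociatedPrime_iff.mpr ⟨hbp, Ideal.Quotient.mk ⊥ 1, ?_⟩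
        rw [Submodule.bot_colon']
        ext g
        rw [Submodule.mem_annihilator_span_singleton]
        have hsm : g • Ideal.Quotient.mk (⊥ : Ideal (MvPolynomial V k)) 1
            = Ideal.Quotient.mk ⊥ (g * 1) := rfl
        rw [hsm, mul_one, Ideal.Quotient.eq_zero_iff_mem]
      refine le_trans (symbolicPower_le n ⊥ hbp hass) ?_
      rw [hbn, Ideal.map_bot]
      have hle : (@Ideal.primeCompl (MvPolynomial V k) _ ⊥ hbp) ≤
          nonZeroDivisors (MvPolynomial V k) := by
        intro y hy
        refine mem_nonZeroDivisors_of_ne_zero ?_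
        intro h0
        exact hy (by rw [h0]; exact Submodule.zero_mem ⊥)
      have hinj := IsLocalization.injective
        (Localization (@Ideal.primeCompl (MvPolynomial V k) _ ⊥ hbp)) hle
      rw [Ideal.comap_bot_of_injective _ hinj]
  · refine le_sInf ?_
    rintro b ⟨p, hp, hmem, rfl⟩
    exact Ideal.le_comap_map
end

section
/- Let H be the 3-uniform hypergraph on vertices {x_1,...,x_6} with hyperedges {x_1,x_2,x_3}, {x_3,x_4,x_5}, {x_5,x_6,x_2} (the bad hypergraph of length 3), and let I = I(H) ⊆ k[x_1,...,x_6]. Then x_1x_2x_3x_4x_5x_6 ∈ I^(2) but x_1x_2x_3x_4x_5x_6 ∉ I^2; in fact I^(2) = I^2 + (x_1x_2x_3x_4x_5x_6). -/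
open MvPolynomial

lemma key {k : Type*} [Field k] (w : (Fin 6 →₀ ℕ) → ℕ) (hw : ∀ a b, w (a + b) = w a + w b)
    (s f : MvPolynomial (Fin 6) k) (n : ℕ)
    (hs : ∃ a ∈ s.support, w a = 0) (hf : ∃ d ∈ f.support, w d ≤ n) :
    ∃ e ∈ (s * f).support, w e ≤ n := by
  classical
  obtain ⟨a1, ha1, ha1w⟩ := hs
  obtain ⟨d1, hd1, hd1n⟩ := hf
  obtain ⟨d0, hd0, hmin⟩ := Finset.exists_min_image f.support w ⟨d1, hd1⟩
  set n0 := w d0 with hn0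
  have hn0n : n0 ≤ n := le_trans (hmin d1 hd1) hd1n
  set s0 : MvPolynomial (Fin 6) k :=
    ∑ a ∈ s.support.filter (fun a => w a = 0), monomial a (coeff a s) with hs0def
  set f0 : MvPolynomial (Fin 6) k :=
    ∑ b ∈ f.support.filter (fun b => w b = n0), monomial b (coeff b f) with hf0def
  have hcs0 : ∀ c, coeff c s0 = if w c = 0 then coeff c s else 0 := by
    intro c
    rw [hs0def, coeff_sum]
    simp_rw [coeff_monomial]
    rw [Finset.sum_ite_eq' (s.support.filter (fun a => w a = 0)) c (fun a => coeff a s)]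
    by_cases h : w c = 0
    · by_cases h2 : coeff c s = 0
      · simp [h, h2, Finset.mem_filter, mem_support_iff]
      · simp [h, h2, Finset.mem_filter, mem_support_iff]
    · simp [h, Finset.mem_filter]
  have hcf0 : ∀ c, coeff c f0 = if w c = n0 then coeff c f else 0 := by
    intro c
    rw [hf0def, coeff_sum]
    simp_rw [coeff_monomial]
    rw [Finset.sum_ite_eq' (f.support.filter (fun b => w b = n0)) c (fun b => coeff b f)]
    by_cases h : w c = n0
    · by_cases h2 : coeff c f = 0
      · simp [h, h2, Finset.mem_filter, mem_support_iff]
      · simp [h, h2, Finset.mem_filter, mem_support_iff]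
    · simp [h, Finset.mem_filter]
  have hs0ne : s0 ≠ 0 := by
    intro h
    have := hcs0 a1
    rw [h, if_pos ha1w] at this
    exact (mem_support_iff.mp ha1) (by simpa using this.symm)
  have hf0ne : f0 ≠ 0 := by
    intro h
    have := hcf0 d0
    rw [h, if_pos rfl] at this
    exact (mem_support_iff.mp hd0) (by simpa using this.symm)
  obtain ⟨e, he⟩ := (MvPolynomial.support_nonempty).mpr (mul_ne_zero hs0ne hf0ne)
  have hesum := MvPolynomial.support_mul s0 f0 he
  rw [Finset.mem_add] at hesum
  obtain ⟨a, ha, b, hb, rfl⟩ := hesum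
  have hwa : w a = 0 := by
    have := mem_support_iff.mp ha
    rw [hcs0 a] at this
    by_contra h; rw [if_neg h] at this; exact this rfl
  have hwb : w b = n0 := by
    have := mem_support_iff.mp hb
    rw [hcf0 b] at this
    by_contra h; rw [if_neg h] at this; exact this rfl
  have hwe : w (a + b) = n0 := by rw [hw, hwa, hwb, zero_add]
  have hco : coeff (a + b) (s * f) = coeff (a + b) (s0 * f0) := by
    rw [coeff_mul, coeff_mul]
    refine Finset.sum_congr rfl ?_
    rintro ⟨x, y⟩ hxy
    have hxye : x + y = a + b := Finset.HasAntidiagonal.mem_antidiagonal.mp hxy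
    simp only
    rw [hcs0 x, hcf0 y]
    by_cases hx : coeff x s = 0
    · simp [hx]
    by_cases hy : coeff y f = 0
    · simp [hy]
    have hsum : w x + w y = n0 := by rw [← hw, hxye, hwe]
    have hylb : n0 ≤ w y := hmin y (mem_support_iff.mpr hy)
    have hx0 : w x = 0 := by omega
    have hy0 : w y = n0 := by omega
    rw [if_pos hx0, if_pos hy0]
  refine ⟨a + b, ?_, by omega⟩
  rw [mem_support_iff, hco]
  exact mem_support_iff.mp he


noncomputable def Pv (k : Type*) [Field k] (T : Finset (Fin 6)) : Ideal (MvPolynomial (Fin 6) k) :=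
  Ideal.span ((fun e => monomial e (1 : k)) '' ((fun i => Finsupp.single i 1) '' ↑T))

lemma mem_Pv {k : Type*} [Field k] (T : Finset (Fin 6)) (f : MvPolynomial (Fin 6) k) :
    f ∈ Pv k T ↔ ∀ d ∈ f.support, ∃ i ∈ T, 1 ≤ d i := by
  rw [Pv, mem_ideal_span_monomial_image]
  constructor
  · intro h d hd
    obtain ⟨e, ⟨i, hi, rfl⟩, hle⟩ := h d hd
    exact ⟨i, hi, by simpa using Finsupp.single_le_iff.mp hle⟩
  · intro h d hd
    obtain ⟨i, hi, h1⟩ := h d hd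
    exact ⟨Finsupp.single i 1, ⟨i, hi, rfl⟩, Finsupp.single_le_iff.mpr h1⟩

lemma Pv_prime {k : Type*} [Field k] (T : Finset (Fin 6)) : (Pv k T).IsPrime := by
  constructor
  · rw [Ne, Ideal.eq_top_iff_one, mem_Pv]
    intro h
    obtain ⟨i, _, h1⟩ := h 0 (by simp [MvPolynomial.mem_support_iff])
    simp at h1
  · intro a b hab
    by_contra h
    push_neg at h
    obtain ⟨ha, hb⟩ := h
    rw [mem_Pv] at ha hb
    push_neg at ha hb
    obtain ⟨da, hda, hda0⟩ := ha
    obtain ⟨db, hdb, hdb0⟩ := hb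
    obtain ⟨e, he, hew⟩ := key (fun d => ∑ i ∈ T, d i)
      (fun a b => by simp [Finset.sum_add_distrib]) a b 0
      ⟨da, hda, Finset.sum_eq_zero (fun i hi => by have := hda0 i hi; omega)⟩
      ⟨db, hdb, le_of_eq (Finset.sum_eq_zero (fun i hi => by have := hdb0 i hi; omega))⟩
    rw [mem_Pv] at hab
    obtain ⟨i, hi, h1⟩ := hab e he
    have := (Finset.sum_eq_zero_iff).mp (Nat.le_zero.mp hew) i hi
    omega

lemma Pv_key {k : Type*} [Field k] (T : Finset (Fin 6)) (s f : MvPolynomial (Fin 6) k)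
    (hs : s ∉ Pv k T) (hsf : ∀ e ∈ (s * f).support, 2 ≤ ∑ i ∈ T, e i) :
    ∀ d ∈ f.support, 2 ≤ ∑ i ∈ T, d i := by
  by_contra h
  push_neg at h
  obtain ⟨d, hd, hd2⟩ := h
  rw [mem_Pv] at hs
  push_neg at hs
  obtain ⟨a, ha, ha0⟩ := hs
  obtain ⟨e, he, hew⟩ := key (fun d => ∑ i ∈ T, d i)
    (fun a b => by simp [Finset.sum_add_distrib]) s f 1
    ⟨a, ha, Finset.sum_eq_zero (fun i hi => by have := ha0 i hi; omega)⟩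
    ⟨d, hd, by show (∑ i ∈ T, d i) ≤ 1; omega⟩
  have := hsf e he
  omega

noncomputable section

def ee1 : Fin 6 →₀ ℕ := Finsupp.single 0 1 + Finsupp.single 1 1 + Finsupp.single 2 1
def ee2 : Fin 6 →₀ ℕ := Finsupp.single 2 1 + Finsupp.single 3 1 + Finsupp.single 4 1
def ee3 : Fin 6 →₀ ℕ := Finsupp.single 4 1 + Finsupp.single 5 1 + Finsupp.single 1 1
def eM : Fin 6 →₀ ℕ := Finsupp.single 0 1 + Finsupp.single 1 1 + Finsupp.single 2 1 +
  Finsupp.single 3 1 + Finsupp.single 4 1 + Finsupp.single 5 1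

def ESet : Set (Fin 6 →₀ ℕ) := {ee1, ee2, ee3}
def E2Set : Set (Fin 6 →₀ ℕ) :=
  {ee1 + ee1, ee1 + ee2, ee1 + ee3, ee2 + ee2, ee2 + ee3, ee3 + ee3}

def Iid (k : Type*) [Field k] : Ideal (MvPolynomial (Fin 6) k) :=
  Ideal.span ((fun e => monomial e (1 : k)) '' ESet)

variable {k : Type*} [Field k]

lemma X012 : (X 0 * X 1 * X 2 : MvPolynomial (Fin 6) k) = monomial ee1 1 := by
  rw [ee1]; simp [X, monomial_mul]

lemma X234 : (X 2 * X 3 * X 4 : MvPolynomial (Fin 6) k) = monomial ee2 1 := by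
  rw [ee2]; simp [X, monomial_mul]

lemma X451 : (X 4 * X 5 * X 1 : MvPolynomial (Fin 6) k) = monomial ee3 1 := by
  rw [ee3]; simp [X, monomial_mul]

lemma XM : (X 0 * X 1 * X 2 * X 3 * X 4 * X 5 : MvPolynomial (Fin 6) k) = monomial eM 1 := by
  rw [eM]; simp [X, monomial_mul]

lemma IEq : Ideal.span {(X 0 * X 1 * X 2 : MvPolynomial (Fin 6) k), X 2 * X 3 * X 4,
    X 4 * X 5 * X 1} = Iid k := by
  rw [Iid, ESet, Set.image_insert_eq, Set.image_insert_eq, Set.image_singleton,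
    X012, X234, X451]

lemma Isq : (Iid k) ^ 2 = Ideal.span ((fun e => monomial e (1 : k)) '' E2Set) := by
  rw [pow_two, Iid]
  apply le_antisymm
  · rw [Ideal.span_mul_span', Ideal.span_le]
    rintro z hz
    obtain ⟨x, hx, y, hy, rfl⟩ := Set.mem_mul.mp hz
    obtain ⟨e, he, rfl⟩ := hx
    obtain ⟨e', he', rfl⟩ := hy
    apply Ideal.subset_span
    refine ⟨e + e', ?_, by simp [monomial_mul]⟩
    rw [ESet] at he he'
    simp only [Set.mem_insert_iff, Set.mem_singleton_iff] at he he'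
    rw [E2Set]
    simp only [Set.mem_insert_iff, Set.mem_singleton_iff]
    rcases he with rfl | rfl | rfl <;> rcases he' with rfl | rfl | rfl <;>
      simp [add_comm]
  · rw [Ideal.span_le]
    rintro z ⟨e, he, rfl⟩
    rw [SetLike.mem_coe]
    rw [E2Set] at he
    simp only [Set.mem_insert_iff, Set.mem_singleton_iff] at he
    have mem : ∀ a ∈ ESet, ∀ b ∈ ESet, (monomial (a + b) (1:k)) ∈
        Ideal.span ((fun e => monomial e (1 : k)) '' ESet) *
        Ideal.span ((fun e => monomial e (1 : k)) '' ESet) := by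
      intro a ha b hb
      have : (monomial (a + b) (1:k)) = monomial a 1 * monomial b 1 := by
        simp [monomial_mul]
      rw [this]
      exact Ideal.mul_mem_mul (Ideal.subset_span ⟨a, ha, rfl⟩) (Ideal.subset_span ⟨b, hb, rfl⟩)
    rcases he with rfl | rfl | rfl | rfl | rfl | rfl <;>
      apply mem <;> simp [ESet]

end

section
variable {k : Type*} [Field k]

lemma ann_iff (T : Finset (Fin 6)) (r : Fin 6 →₀ ℕ)
    (h1 : ∀ i ∈ T, monomial (Finsupp.single i 1 + r) (1 : k) ∈ Iid k)
    (h2 : ∀ d : Fin 6 →₀ ℕ, (∃ e ∈ ESet, e ≤ d + r) → ∃ i ∈ T, 1 ≤ d i)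
    (a : MvPolynomial (Fin 6) k) : a ∈ Pv k T ↔ a * monomial r 1 ∈ Iid k := by
  constructor
  · intro ha
    rw [Pv] at ha
    refine Submodule.span_induction (p := fun x _ => x * monomial r 1 ∈ Iid k) ?_ ?_ ?_ ?_ ha
    · rintro x ⟨e, ⟨i, hi, rfl⟩, rfl⟩
      rw [monomial_mul, one_mul]
      exact h1 i hi
    · simpa using (Iid k).zero_mem
    · intro x y hx hy ihx ihy
      rw [add_mul]
      exact Ideal.add_mem _ ihx ihy
    · intro c x hx ih
      rw [smul_eq_mul, mul_assoc]
      exact Ideal.mul_mem_left _ _ ih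
  · intro h
    rw [mem_Pv]
    intro d hd
    apply h2
    have hsupp : d + r ∈ (a * monomial r 1).support := by
      rw [MvPolynomial.mem_support_iff, coeff_mul_monomial]
      simpa using MvPolynomial.mem_support_iff.mp hd
    rw [Iid, mem_ideal_span_monomial_image] at h
    exact h _ hsupp

lemma assocP (T : Finset (Fin 6)) (r : Fin 6 →₀ ℕ)
    (h1 : ∀ i ∈ T, monomial (Finsupp.single i 1 + r) (1 : k) ∈ Iid k)
    (h2 : ∀ d : Fin 6 →₀ ℕ, (∃ e ∈ ESet, e ≤ d + r) → ∃ i ∈ T, 1 ≤ d i) :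
    Pv k T ∈ associatedPrimes (MvPolynomial (Fin 6) k) (MvPolynomial (Fin 6) k ⧸ Iid k) := by
  refine isAssociatedPrime_iff.mpr ⟨Pv_prime T, ⟨Ideal.Quotient.mk (Iid k) (monomial r 1), ?_⟩⟩
  ext a
  rw [Submodule.mem_colon_singleton, Submodule.mem_bot]
  have hsm : a • (Ideal.Quotient.mk (Iid k) (monomial r 1)) =
      Ideal.Quotient.mk (Iid k) (a * monomial r 1) := by
    rfl
  rw [ann_iff T r h1 h2 a, hsm, Ideal.Quotient.eq_zero_iff_mem]

end

noncomputable section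
variable {k : Type*} [Field k]

lemma mono_mem_Iid (v e : Fin 6 →₀ ℕ) (he : e ∈ ESet) (hle : e ≤ v) :
    monomial v (1 : k) ∈ Iid k := by
  classical
  rw [Iid, mem_ideal_span_monomial_image]
  intro d hd
  rw [support_monomial, if_neg one_ne_zero, Finset.mem_singleton] at hd
  subst hd
  exact ⟨e, he, hle⟩

def rr12 : Fin 6 →₀ ℕ := Finsupp.single 0 1 + Finsupp.single 3 1 + Finsupp.single 4 1 + Finsupp.single 5 1

def rr24 : Fin 6 →₀ ℕ := Finsupp.single 0 1 + Finsupp.single 1 1 + Finsupp.single 3 1 + Finsupp.single 5 1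

def rr14 : Fin 6 →₀ ℕ := Finsupp.single 0 1 + Finsupp.single 2 1 + Finsupp.single 3 1 + Finsupp.single 5 1

def rr25 : Fin 6 →₀ ℕ := Finsupp.single 0 1 + Finsupp.single 1 1 + Finsupp.single 3 1 + Finsupp.single 4 1

def rr04 : Fin 6 →₀ ℕ := Finsupp.single 1 1 + Finsupp.single 2 1 + Finsupp.single 3 1 + Finsupp.single 5 1

def rr13 : Fin 6 →₀ ℕ := Finsupp.single 0 1 + Finsupp.single 2 1 + Finsupp.single 4 1 + Finsupp.single 5 1

def rr035 : Fin 6 →₀ ℕ := Finsupp.single 1 1 + Finsupp.single 2 1 + Finsupp.single 4 1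


lemma h1_12 : ∀ i ∈ ({1,2} : Finset (Fin 6)),
    monomial (Finsupp.single i 1 + rr12) (1 : k) ∈ Iid k := by
  intro i hi
  fin_cases hi
  · exact mono_mem_Iid _ ee3 (by simp [ESet]) (by rw [Finsupp.le_def]; intro j; fin_cases j <;> simp [ee1, ee2, ee3, rr12, Finsupp.single_apply])
  · exact mono_mem_Iid _ ee2 (by simp [ESet]) (by rw [Finsupp.le_def]; intro j; fin_cases j <;> simp [ee1, ee2, ee3, rr12, Finsupp.single_apply])

lemma h2_12 : ∀ d : Fin 6 →₀ ℕ, (∃ e ∈ ESet, e ≤ d + rr12) →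
    ∃ i ∈ ({1,2} : Finset (Fin 6)), 1 ≤ d i := by
  rintro d ⟨e, he, hle⟩
  simp only [ESet, Set.mem_insert_iff, Set.mem_singleton_iff] at he
  rcases he with rfl | rfl | rfl
  · have := Finsupp.le_def.mp hle 1
    simp [ee1, rr12, Finsupp.single_apply, Finsupp.add_apply] at this
    exact ⟨1, by simp, by omega⟩
  · have := Finsupp.le_def.mp hle 2
    simp [ee2, rr12, Finsupp.single_apply, Finsupp.add_apply] at this
    exact ⟨2, by simp, by omega⟩
  · have := Finsupp.le_def.mp hle 1
    simp [ee3, rr12, Finsupp.single_apply, Finsupp.add_apply] at this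
    exact ⟨1, by simp, by omega⟩

lemma assoc_12 : Pv k ({1,2} : Finset (Fin 6)) ∈
    associatedPrimes (MvPolynomial (Fin 6) k) (MvPolynomial (Fin 6) k ⧸ Iid k) :=
  assocP _ rr12 h1_12 h2_12


lemma h1_24 : ∀ i ∈ ({2,4} : Finset (Fin 6)),
    monomial (Finsupp.single i 1 + rr24) (1 : k) ∈ Iid k := by
  intro i hi
  fin_cases hi
  · exact mono_mem_Iid _ ee1 (by simp [ESet]) (by rw [Finsupp.le_def]; intro j; fin_cases j <;> simp [ee1, ee2, ee3, rr24, Finsupp.single_apply])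
  · exact mono_mem_Iid _ ee3 (by simp [ESet]) (by rw [Finsupp.le_def]; intro j; fin_cases j <;> simp [ee1, ee2, ee3, rr24, Finsupp.single_apply])

lemma h2_24 : ∀ d : Fin 6 →₀ ℕ, (∃ e ∈ ESet, e ≤ d + rr24) →
    ∃ i ∈ ({2,4} : Finset (Fin 6)), 1 ≤ d i := by
  rintro d ⟨e, he, hle⟩
  simp only [ESet, Set.mem_insert_iff, Set.mem_singleton_iff] at he
  rcases he with rfl | rfl | rfl
  · have := Finsupp.le_def.mp hle 2
    simp [ee1, rr24, Finsupp.single_apply, Finsupp.add_apply] at this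
    exact ⟨2, by simp, by omega⟩
  · have := Finsupp.le_def.mp hle 2
    simp [ee2, rr24, Finsupp.single_apply, Finsupp.add_apply] at this
    exact ⟨2, by simp, by omega⟩
  · have := Finsupp.le_def.mp hle 4
    simp [ee3, rr24, Finsupp.single_apply, Finsupp.add_apply] at this
    exact ⟨4, by simp, by omega⟩

lemma assoc_24 : Pv k ({2,4} : Finset (Fin 6)) ∈
    associatedPrimes (MvPolynomial (Fin 6) k) (MvPolynomial (Fin 6) k ⧸ Iid k) :=
  assocP _ rr24 h1_24 h2_24


lemma h1_14 : ∀ i ∈ ({1,4} : Finset (Fin 6)),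
    monomial (Finsupp.single i 1 + rr14) (1 : k) ∈ Iid k := by
  intro i hi
  fin_cases hi
  · exact mono_mem_Iid _ ee1 (by simp [ESet]) (by rw [Finsupp.le_def]; intro j; fin_cases j <;> simp [ee1, ee2, ee3, rr14, Finsupp.single_apply])
  · exact mono_mem_Iid _ ee2 (by simp [ESet]) (by rw [Finsupp.le_def]; intro j; fin_cases j <;> simp [ee1, ee2, ee3, rr14, Finsupp.single_apply])

lemma h2_14 : ∀ d : Fin 6 →₀ ℕ, (∃ e ∈ ESet, e ≤ d + rr14) →
    ∃ i ∈ ({1,4} : Finset (Fin 6)), 1 ≤ d i := by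
  rintro d ⟨e, he, hle⟩
  simp only [ESet, Set.mem_insert_iff, Set.mem_singleton_iff] at he
  rcases he with rfl | rfl | rfl
  · have := Finsupp.le_def.mp hle 1
    simp [ee1, rr14, Finsupp.single_apply, Finsupp.add_apply] at this
    exact ⟨1, by simp, by omega⟩
  · have := Finsupp.le_def.mp hle 4
    simp [ee2, rr14, Finsupp.single_apply, Finsupp.add_apply] at this
    exact ⟨4, by simp, by omega⟩
  · have := Finsupp.le_def.mp hle 4
    simp [ee3, rr14, Finsupp.single_apply, Finsupp.add_apply] at this
    exact ⟨4, by simp, by omega⟩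

lemma assoc_14 : Pv k ({1,4} : Finset (Fin 6)) ∈
    associatedPrimes (MvPolynomial (Fin 6) k) (MvPolynomial (Fin 6) k ⧸ Iid k) :=
  assocP _ rr14 h1_14 h2_14


lemma h1_25 : ∀ i ∈ ({2,5} : Finset (Fin 6)),
    monomial (Finsupp.single i 1 + rr25) (1 : k) ∈ Iid k := by
  intro i hi
  fin_cases hi
  · exact mono_mem_Iid _ ee1 (by simp [ESet]) (by rw [Finsupp.le_def]; intro j; fin_cases j <;> simp [ee1, ee2, ee3, rr25, Finsupp.single_apply])
  · exact mono_mem_Iid _ ee3 (by simp [ESet]) (by rw [Finsupp.le_def]; intro j; fin_cases j <;> simp [ee1, ee2, ee3, rr25, Finsupp.single_apply])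

lemma h2_25 : ∀ d : Fin 6 →₀ ℕ, (∃ e ∈ ESet, e ≤ d + rr25) →
    ∃ i ∈ ({2,5} : Finset (Fin 6)), 1 ≤ d i := by
  rintro d ⟨e, he, hle⟩
  simp only [ESet, Set.mem_insert_iff, Set.mem_singleton_iff] at he
  rcases he with rfl | rfl | rfl
  · have := Finsupp.le_def.mp hle 2
    simp [ee1, rr25, Finsupp.single_apply, Finsupp.add_apply] at this
    exact ⟨2, by simp, by omega⟩
  · have := Finsupp.le_def.mp hle 2
    simp [ee2, rr25, Finsupp.single_apply, Finsupp.add_apply] at this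
    exact ⟨2, by simp, by omega⟩
  · have := Finsupp.le_def.mp hle 5
    simp [ee3, rr25, Finsupp.single_apply, Finsupp.add_apply] at this
    exact ⟨5, by simp, by omega⟩

lemma assoc_25 : Pv k ({2,5} : Finset (Fin 6)) ∈
    associatedPrimes (MvPolynomial (Fin 6) k) (MvPolynomial (Fin 6) k ⧸ Iid k) :=
  assocP _ rr25 h1_25 h2_25


lemma h1_04 : ∀ i ∈ ({0,4} : Finset (Fin 6)),
    monomial (Finsupp.single i 1 + rr04) (1 : k) ∈ Iid k := by
  intro i hi
  fin_cases hi
  · exact mono_mem_Iid _ ee1 (by simp [ESet]) (by rw [Finsupp.le_def]; intro j; fin_cases j <;> simp [ee1, ee2, ee3, rr04, Finsupp.single_apply])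
  · exact mono_mem_Iid _ ee2 (by simp [ESet]) (by rw [Finsupp.le_def]; intro j; fin_cases j <;> simp [ee1, ee2, ee3, rr04, Finsupp.single_apply])

lemma h2_04 : ∀ d : Fin 6 →₀ ℕ, (∃ e ∈ ESet, e ≤ d + rr04) →
    ∃ i ∈ ({0,4} : Finset (Fin 6)), 1 ≤ d i := by
  rintro d ⟨e, he, hle⟩
  simp only [ESet, Set.mem_insert_iff, Set.mem_singleton_iff] at he
  rcases he with rfl | rfl | rfl
  · have := Finsupp.le_def.mp hle 0
    simp [ee1, rr04, Finsupp.single_apply, Finsupp.add_apply] at this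
    exact ⟨0, by simp, by omega⟩
  · have := Finsupp.le_def.mp hle 4
    simp [ee2, rr04, Finsupp.single_apply, Finsupp.add_apply] at this
    exact ⟨4, by simp, by omega⟩
  · have := Finsupp.le_def.mp hle 4
    simp [ee3, rr04, Finsupp.single_apply, Finsupp.add_apply] at this
    exact ⟨4, by simp, by omega⟩

lemma assoc_04 : Pv k ({0,4} : Finset (Fin 6)) ∈
    associatedPrimes (MvPolynomial (Fin 6) k) (MvPolynomial (Fin 6) k ⧸ Iid k) :=
  assocP _ rr04 h1_04 h2_04


lemma h1_13 : ∀ i ∈ ({1,3} : Finset (Fin 6)),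
    monomial (Finsupp.single i 1 + rr13) (1 : k) ∈ Iid k := by
  intro i hi
  fin_cases hi
  · exact mono_mem_Iid _ ee1 (by simp [ESet]) (by rw [Finsupp.le_def]; intro j; fin_cases j <;> simp [ee1, ee2, ee3, rr13, Finsupp.single_apply])
  · exact mono_mem_Iid _ ee2 (by simp [ESet]) (by rw [Finsupp.le_def]; intro j; fin_cases j <;> simp [ee1, ee2, ee3, rr13, Finsupp.single_apply])

lemma h2_13 : ∀ d : Fin 6 →₀ ℕ, (∃ e ∈ ESet, e ≤ d + rr13) →
    ∃ i ∈ ({1,3} : Finset (Fin 6)), 1 ≤ d i := by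
  rintro d ⟨e, he, hle⟩
  simp only [ESet, Set.mem_insert_iff, Set.mem_singleton_iff] at he
  rcases he with rfl | rfl | rfl
  · have := Finsupp.le_def.mp hle 1
    simp [ee1, rr13, Finsupp.single_apply, Finsupp.add_apply] at this
    exact ⟨1, by simp, by omega⟩
  · have := Finsupp.le_def.mp hle 3
    simp [ee2, rr13, Finsupp.single_apply, Finsupp.add_apply] at this
    exact ⟨3, by simp, by omega⟩
  · have := Finsupp.le_def.mp hle 1
    simp [ee3, rr13, Finsupp.single_apply, Finsupp.add_apply] at this
    exact ⟨1, by simp, by omega⟩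

lemma assoc_13 : Pv k ({1,3} : Finset (Fin 6)) ∈
    associatedPrimes (MvPolynomial (Fin 6) k) (MvPolynomial (Fin 6) k ⧸ Iid k) :=
  assocP _ rr13 h1_13 h2_13


lemma h1_035 : ∀ i ∈ ({0,3,5} : Finset (Fin 6)),
    monomial (Finsupp.single i 1 + rr035) (1 : k) ∈ Iid k := by
  intro i hi
  fin_cases hi
  · exact mono_mem_Iid _ ee1 (by simp [ESet]) (by rw [Finsupp.le_def]; intro j; fin_cases j <;> simp [ee1, ee2, ee3, rr035, Finsupp.single_apply])
  · exact mono_mem_Iid _ ee2 (by simp [ESet]) (by rw [Finsupp.le_def]; intro j; fin_cases j <;> simp [ee1, ee2, ee3, rr035, Finsupp.single_apply])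
  · exact mono_mem_Iid _ ee3 (by simp [ESet]) (by rw [Finsupp.le_def]; intro j; fin_cases j <;> simp [ee1, ee2, ee3, rr035, Finsupp.single_apply])

lemma h2_035 : ∀ d : Fin 6 →₀ ℕ, (∃ e ∈ ESet, e ≤ d + rr035) →
    ∃ i ∈ ({0,3,5} : Finset (Fin 6)), 1 ≤ d i := by
  rintro d ⟨e, he, hle⟩
  simp only [ESet, Set.mem_insert_iff, Set.mem_singleton_iff] at he
  rcases he with rfl | rfl | rfl
  · have := Finsupp.le_def.mp hle 0
    simp [ee1, rr035, Finsupp.single_apply, Finsupp.add_apply] at this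
    exact ⟨0, by simp, by omega⟩
  · have := Finsupp.le_def.mp hle 3
    simp [ee2, rr035, Finsupp.single_apply, Finsupp.add_apply] at this
    exact ⟨3, by simp, by omega⟩
  · have := Finsupp.le_def.mp hle 5
    simp [ee3, rr035, Finsupp.single_apply, Finsupp.add_apply] at this
    exact ⟨5, by simp, by omega⟩

lemma assoc_035 : Pv k ({0,3,5} : Finset (Fin 6)) ∈
    associatedPrimes (MvPolynomial (Fin 6) k) (MvPolynomial (Fin 6) k ⧸ Iid k) :=
  assocP _ rr035 h1_035 h2_035

end


section
variable {k : Type*} [Field k]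

lemma contract (T : Finset (Fin 6))
    (hT : Pv k T ∈ associatedPrimes (MvPolynomial (Fin 6) k) (MvPolynomial (Fin 6) k ⧸ Iid k))
    (hw2 : ∀ e ∈ E2Set, 2 ≤ ∑ i ∈ T, e i)
    (f : MvPolynomial (Fin 6) k) (hf : f ∈ symbolicPower (Iid k) 2) :
    ∀ d ∈ f.support, 2 ≤ ∑ i ∈ T, d i := by
  haveI hp : (Pv k T).IsPrime := Pv_prime T
  have hJ := Submodule.mem_sInf.mp hf _ ⟨Pv k T, hp, hT, rfl⟩
  rw [Ideal.mem_comap, IsLocalization.mem_map_algebraMap_iff (Pv k T).primeCompl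
    (Localization (Pv k T).primeCompl)] at hJ
  obtain ⟨⟨⟨i2, hi2⟩, ⟨s, hs⟩⟩, heq⟩ := hJ
  rw [← map_mul] at heq
  have hfs : f * s = i2 := IsLocalization.injective (Localization (Pv k T).primeCompl)
      ((Pv k T).primeCompl_le_nonZeroDivisors) heq
  apply Pv_key T s f hs
  intro e he
  have hi2' : s * f ∈ (Iid k) ^ 2 := by rw [mul_comm, hfs]; exact hi2
  rw [Isq, mem_ideal_span_monomial_image] at hi2'
  obtain ⟨e', he', hle⟩ := hi2' e he
  have h2 := hw2 e' he'
  have hmono : ∑ i ∈ T, e' i ≤ ∑ i ∈ T, e i :=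
    Finset.sum_le_sum (fun i _ => Finsupp.le_def.mp hle i)
  omega

lemma Xi_mul_eM_mem (i : Fin 6) (e' : Fin 6 →₀ ℕ) (he' : e' ∈ E2Set)
    (hle : e' ≤ Finsupp.single i 1 + eM) :
    (X i : MvPolynomial (Fin 6) k) * monomial eM 1 ∈ (Iid k) ^ 2 := by
  classical
  have : (X i : MvPolynomial (Fin 6) k) * monomial eM 1 =
      monomial (Finsupp.single i 1 + eM) 1 := by
    rw [X, monomial_mul, one_mul]
  rw [this, Isq, mem_ideal_span_monomial_image]
  intro d hd
  rw [support_monomial, if_neg one_ne_zero, Finset.mem_singleton] at hd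
  subst hd
  exact ⟨e', he', hle⟩

lemma m_mem_symb : monomial eM (1 : k) ∈ symbolicPower (Iid k) 2 := by
  rw [symbolicPower, Submodule.mem_sInf]
  rintro J ⟨p, hp, hass, rfl⟩
  obtain ⟨-, x, hx⟩ := isAssociatedPrime_iff.mp hass
  obtain ⟨r, rfl⟩ := Ideal.Quotient.mk_surjective x
  have hmem : ∀ a : MvPolynomial (Fin 6) k, a ∈ p ↔ a * r ∈ Iid k := by
    intro a
    rw [hx, Submodule.mem_colon_singleton, Submodule.mem_bot]
    have hsm : a • (Ideal.Quotient.mk (Iid k) r) = Ideal.Quotient.mk (Iid k) (a * r) := rfl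
    rw [hsm, Ideal.Quotient.eq_zero_iff_mem]
  have hex : ∃ i : Fin 6, X i ∉ p ∧
      (X i : MvPolynomial (Fin 6) k) * monomial eM 1 ∈ (Iid k) ^ 2 := by
    have hm1 : (X 1 : MvPolynomial (Fin 6) k) * monomial eM 1 ∈ (Iid k) ^ 2 :=
      Xi_mul_eM_mem 1 (ee1 + ee3) (by simp [E2Set]) (by
        rw [Finsupp.le_def]; intro j; fin_cases j <;>
          simp [ee1, ee3, eM, Finsupp.single_apply])
    have hm2 : (X 2 : MvPolynomial (Fin 6) k) * monomial eM 1 ∈ (Iid k) ^ 2 :=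
      Xi_mul_eM_mem 2 (ee1 + ee2) (by simp [E2Set]) (by
        rw [Finsupp.le_def]; intro j; fin_cases j <;>
          simp [ee1, ee2, eM, Finsupp.single_apply])
    have hm4 : (X 4 : MvPolynomial (Fin 6) k) * monomial eM 1 ∈ (Iid k) ^ 2 :=
      Xi_mul_eM_mem 4 (ee2 + ee3) (by simp [E2Set]) (by
        rw [Finsupp.le_def]; intro j; fin_cases j <;>
          simp [ee2, ee3, eM, Finsupp.single_apply])
    by_cases h1 : (X 1 : MvPolynomial (Fin 6) k) ∈ p
    · by_cases h2 : (X 2 : MvPolynomial (Fin 6) k) ∈ p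
      · by_cases h4 : (X 4 : MvPolynomial (Fin 6) k) ∈ p
        · exfalso
          have hr : r ∈ Iid k := by
            rw [Iid, mem_ideal_span_monomial_image]
            intro d hd
            have c1 := (hmem (X 1)).mp h1
            have c2 := (hmem (X 2)).mp h2
            have c4 := (hmem (X 4)).mp h4
            rw [Iid, mem_ideal_span_monomial_image] at c1 c2 c4
            have m1 := c1 (Finsupp.single 1 1 + d) (by
              rw [MvPolynomial.mem_support_iff, coeff_X_mul]
              exact MvPolynomial.mem_support_iff.mp hd)
            have m2 := c2 (Finsupp.single 2 1 + d) (by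
              rw [MvPolynomial.mem_support_iff, coeff_X_mul]
              exact MvPolynomial.mem_support_iff.mp hd)
            have m4 := c4 (Finsupp.single 4 1 + d) (by
              rw [MvPolynomial.mem_support_iff, coeff_X_mul]
              exact MvPolynomial.mem_support_iff.mp hd)
            have D1 : (1 ≤ d 0 ∧ 1 ≤ d 2) ∨ (1 ≤ d 2 ∧ 1 ≤ d 3 ∧ 1 ≤ d 4) ∨
                (1 ≤ d 4 ∧ 1 ≤ d 5) := by
              obtain ⟨e, he, hle⟩ := m1
              simp only [ESet, Set.mem_insert_iff, Set.mem_singleton_iff] at he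
              rcases he with rfl | rfl | rfl
              · have h0 := Finsupp.le_def.mp hle 0
                have hc2 := Finsupp.le_def.mp hle 2
                simp [ee1, Finsupp.single_apply] at h0 hc2
                exact Or.inl ⟨h0, hc2⟩
              · have hc2 := Finsupp.le_def.mp hle 2
                have h3 := Finsupp.le_def.mp hle 3
                have h4' := Finsupp.le_def.mp hle 4
                simp [ee2, Finsupp.single_apply] at hc2 h3 h4'
                exact Or.inr (Or.inl ⟨hc2, h3, h4'⟩)
              · have h4' := Finsupp.le_def.mp hle 4
                have h5 := Finsupp.le_def.mp hle 5
                simp [ee3, Finsupp.single_apply] at h4' h5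
                exact Or.inr (Or.inr ⟨h4', h5⟩)
            have D2 : (1 ≤ d 0 ∧ 1 ≤ d 1) ∨ (1 ≤ d 3 ∧ 1 ≤ d 4) ∨
                (1 ≤ d 4 ∧ 1 ≤ d 5 ∧ 1 ≤ d 1) := by
              obtain ⟨e, he, hle⟩ := m2
              simp only [ESet, Set.mem_insert_iff, Set.mem_singleton_iff] at he
              rcases he with rfl | rfl | rfl
              · have h0 := Finsupp.le_def.mp hle 0
                have hc1 := Finsupp.le_def.mp hle 1
                simp [ee1, Finsupp.single_apply] at h0 hc1
                exact Or.inl ⟨h0, hc1⟩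
              · have h3 := Finsupp.le_def.mp hle 3
                have h4' := Finsupp.le_def.mp hle 4
                simp [ee2, Finsupp.single_apply] at h3 h4'
                exact Or.inr (Or.inl ⟨h3, h4'⟩)
              · have h4' := Finsupp.le_def.mp hle 4
                have h5 := Finsupp.le_def.mp hle 5
                have hc1 := Finsupp.le_def.mp hle 1
                simp [ee3, Finsupp.single_apply] at h4' h5 hc1
                exact Or.inr (Or.inr ⟨h4', h5, hc1⟩)
            have D4 : (1 ≤ d 0 ∧ 1 ≤ d 1 ∧ 1 ≤ d 2) ∨ (1 ≤ d 2 ∧ 1 ≤ d 3) ∨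
                (1 ≤ d 5 ∧ 1 ≤ d 1) := by
              obtain ⟨e, he, hle⟩ := m4
              simp only [ESet, Set.mem_insert_iff, Set.mem_singleton_iff] at he
              rcases he with rfl | rfl | rfl
              · have h0 := Finsupp.le_def.mp hle 0
                have hc1 := Finsupp.le_def.mp hle 1
                have hc2 := Finsupp.le_def.mp hle 2
                simp [ee1, Finsupp.single_apply] at h0 hc1 hc2
                exact Or.inl ⟨h0, hc1, hc2⟩
              · have hc2 := Finsupp.le_def.mp hle 2
                have h3 := Finsupp.le_def.mp hle 3
                simp [ee2, Finsupp.single_apply] at hc2 h3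
                exact Or.inr (Or.inl ⟨hc2, h3⟩)
              · have h5 := Finsupp.le_def.mp hle 5
                have hc1 := Finsupp.le_def.mp hle 1
                simp [ee3, Finsupp.single_apply] at h5 hc1
                exact Or.inr (Or.inr ⟨h5, hc1⟩)
            have goal' : (1 ≤ d 0 ∧ 1 ≤ d 1 ∧ 1 ≤ d 2) ∨ (1 ≤ d 2 ∧ 1 ≤ d 3 ∧ 1 ≤ d 4) ∨
                (1 ≤ d 4 ∧ 1 ≤ d 5 ∧ 1 ≤ d 1) := by omega
            rcases goal' with ⟨g0, g1, g2⟩ | ⟨g0, g1, g2⟩ | ⟨g0, g1, g2⟩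
            · exact ⟨ee1, by simp [ESet], by
                rw [Finsupp.le_def]; intro j; fin_cases j <;>
                  simp [ee1, Finsupp.single_apply] <;> omega⟩
            · exact ⟨ee2, by simp [ESet], by
                rw [Finsupp.le_def]; intro j; fin_cases j <;>
                  simp [ee2, Finsupp.single_apply] <;> omega⟩
            · exact ⟨ee3, by simp [ESet], by
                rw [Finsupp.le_def]; intro j; fin_cases j <;>
                  simp [ee3, Finsupp.single_apply] <;> omega⟩
          have h1p : (1 : MvPolynomial (Fin 6) k) ∈ p := (hmem 1).mpr (by simpa using hr)
          exact hp.ne_top ((Ideal.eq_top_iff_one _).mpr h1p)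
        · exact ⟨4, h4, hm4⟩
      · exact ⟨2, h2, hm2⟩
    · exact ⟨1, h1, hm1⟩
  obtain ⟨i, hip, him⟩ := hex
  rw [Ideal.mem_comap]
  have hmap : algebraMap _ (Localization p.primeCompl) ((X i : MvPolynomial (Fin 6) k) *
      monomial eM 1) ∈ Ideal.map (algebraMap _ (Localization p.primeCompl)) ((Iid k) ^ 2) :=
    Ideal.mem_map_of_mem _ him
  rw [map_mul] at hmap
  obtain ⟨u, hu⟩ := IsLocalization.map_units (Localization p.primeCompl)
    (⟨X i, hip⟩ : p.primeCompl)
  have heq : algebraMap _ (Localization p.primeCompl) (monomial eM (1 : k)) =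
      ↑u⁻¹ * (algebraMap _ (Localization p.primeCompl) (X i : MvPolynomial (Fin 6) k) *
        algebraMap _ (Localization p.primeCompl) (monomial eM (1 : k))) := by
    rw [← hu, Units.inv_mul_cancel_left]
  rw [heq]
  exact Ideal.mul_mem_left _ _ hmap

end

section
variable {k : Type*} [Field k]

lemma m_not_mem_sq : monomial eM (1 : k) ∉ (Iid k) ^ 2 := by
  classical
  rw [Isq, mem_ideal_span_monomial_image]
  intro h
  obtain ⟨e, he, hle⟩ := h eM (by
    rw [support_monomial, if_neg one_ne_zero, Finset.mem_singleton])
  simp only [E2Set, Set.mem_insert_iff, Set.mem_singleton_iff] at he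
  rcases he with rfl | rfl | rfl | rfl | rfl | rfl
  · have := Finsupp.le_def.mp hle 0
    simp [ee1, eM, Finsupp.single_apply] at this
  · have := Finsupp.le_def.mp hle 2
    simp [ee1, ee2, eM, Finsupp.single_apply] at this
  · have := Finsupp.le_def.mp hle 1
    simp [ee1, ee3, eM, Finsupp.single_apply] at this
  · have := Finsupp.le_def.mp hle 2
    simp [ee2, eM, Finsupp.single_apply] at this
  · have := Finsupp.le_def.mp hle 4
    simp [ee2, ee3, eM, Finsupp.single_apply] at this
  · have := Finsupp.le_def.mp hle 4
    simp [ee3, eM, Finsupp.single_apply] at this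

lemma hw2_gen (T : Finset (Fin 6)) (h1 : 2 ≤ ∑ i ∈ T, (ee1 + ee1) i)
    (h2 : 2 ≤ ∑ i ∈ T, (ee1 + ee2) i) (h3 : 2 ≤ ∑ i ∈ T, (ee1 + ee3) i)
    (h4 : 2 ≤ ∑ i ∈ T, (ee2 + ee2) i) (h5 : 2 ≤ ∑ i ∈ T, (ee2 + ee3) i)
    (h6 : 2 ≤ ∑ i ∈ T, (ee3 + ee3) i) : ∀ e ∈ E2Set, 2 ≤ ∑ i ∈ T, e i := by
  intro e he
  simp only [E2Set, Set.mem_insert_iff, Set.mem_singleton_iff] at he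
  rcases he with rfl | rfl | rfl | rfl | rfl | rfl <;> assumption

set_option maxHeartbeats 800000 in
lemma hw_12 : ∀ e ∈ E2Set, 2 ≤ ∑ i ∈ ({1,2} : Finset (Fin 6)), e i :=
  hw2_gen _
    (by simp [ee1, ee2, ee3, Finset.sum_insert, Finset.sum_pair, Finsupp.single_apply])
    (by simp [ee1, ee2, ee3, Finset.sum_insert, Finset.sum_pair, Finsupp.single_apply])
    (by simp [ee1, ee2, ee3, Finset.sum_insert, Finset.sum_pair, Finsupp.single_apply])
    (by simp [ee1, ee2, ee3, Finset.sum_insert, Finset.sum_pair, Finsupp.single_apply])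
    (by simp [ee1, ee2, ee3, Finset.sum_insert, Finset.sum_pair, Finsupp.single_apply])
    (by simp [ee1, ee2, ee3, Finset.sum_insert, Finset.sum_pair, Finsupp.single_apply])

set_option maxHeartbeats 800000 in
lemma hw_24 : ∀ e ∈ E2Set, 2 ≤ ∑ i ∈ ({2,4} : Finset (Fin 6)), e i :=
  hw2_gen _
    (by simp [ee1, ee2, ee3, Finset.sum_insert, Finset.sum_pair, Finsupp.single_apply])
    (by simp [ee1, ee2, ee3, Finset.sum_insert, Finset.sum_pair, Finsupp.single_apply])
    (by simp [ee1, ee2, ee3, Finset.sum_insert, Finset.sum_pair, Finsupp.single_apply])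
    (by simp [ee1, ee2, ee3, Finset.sum_insert, Finset.sum_pair, Finsupp.single_apply])
    (by simp [ee1, ee2, ee3, Finset.sum_insert, Finset.sum_pair, Finsupp.single_apply])
    (by simp [ee1, ee2, ee3, Finset.sum_insert, Finset.sum_pair, Finsupp.single_apply])

set_option maxHeartbeats 800000 in
lemma hw_14 : ∀ e ∈ E2Set, 2 ≤ ∑ i ∈ ({1,4} : Finset (Fin 6)), e i :=
  hw2_gen _
    (by simp [ee1, ee2, ee3, Finset.sum_insert, Finset.sum_pair, Finsupp.single_apply])
    (by simp [ee1, ee2, ee3, Finset.sum_insert, Finset.sum_pair, Finsupp.single_apply])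
    (by simp [ee1, ee2, ee3, Finset.sum_insert, Finset.sum_pair, Finsupp.single_apply])
    (by simp [ee1, ee2, ee3, Finset.sum_insert, Finset.sum_pair, Finsupp.single_apply])
    (by simp [ee1, ee2, ee3, Finset.sum_insert, Finset.sum_pair, Finsupp.single_apply])
    (by simp [ee1, ee2, ee3, Finset.sum_insert, Finset.sum_pair, Finsupp.single_apply])

set_option maxHeartbeats 800000 in
lemma hw_25 : ∀ e ∈ E2Set, 2 ≤ ∑ i ∈ ({2,5} : Finset (Fin 6)), e i :=
  hw2_gen _
    (by simp [ee1, ee2, ee3, Finset.sum_insert, Finset.sum_pair, Finsupp.single_apply])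
    (by simp [ee1, ee2, ee3, Finset.sum_insert, Finset.sum_pair, Finsupp.single_apply])
    (by simp [ee1, ee2, ee3, Finset.sum_insert, Finset.sum_pair, Finsupp.single_apply])
    (by simp [ee1, ee2, ee3, Finset.sum_insert, Finset.sum_pair, Finsupp.single_apply])
    (by simp [ee1, ee2, ee3, Finset.sum_insert, Finset.sum_pair, Finsupp.single_apply])
    (by simp [ee1, ee2, ee3, Finset.sum_insert, Finset.sum_pair, Finsupp.single_apply])

set_option maxHeartbeats 800000 in
lemma hw_04 : ∀ e ∈ E2Set, 2 ≤ ∑ i ∈ ({0,4} : Finset (Fin 6)), e i :=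
  hw2_gen _
    (by simp [ee1, ee2, ee3, Finset.sum_insert, Finset.sum_pair, Finsupp.single_apply])
    (by simp [ee1, ee2, ee3, Finset.sum_insert, Finset.sum_pair, Finsupp.single_apply])
    (by simp [ee1, ee2, ee3, Finset.sum_insert, Finset.sum_pair, Finsupp.single_apply])
    (by simp [ee1, ee2, ee3, Finset.sum_insert, Finset.sum_pair, Finsupp.single_apply])
    (by simp [ee1, ee2, ee3, Finset.sum_insert, Finset.sum_pair, Finsupp.single_apply])
    (by simp [ee1, ee2, ee3, Finset.sum_insert, Finset.sum_pair, Finsupp.single_apply])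

set_option maxHeartbeats 800000 in
lemma hw_13 : ∀ e ∈ E2Set, 2 ≤ ∑ i ∈ ({1,3} : Finset (Fin 6)), e i :=
  hw2_gen _
    (by simp [ee1, ee2, ee3, Finset.sum_insert, Finset.sum_pair, Finsupp.single_apply])
    (by simp [ee1, ee2, ee3, Finset.sum_insert, Finset.sum_pair, Finsupp.single_apply])
    (by simp [ee1, ee2, ee3, Finset.sum_insert, Finset.sum_pair, Finsupp.single_apply])
    (by simp [ee1, ee2, ee3, Finset.sum_insert, Finset.sum_pair, Finsupp.single_apply])
    (by simp [ee1, ee2, ee3, Finset.sum_insert, Finset.sum_pair, Finsupp.single_apply])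
    (by simp [ee1, ee2, ee3, Finset.sum_insert, Finset.sum_pair, Finsupp.single_apply])

set_option maxHeartbeats 800000 in
lemma hw_035 : ∀ e ∈ E2Set, 2 ≤ ∑ i ∈ ({0,3,5} : Finset (Fin 6)), e i :=
  hw2_gen _
    (by simp [ee1, ee2, ee3, Finset.sum_insert, Finset.sum_pair, Finsupp.single_apply])
    (by simp [ee1, ee2, ee3, Finset.sum_insert, Finset.sum_pair, Finsupp.single_apply])
    (by simp [ee1, ee2, ee3, Finset.sum_insert, Finset.sum_pair, Finsupp.single_apply])
    (by simp [ee1, ee2, ee3, Finset.sum_insert, Finset.sum_pair, Finsupp.single_apply])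
    (by simp [ee1, ee2, ee3, Finset.sum_insert, Finset.sum_pair, Finsupp.single_apply])
    (by simp [ee1, ee2, ee3, Finset.sum_insert, Finset.sum_pair, Finsupp.single_apply])

set_option maxHeartbeats 1600000 in
lemma symb_le_sq_sup :
    symbolicPower (Iid k) 2 ≤ (Iid k) ^ 2 ⊔ Ideal.span {monomial eM (1 : k)} := by
  intro f hf
  have t12 := contract {1,2} assoc_12 hw_12 f hf
  have t24 := contract {2,4} assoc_24 hw_24 f hf
  have t14 := contract {1,4} assoc_14 hw_14 f hf
  have t25 := contract {2,5} assoc_25 hw_25 f hf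
  have t04 := contract {0,4} assoc_04 hw_04 f hf
  have t13 := contract {1,3} assoc_13 hw_13 f hf
  have t035 := contract {0,3,5} assoc_035 hw_035 f hf

  have hmono : ∀ d ∈ f.support, monomial d (coeff d f) ∈
      (Iid k) ^ 2 ⊔ Ideal.span {monomial eM (1 : k)} := by
    intro d hd
    have s12 := t12 d hd; rw [Finset.sum_pair (by decide)] at s12
    have s24 := t24 d hd; rw [Finset.sum_pair (by decide)] at s24
    have s14 := t14 d hd; rw [Finset.sum_pair (by decide)] at s14
    have s25 := t25 d hd; rw [Finset.sum_pair (by decide)] at s25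
    have s04 := t04 d hd; rw [Finset.sum_pair (by decide)] at s04
    have s13 := t13 d hd; rw [Finset.sum_pair (by decide)] at s13
    have s035 := t035 d hd
    rw [show ({0,3,5} : Finset (Fin 6)) = insert 0 {3,5} from rfl,
      Finset.sum_insert (by decide), Finset.sum_pair (by decide)] at s035
    have goal' : (2 ≤ d 0 ∧ 2 ≤ d 1 ∧ 2 ≤ d 2) ∨
        (1 ≤ d 0 ∧ 1 ≤ d 1 ∧ 2 ≤ d 2 ∧ 1 ≤ d 3 ∧ 1 ≤ d 4) ∨
        (1 ≤ d 0 ∧ 2 ≤ d 1 ∧ 1 ≤ d 2 ∧ 1 ≤ d 4 ∧ 1 ≤ d 5) ∨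
        (2 ≤ d 2 ∧ 2 ≤ d 3 ∧ 2 ≤ d 4) ∨
        (1 ≤ d 1 ∧ 1 ≤ d 2 ∧ 1 ≤ d 3 ∧ 2 ≤ d 4 ∧ 1 ≤ d 5) ∨
        (2 ≤ d 1 ∧ 2 ≤ d 4 ∧ 2 ≤ d 5) ∨
        (1 ≤ d 0 ∧ 1 ≤ d 1 ∧ 1 ≤ d 2 ∧ 1 ≤ d 3 ∧ 1 ≤ d 4 ∧ 1 ≤ d 5) := by omega
    have memsq : ∀ e' ∈ E2Set, e' ≤ d → monomial d (coeff d f) ∈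
        (Iid k) ^ 2 ⊔ Ideal.span {monomial eM (1 : k)} := by
      intro e' he' hle
      apply Ideal.mem_sup_left
      have : monomial d (coeff d f) = monomial e' (1 : k) * monomial (d - e') (coeff d f) := by
        rw [monomial_mul, one_mul, add_tsub_cancel_of_le hle]
      rw [this, Isq]
      exact Ideal.mul_mem_right _ _ (Ideal.subset_span ⟨e', he', rfl⟩)
    rcases goal' with h | h | h | h | h | h | h
    · exact memsq (ee1 + ee1) (by simp [E2Set]) (by
        rw [Finsupp.le_def]; intro j; fin_cases j <;>
          simp [ee1, Finsupp.single_apply] <;> omega)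
    · exact memsq (ee1 + ee2) (by simp [E2Set]) (by
        rw [Finsupp.le_def]; intro j; fin_cases j <;>
          simp [ee1, ee2, Finsupp.single_apply] <;> omega)
    · exact memsq (ee1 + ee3) (by simp [E2Set]) (by
        rw [Finsupp.le_def]; intro j; fin_cases j <;>
          simp [ee1, ee3, Finsupp.single_apply] <;> omega)
    · exact memsq (ee2 + ee2) (by simp [E2Set]) (by
        rw [Finsupp.le_def]; intro j; fin_cases j <;>
          simp [ee2, Finsupp.single_apply] <;> omega)
    · exact memsq (ee2 + ee3) (by simp [E2Set]) (by
        rw [Finsupp.le_def]; intro j; fin_cases j <;>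
          simp [ee2, ee3, Finsupp.single_apply] <;> omega)
    · exact memsq (ee3 + ee3) (by simp [E2Set]) (by
        rw [Finsupp.le_def]; intro j; fin_cases j <;>
          simp [ee3, Finsupp.single_apply] <;> omega)
    · apply Ideal.mem_sup_right
      rw [Ideal.mem_span_singleton]
      refine ⟨monomial (d - eM) (coeff d f), ?_⟩
      rw [monomial_mul, one_mul, add_tsub_cancel_of_le (by
        rw [Finsupp.le_def]; intro j; fin_cases j <;>
          simp [eM, Finsupp.single_apply] <;> omega)]
  have hsum := Submodule.sum_mem ((Iid k) ^ 2 ⊔ Ideal.span {monomial eM (1 : k)}) hmono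
  rwa [← as_sum f] at hsum

lemma sq_le_symb : (Iid k) ^ 2 ≤ symbolicPower (Iid k) 2 := by
  rw [symbolicPower]
  apply le_sInf
  rintro J ⟨p, hp, hass, rfl⟩
  exact Ideal.le_comap_map

end


/-- for the bad hypergraph of length 3 with edge ideal
I = (x₁x₂x₃, x₃x₄x₅, x₅x₆x₂), the product of all six variables lies in I⁽²⁾ but
not in I², and I⁽²⁾ = I² + (x₁x₂x₃x₄x₅x₆). -/
theorem stmt5 {k : Type*} [Field k] :
    let I : Ideal (MvPolynomial (Fin 6) k) :=
      Ideal.span {X 0 * X 1 * X 2, X 2 * X 3 * X 4, X 4 * X 5 * X 1}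
    let m : MvPolynomial (Fin 6) k := X 0 * X 1 * X 2 * X 3 * X 4 * X 5
    m ∈ symbolicPower I 2 ∧ m ∉ I ^ 2 ∧
      symbolicPower I 2 = I ^ 2 ⊔ Ideal.span {m} := by
  intro I m
  have hI : I = Iid k := IEq
  have hm : m = monomial eM 1 := XM
  rw [hI, hm]
  refine ⟨m_mem_symb, m_not_mem_sq, ?_⟩
  apply le_antisymm symb_le_sq_sup
  exact sup_le sq_le_symb (by
    rw [Ideal.span_le, Set.singleton_subset_iff]
    exact m_mem_symb)
end

section
/- Let H be a simple 3-uniform 3-partite hypergraph with edge ideal I = I(H). If I^(2) ≠ I^2, then H contains a subhypergraph isomorphic to the bad hypergraph of length 3, i.e., there exist three hyperedges E_1, E_2, E_3 of H that pairwise intersect in exactly one vertex, with the three intersection vertices E_1∩E_2, E_2∩E_3, E_1∩E_3 pairwise distinct. -/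
open MvPolynomial

/-- three hyperedges forming a bad subhypergraph of length 3: pairwise distinct,
pairwise intersecting in exactly one vertex, with the three intersection vertices
pairwise distinct. -/
def BadTriple {V : Type*} [DecidableEq V] (E : Finset (Finset V))
    (e₁ e₂ e₃ : Finset V) : Prop :=
  e₁ ∈ E ∧ e₂ ∈ E ∧ e₃ ∈ E ∧ e₁ ≠ e₂ ∧ e₂ ≠ e₃ ∧ e₁ ≠ e₃ ∧
  (e₁ ∩ e₂).card = 1 ∧ (e₂ ∩ e₃).card = 1 ∧ (e₁ ∩ e₃).card = 1 ∧
  e₁ ∩ e₂ ≠ e₂ ∩ e₃ ∧ e₂ ∩ e₃ ≠ e₁ ∩ e₃ ∧ e₁ ∩ e₂ ≠ e₁ ∩ e₃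

section SP6Aux

open Finset

set_option linter.unusedSectionVars false

lemma fin3_aux : ∀ a b c d : Fin 3, a ≠ b → c ≠ a → c ≠ b → d ≠ a → d ≠ b → c = d := by decide

lemma comb {V : Type*} [Fintype V] [DecidableEq V]
    (E : Finset (Finset V)) (huniform : ∀ e ∈ E, e.card = 3)
    (Xp : Fin 3 → Finset V)
    (hcover : ∀ v : V, ∃ i, v ∈ Xp i)
    (hpartite : ∀ e ∈ E, ∀ i, (e ∩ Xp i).card = 1)
    (hnobad : ¬ ∃ e₁ e₂ e₃ : Finset V, BadTriple E e₁ e₂ e₃)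
    (a : V → ℕ)
    (hcov : ∀ C : Finset V, (∀ e ∈ E, ∃ v ∈ e, v ∈ C) → 2 ≤ ∑ v ∈ C, a v) :
    ∃ e₁ ∈ E, ∃ e₂ ∈ E, ∀ v,
      (if v ∈ e₁ then 1 else 0) + (if v ∈ e₂ then 1 else 0) ≤ a v := by
  classical
  by_contra hno
  push_neg at hno
  -- hno : ∀ e₁ ∈ E, ∀ e₂ ∈ E, ∃ v, a v < ite + ite
  set S : Finset V := univ.filter (fun v => 1 ≤ a v) with hS
  set F : Finset (Finset V) := E.filter (fun e => e ⊆ S) with hF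
  have hFE : ∀ e ∈ F, e ∈ E := fun e he => (Finset.mem_filter.mp he).1
  have hFS : ∀ e ∈ F, e ⊆ S := fun e he => (Finset.mem_filter.mp he).2
  have hSmem : ∀ v ∈ S, 1 ≤ a v := fun v hv => (Finset.mem_filter.mp hv).2
  have hSout : ∀ v, v ∉ S → a v = 0 := by
    intro v hv
    by_contra h
    exact hv (Finset.mem_filter.mpr ⟨Finset.mem_univ v, by omega⟩)
  -- part function
  have pt : ∀ v : V, Fin 3 := fun v => (hcover v).choose
  set pt : V → Fin 3 := fun v => (hcover v).choose with hptdef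
  have hpt : ∀ v, v ∈ Xp (pt v) := fun v => (hcover v).choose_spec
  have ptInj : ∀ e ∈ E, ∀ u ∈ e, ∀ v ∈ e, pt u = pt v → u = v := by
    intro e he u hu v hv huv
    have h1 : (e ∩ Xp (pt u)).card = 1 := hpartite e he (pt u)
    have hu' : u ∈ e ∩ Xp (pt u) := Finset.mem_inter.mpr ⟨hu, hpt u⟩
    have hv' : v ∈ e ∩ Xp (pt u) := Finset.mem_inter.mpr ⟨hv, huv ▸ hpt v⟩
    exact Finset.card_le_one.mp (le_of_eq h1) u hu' v hv'
  -- pair fact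
  have pairN : ∀ e ∈ F, ∀ f ∈ F, ∃ v, v ∈ e ∩ f ∧ a v = 1 := by
    intro e he f hf
    obtain ⟨v, hv⟩ := hno e (hFE e he) f (hFE f hf)
    by_cases hve : v ∈ e <;> by_cases hvf : v ∈ f
    · refine ⟨v, Finset.mem_inter.mpr ⟨hve, hvf⟩, ?_⟩
      have := hSmem v (hFS e he hve)
      simp [hve, hvf] at hv; omega
    · have := hSmem v (hFS e he hve); simp [hve, hvf] at hv; omega
    · have := hSmem v (hFS f hf hvf); simp [hve, hvf] at hv; omega
    · simp [hve, hvf] at hv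
  -- transversal contradiction
  have contraT : ∀ u, a u = 1 → (∀ e ∈ F, u ∈ e) → False := by
    intro u hu hall
    have hcovC : ∀ e ∈ E, ∃ v ∈ e, v ∈ insert u (univ \ S) := by
      intro e he
      by_cases heF : e ∈ F
      · exact ⟨u, hall e heF, Finset.mem_insert_self _ _⟩
      · have : ¬ e ⊆ S := fun h => heF (Finset.mem_filter.mpr ⟨he, h⟩)
        obtain ⟨v, hve, hvS⟩ := Finset.not_subset.mp this
        exact ⟨v, hve, Finset.mem_insert_of_mem (Finset.mem_sdiff.mpr ⟨Finset.mem_univ v, hvS⟩)⟩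
    have h2 := hcov _ hcovC
    have huS : u ∈ S := Finset.mem_filter.mpr ⟨Finset.mem_univ u, by omega⟩
    rw [Finset.sum_insert (by simp [huS])] at h2
    have : ∑ v ∈ univ \ S, a v = 0 :=
      Finset.sum_eq_zero (fun v hv => hSout v (Finset.mem_sdiff.mp hv).2)
    omega
  -- F is nonempty
  have hF1 : F.Nonempty := by
    by_contra h
    rw [Finset.not_nonempty_iff_eq_empty] at h
    have hcovC : ∀ e ∈ E, ∃ v ∈ e, v ∈ univ \ S := by
      intro e he
      have heF : e ∉ F := by rw [h]; exact Finset.notMem_empty e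
      have : ¬ e ⊆ S := fun hsub => heF (Finset.mem_filter.mpr ⟨he, hsub⟩)
      obtain ⟨v, hve, hvS⟩ := Finset.not_subset.mp this
      exact ⟨v, hve, Finset.mem_sdiff.mpr ⟨Finset.mem_univ v, hvS⟩⟩
    have h2 := hcov _ hcovC
    have : ∑ v ∈ univ \ S, a v = 0 :=
      Finset.sum_eq_zero (fun v hv => hSout v (Finset.mem_sdiff.mp hv).2)
    omega
  have hcard3 : ∀ e ∈ F, e.card = 3 := fun e he => huniform e (hFE e he)
  have hcapcard : ∀ e ∈ E, ∀ f ∈ E, e ≠ f → (e ∩ f).card ≤ 2 := by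
    intro e he f hf hef
    by_contra h
    push_neg at h
    have h3 : (e ∩ f).card = 3 := le_antisymm
      (le_trans (Finset.card_le_card (Finset.inter_subset_left)) (le_of_eq (huniform e he))) h
    have : e ∩ f = e := Finset.eq_of_subset_of_card_le Finset.inter_subset_left
      (by rw [h3, huniform e he])
    have hef' : e ⊆ f := by rw [← this]; exact Finset.inter_subset_right
    exact hef (Finset.eq_of_subset_of_card_le hef'
      (by rw [huniform e he, huniform f hf]))
  -- two-shared lemma
  have L2share : ∀ e ∈ F, ∀ f ∈ F, e ≠ f → (e ∩ f).card = 2 →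
      ∀ g ∈ F, ∃ v ∈ e ∩ f, v ∈ g := by
    intro e he f hf hef hc2 g hg
    obtain ⟨z1, hz1⟩ : ∃ z1, e \ (e ∩ f) = {z1} := by
      rw [← Finset.card_eq_one, Finset.card_sdiff_of_subset Finset.inter_subset_left, hc2, hcard3 e he]
    obtain ⟨z2, hz2⟩ : ∃ z2, f \ (e ∩ f) = {z2} := by
      rw [← Finset.card_eq_one, Finset.card_sdiff_of_subset Finset.inter_subset_right, hc2, hcard3 f hf]
    have hz1e : z1 ∈ e := (Finset.mem_sdiff.mp (hz1 ▸ Finset.mem_singleton_self z1)).1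
    have hz1nf : z1 ∉ e ∩ f := (Finset.mem_sdiff.mp (hz1 ▸ Finset.mem_singleton_self z1)).2
    have hz2f : z2 ∈ f := (Finset.mem_sdiff.mp (hz2 ▸ Finset.mem_singleton_self z2)).1
    have hz2ne : z2 ∉ e ∩ f := (Finset.mem_sdiff.mp (hz2 ▸ Finset.mem_singleton_self z2)).2
    obtain ⟨x, y, hxy, hxyef⟩ := Finset.card_eq_two.mp hc2
    have hx : x ∈ e ∩ f := hxyef ▸ Finset.mem_insert_self x {y}
    have hy : y ∈ e ∩ f := hxyef ▸ Finset.mem_insert_of_mem (Finset.mem_singleton_self y)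
    have hxe := (Finset.mem_inter.mp hx).1
    have hxf := (Finset.mem_inter.mp hx).2
    have hye := (Finset.mem_inter.mp hy).1
    have hyf := (Finset.mem_inter.mp hy).2
    have hptz : pt z1 = pt z2 := by
      have hEe := hFE e he
      have hEf := hFE f hf
      refine fin3_aux (pt x) (pt y) (pt z1) (pt z2) ?_ ?_ ?_ ?_ ?_
      · exact fun h => hxy (ptInj e hEe x hxe y hye h)
      · exact fun h => hz1nf (ptInj e hEe z1 hz1e x hxe h ▸ hx)
      · exact fun h => hz1nf (ptInj e hEe z1 hz1e y hye h ▸ hy)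
      · exact fun h => hz2ne (ptInj f hEf z2 hz2f x hxf h ▸ hx)
      · exact fun h => hz2ne (ptInj f hEf z2 hz2f y hyf h ▸ hy)
    by_contra hcon
    push_neg at hcon
    obtain ⟨v1, hv1, _⟩ := pairN g hg e he
    obtain ⟨v2, hv2, _⟩ := pairN g hg f hf
    have hv1g := (Finset.mem_inter.mp hv1).1
    have hv1e := (Finset.mem_inter.mp hv1).2
    have hz1g : z1 ∈ g := by
      have hmem : v1 ∈ e \ (e ∩ f) := Finset.mem_sdiff.mpr ⟨hv1e, fun h => hcon v1 h hv1g⟩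
      rw [hz1, Finset.mem_singleton] at hmem
      exact hmem ▸ hv1g
    have hz2g : z2 ∈ g := by
      have hv2g := (Finset.mem_inter.mp hv2).1
      have hv2f := (Finset.mem_inter.mp hv2).2
      have hmem : v2 ∈ f \ (e ∩ f) := Finset.mem_sdiff.mpr ⟨hv2f, fun h => hcon v2 h hv2g⟩
      rw [hz2, Finset.mem_singleton] at hmem
      exact hmem ▸ hv2g
    have heq : z1 = z2 := ptInj g (hFE g hg) z1 hz1g z2 hz2g hptz
    subst heq
    exact hz1nf (Finset.mem_inter.mpr ⟨hz1e, hz2f⟩)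
  -- main case analysis
  obtain ⟨e₀, he₀⟩ := hF1
  by_cases hsing : ∃ e ∈ F, ∃ f ∈ F, e ≠ f ∧ (e ∩ f).card = 2
  · -- Case 1 : some pair shares two vertices
    obtain ⟨e, heF, f, hfF, hef, hc2⟩ := hsing
    obtain ⟨z, hz⟩ : ∃ z, e \ (e ∩ f) = {z} := by
      rw [← Finset.card_eq_one, Finset.card_sdiff_of_subset Finset.inter_subset_left, hc2, hcard3 e heF]
    obtain ⟨z', hz'⟩ : ∃ z', f \ (e ∩ f) = {z'} := by
      rw [← Finset.card_eq_one, Finset.card_sdiff_of_subset Finset.inter_subset_right, hc2, hcard3 f hfF]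
    have hze : z ∈ e := (Finset.mem_sdiff.mp (hz ▸ Finset.mem_singleton_self z)).1
    have hznef : z ∉ e ∩ f := (Finset.mem_sdiff.mp (hz ▸ Finset.mem_singleton_self z)).2
    have hz'f : z' ∈ f := (Finset.mem_sdiff.mp (hz' ▸ Finset.mem_singleton_self z')).1
    have hz'nef : z' ∉ e ∩ f := (Finset.mem_sdiff.mp (hz' ▸ Finset.mem_singleton_self z')).2
    have hznf : z ∉ f := fun c => hznef (Finset.mem_inter.mpr ⟨hze, c⟩)
    have hz'ne : z' ∉ e := fun c => hz'nef (Finset.mem_inter.mpr ⟨c, hz'f⟩)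
    have hzz' : z ≠ z' := fun c => hz'ne (c ▸ hze)
    obtain ⟨x₀, y₀, hxy₀, hpair₀⟩ := Finset.card_eq_two.mp hc2
    have hptz : pt z = pt z' := by
      have hx : x₀ ∈ e ∩ f := hpair₀ ▸ Finset.mem_insert_self x₀ {y₀}
      have hy : y₀ ∈ e ∩ f := hpair₀ ▸ Finset.mem_insert_of_mem (Finset.mem_singleton_self y₀)
      have hEe := hFE e heF
      have hEf := hFE f hfF
      refine fin3_aux (pt x₀) (pt y₀) (pt z) (pt z') ?_ ?_ ?_ ?_ ?_
      · exact fun h => hxy₀ (ptInj e hEe x₀ (Finset.mem_inter.mp hx).1 y₀ (Finset.mem_inter.mp hy).1 h)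
      · exact fun h => hznef (ptInj e hEe z hze x₀ (Finset.mem_inter.mp hx).1 h ▸ hx)
      · exact fun h => hznef (ptInj e hEe z hze y₀ (Finset.mem_inter.mp hy).1 h ▸ hy)
      · exact fun h => hz'nef (ptInj f hEf z' hz'f x₀ (Finset.mem_inter.mp hx).2 h ▸ hx)
      · exact fun h => hz'nef (ptInj f hEf z' hz'f y₀ (Finset.mem_inter.mp hy).2 h ▸ hy)
    have aux : ∀ x' y', e ∩ f = {x', y'} → x' ≠ y' → a x' = 1 → False := by
      intro x' y' hpair hxy hax
      have hxef : x' ∈ e ∩ f := hpair ▸ Finset.mem_insert_self x' {y'}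
      have hyef : y' ∈ e ∩ f := hpair ▸ Finset.mem_insert_of_mem (Finset.mem_singleton_self y')
      have hxe := (Finset.mem_inter.mp hxef).1
      have hxf := (Finset.mem_inter.mp hxef).2
      have hye := (Finset.mem_inter.mp hyef).1
      have hyf := (Finset.mem_inter.mp hyef).2
      have hzx : z ≠ x' := fun c => hznef (c ▸ hxef)
      have hzy : z ≠ y' := fun c => hznef (c ▸ hyef)
      have hz'x : z' ≠ x' := fun c => hz'nef (c ▸ hxef)
      have hz'y : z' ≠ y' := fun c => hz'nef (c ▸ hyef)
      have helt_e : ∀ v ∈ e, v = x' ∨ v = y' ∨ v = z := by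
        intro v hv
        by_cases hvm : v ∈ e ∩ f
        · rw [hpair, Finset.mem_insert, Finset.mem_singleton] at hvm; tauto
        · have : v ∈ e \ (e ∩ f) := Finset.mem_sdiff.mpr ⟨hv, hvm⟩
          rw [hz, Finset.mem_singleton] at this; tauto
      have helt_f : ∀ v ∈ f, v = x' ∨ v = y' ∨ v = z' := by
        intro v hv
        by_cases hvm : v ∈ e ∩ f
        · rw [hpair, Finset.mem_insert, Finset.mem_singleton] at hvm; tauto
        · have : v ∈ f \ (e ∩ f) := Finset.mem_sdiff.mpr ⟨hv, hvm⟩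
          rw [hz', Finset.mem_singleton] at this; tauto
      have hmeet : ∀ g ∈ F, x' ∈ g ∨ y' ∈ g := by
        intro g hg
        obtain ⟨v, hv, hvg⟩ := L2share e heF f hfF hef hc2 g hg
        rw [hpair, Finset.mem_insert, Finset.mem_singleton] at hv
        rcases hv with rfl | rfl
        · exact Or.inl hvg
        · exact Or.inr hvg
      obtain ⟨h, hhF, hxh⟩ : ∃ h ∈ F, x' ∉ h := by
        by_contra hc; push_neg at hc; exact contraT x' hax hc
      have hyh : y' ∈ h := (hmeet h hhF).resolve_left hxh
      have hay : a y' = 1 := by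
        by_contra hay
        have hay2 : 2 ≤ a y' := by have := hSmem y' (hFS e heF hye); omega
        obtain ⟨v1, hv1, hav1⟩ := pairN h hhF e heF
        have hv1h := (Finset.mem_inter.mp hv1).1
        have hv1e := (Finset.mem_inter.mp hv1).2
        have hzh : z ∈ h := by
          rcases helt_e v1 hv1e with rfl | rfl | rfl
          · exact absurd hv1h hxh
          · omega
          · exact hv1h
        obtain ⟨v2, hv2, hav2⟩ := pairN h hhF f hfF
        have hv2h := (Finset.mem_inter.mp hv2).1
        have hv2f := (Finset.mem_inter.mp hv2).2
        have hz'h : z' ∈ h := by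
          rcases helt_f v2 hv2f with rfl | rfl | rfl
          · exact absurd hv2h hxh
          · omega
          · exact hv2h
        exact hzz' (ptInj h (hFE h hhF) z hzh z' hz'h hptz)
      obtain ⟨h', hh'F, hyh'⟩ : ∃ h' ∈ F, y' ∉ h' := by
        by_contra hc; push_neg at hc; exact contraT y' hay hc
      have hxh' : x' ∈ h' := (hmeet h' hh'F).resolve_right hyh'
      have hhe : h ≠ e := fun c => hxh (c ▸ hxe)
      have hhf : h ≠ f := fun c => hxh (c ▸ hxf)
      have hh'e : h' ≠ e := fun c => hyh' (c ▸ hye)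
      have hh'f : h' ≠ f := fun c => hyh' (c ▸ hyf)
      have hhh' : h ≠ h' := fun c => hyh' (c ▸ hyh)
      by_cases hzh : z ∈ h
      · have heh : e ∩ h = {y', z} := by
          ext v
          simp only [Finset.mem_inter, Finset.mem_insert, Finset.mem_singleton]
          constructor
          · rintro ⟨hve, hvh⟩
            rcases helt_e v hve with rfl | rfl | rfl
            · exact absurd hvh hxh
            · exact Or.inl rfl
            · exact Or.inr rfl
          · rintro (rfl | rfl)
            · exact ⟨hye, hyh⟩
            · exact ⟨hze, hzh⟩
        have hcz : (e ∩ h).card = 2 := by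
          rw [heh]; exact Finset.card_pair (Ne.symm hzy)
        have hzh' : z ∈ h' := by
          obtain ⟨v, hv, hvh'⟩ := L2share e heF h hhF (Ne.symm hhe) hcz h' hh'F
          rw [heh, Finset.mem_insert, Finset.mem_singleton] at hv
          rcases hv with rfl | rfl
          · exact absurd hvh' hyh'
          · exact hvh'
        have hz'nh : z' ∉ h := fun c => hzz' (ptInj h (hFE h hhF) z hzh z' c hptz)
        have hz'nh' : z' ∉ h' := fun c => hzz' (ptInj h' (hFE h' hh'F) z hzh' z' c hptz)
        have hfh : f ∩ h = {y'} := by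
          ext v
          simp only [Finset.mem_inter, Finset.mem_singleton]
          constructor
          · rintro ⟨hvf, hvh⟩
            rcases helt_f v hvf with rfl | rfl | rfl
            · exact absurd hvh hxh
            · rfl
            · exact absurd hvh hz'nh
          · rintro rfl; exact ⟨hyf, hyh⟩
        have hfh' : f ∩ h' = {x'} := by
          ext v
          simp only [Finset.mem_inter, Finset.mem_singleton]
          constructor
          · rintro ⟨hvf, hvh'⟩
            rcases helt_f v hvf with rfl | rfl | rfl
            · rfl
            · exact absurd hvh' hyh'
            · exact absurd hvh' hz'nh'
          · rintro rfl; exact ⟨hxf, hxh'⟩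
        have hhh'int : h ∩ h' = {z} := by
          ext v
          simp only [Finset.mem_inter, Finset.mem_singleton]
          constructor
          · rintro ⟨hvh, hvh'⟩
            by_contra hvz
            have hvy : v ≠ y' := fun c => hyh' (c ▸ hvh')
            have hvx : v ≠ x' := fun c => hxh (c ▸ hvh)
            have hpv1 : pt v = pt x' := by
              refine fin3_aux (pt y') (pt z) (pt v) (pt x') ?_ ?_ ?_ ?_ ?_
              · exact fun c => hzy ((ptInj e (hFE e heF) y' hye z hze c).symm)
              · exact fun c => hvy (ptInj h (hFE h hhF) v hvh y' hyh c)
              · exact fun c => hvz (ptInj h (hFE h hhF) v hvh z hzh c)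
              · exact fun c => hxy (ptInj e (hFE e heF) x' hxe y' hye c)
              · exact fun c => hzx ((ptInj e (hFE e heF) x' hxe z hze c).symm)
            have hpv2 : pt v = pt y' := by
              refine fin3_aux (pt x') (pt z) (pt v) (pt y') ?_ ?_ ?_ ?_ ?_
              · exact fun c => hzx ((ptInj e (hFE e heF) x' hxe z hze c).symm)
              · exact fun c => hvx (ptInj h' (hFE h' hh'F) v hvh' x' hxh' c)
              · exact fun c => hvz (ptInj h' (hFE h' hh'F) v hvh' z hzh' c)
              · exact fun c => hxy ((ptInj e (hFE e heF) y' hye x' hxe c).symm)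
              · exact fun c => hzy ((ptInj e (hFE e heF) y' hye z hze c).symm)
            exact hxy (ptInj e (hFE e heF) x' hxe y' hye (hpv1 ▸ hpv2 ▸ rfl))
          · rintro rfl; exact ⟨hzh, hzh'⟩
        refine hnobad ⟨f, h, h', hFE f hfF, hFE h hhF, hFE h' hh'F, Ne.symm hhf, hhh',
          Ne.symm hh'f, ?_, ?_, ?_, ?_, ?_, ?_⟩
        · rw [hfh]; exact Finset.card_singleton _
        · rw [hhh'int]; exact Finset.card_singleton _
        · rw [hfh']; exact Finset.card_singleton _
        · rw [hfh, hhh'int]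
          exact fun c => hzy (Finset.singleton_injective c).symm
        · rw [hhh'int, hfh']
          exact fun c => hzx (Finset.singleton_injective c)
        · rw [hfh, hfh']
          exact fun c => hxy (Finset.singleton_injective c).symm
      · by_cases hzh' : z ∈ h'
        · have heh' : e ∩ h' = {x', z} := by
            ext v
            simp only [Finset.mem_inter, Finset.mem_insert, Finset.mem_singleton]
            constructor
            · rintro ⟨hve, hvh'⟩
              rcases helt_e v hve with rfl | rfl | rfl
              · exact Or.inl rfl
              · exact absurd hvh' hyh'
              · exact Or.inr rfl
            · rintro (rfl | rfl)
              · exact ⟨hxe, hxh'⟩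
              · exact ⟨hze, hzh'⟩
          have hcz' : (e ∩ h').card = 2 := by
            rw [heh']; exact Finset.card_pair (Ne.symm hzx)
          obtain ⟨v, hv, hvh⟩ := L2share e heF h' hh'F (Ne.symm hh'e) hcz' h hhF
          rw [heh', Finset.mem_insert, Finset.mem_singleton] at hv
          rcases hv with rfl | rfl
          · exact hxh hvh
          · exact hzh hvh
        · have heh : e ∩ h = {y'} := by
            ext v
            simp only [Finset.mem_inter, Finset.mem_singleton]
            constructor
            · rintro ⟨hve, hvh⟩
              rcases helt_e v hve with rfl | rfl | rfl
              · exact absurd hvh hxh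
              · rfl
              · exact absurd hvh hzh
            · rintro rfl; exact ⟨hye, hyh⟩
          have heh' : e ∩ h' = {x'} := by
            ext v
            simp only [Finset.mem_inter, Finset.mem_singleton]
            constructor
            · rintro ⟨hve, hvh'⟩
              rcases helt_e v hve with rfl | rfl | rfl
              · rfl
              · exact absurd hvh' hyh'
              · exact absurd hvh' hzh'
            · rintro rfl; exact ⟨hxe, hxh'⟩
          obtain ⟨u, hu, hau⟩ := pairN h hhF h' hh'F
          have huh := (Finset.mem_inter.mp hu).1
          have huh' := (Finset.mem_inter.mp hu).2
          have hux : u ≠ x' := fun c => hxh (c ▸ huh)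
          have huy : u ≠ y' := fun c => hyh' (c ▸ huh')
          by_cases hcu : (h ∩ h').card = 2
          · obtain ⟨v, hv, hve⟩ := L2share h hhF h' hh'F hhh' hcu e heF
            have hvh := (Finset.mem_inter.mp hv).1
            have hvh' := (Finset.mem_inter.mp hv).2
            rcases helt_e v hve with rfl | rfl | rfl
            · exact hxh hvh
            · exact hyh' hvh'
            · exact hzh hvh
          · have hcu1 : h ∩ h' = {u} := by
              have h1 : 1 ≤ (h ∩ h').card := Finset.card_pos.mpr ⟨u, hu⟩
              have h2 := hcapcard h (hFE h hhF) h' (hFE h' hh'F) hhh'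
              have : (h ∩ h').card = 1 := by omega
              obtain ⟨w, hw⟩ := Finset.card_eq_one.mp this
              rw [hw] at hu ⊢
              rw [Finset.mem_singleton] at hu
              rw [hu]
            refine hnobad ⟨e, h, h', hFE e heF, hFE h hhF, hFE h' hh'F, Ne.symm hhe, hhh',
              Ne.symm hh'e, ?_, ?_, ?_, ?_, ?_, ?_⟩
            · rw [heh]; exact Finset.card_singleton _
            · rw [hcu1]; exact Finset.card_singleton _
            · rw [heh']; exact Finset.card_singleton _
            · rw [heh, hcu1]
              exact fun c => huy (Finset.singleton_injective c).symm
            · rw [hcu1, heh']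
              exact fun c => hux (Finset.singleton_injective c)
            · rw [heh, heh']
              exact fun c => hxy (Finset.singleton_injective c).symm
    obtain ⟨v, hv, hav⟩ := pairN e heF f hfF
    rw [hpair₀, Finset.mem_insert, Finset.mem_singleton] at hv
    rcases hv with rfl | rfl
    · exact aux v y₀ hpair₀ hxy₀ hav
    · exact aux v x₀ (by rw [hpair₀, Finset.pair_comm]) (Ne.symm hxy₀) hav
  · -- Case 2 : all pairwise intersections are singletons
    push_neg at hsing
    by_cases hone : ∀ f ∈ F, f = e₀
    · obtain ⟨w, hw, haw⟩ := pairN e₀ he₀ e₀ he₀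
      have hwe : w ∈ e₀ := (Finset.mem_inter.mp hw).1
      exact contraT w haw (fun f hf => (hone f hf) ▸ hwe)
    · push_neg at hone
      obtain ⟨f, hfF, hfne⟩ := hone
      have singInt : ∀ g₁, g₁ ∈ F → ∀ g₂, g₂ ∈ F → g₁ ≠ g₂ → ∃ x, g₁ ∩ g₂ = {x} := by
        intro g₁ h₁ g₂ h₂ hne12
        have hle2 := hcapcard g₁ (hFE _ h₁) g₂ (hFE _ h₂) hne12
        have hne2 := hsing g₁ h₁ g₂ h₂ hne12
        obtain ⟨v, hv, _⟩ := pairN g₁ h₁ g₂ h₂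
        have h1 : 1 ≤ (g₁ ∩ g₂).card := Finset.card_pos.mpr ⟨v, hv⟩
        rw [← Finset.card_eq_one]; omega
      obtain ⟨x, hx⟩ := singInt e₀ he₀ f hfF (Ne.symm hfne)
      have hxe : x ∈ e₀ := (Finset.mem_inter.mp (hx ▸ Finset.mem_singleton_self x)).1
      have hxf : x ∈ f := (Finset.mem_inter.mp (hx ▸ Finset.mem_singleton_self x)).2
      have allx : ∀ g ∈ F, x ∈ g := by
        intro g hg
        by_contra hxg
        have hge : g ≠ e₀ := fun c => hxg (c ▸ hxe)
        have hgf : g ≠ f := fun c => hxg (c ▸ hxf)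
        obtain ⟨p, hp⟩ := singInt e₀ he₀ g hg (Ne.symm hge)
        obtain ⟨q, hq⟩ := singInt f hfF g hg (Ne.symm hgf)
        have hpe : p ∈ e₀ := (Finset.mem_inter.mp (hp ▸ Finset.mem_singleton_self p)).1
        have hpg : p ∈ g := (Finset.mem_inter.mp (hp ▸ Finset.mem_singleton_self p)).2
        have hqf : q ∈ f := (Finset.mem_inter.mp (hq ▸ Finset.mem_singleton_self q)).1
        have hqg : q ∈ g := (Finset.mem_inter.mp (hq ▸ Finset.mem_singleton_self q)).2
        have hpx : p ≠ x := fun c => hxg (c ▸ hpg)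
        have hqx : q ≠ x := fun c => hxg (c ▸ hqg)
        have hpq : p ≠ q := by
          intro c
          have : p ∈ e₀ ∩ f := Finset.mem_inter.mpr ⟨hpe, c ▸ hqf⟩
          rw [hx, Finset.mem_singleton] at this
          exact hpx this
        refine hnobad ⟨e₀, f, g, hFE e₀ he₀, hFE f hfF, hFE g hg, Ne.symm hfne, Ne.symm hgf,
          Ne.symm hge, ?_, ?_, ?_, ?_, ?_, ?_⟩
        · rw [hx]; exact Finset.card_singleton _
        · rw [hq]; exact Finset.card_singleton _
        · rw [hp]; exact Finset.card_singleton _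
        · rw [hx, hq]; exact fun c => hqx (Finset.singleton_injective c).symm
        · rw [hq, hp]; exact fun c => hpq (Finset.singleton_injective c).symm
        · rw [hx, hp]; exact fun c => hpx (Finset.singleton_injective c).symm
      have hax : a x = 1 := by
        obtain ⟨v, hv, hav⟩ := pairN e₀ he₀ f hfF
        rw [hx, Finset.mem_singleton] at hv
        exact hv ▸ hav
      exact contraT x hax allx


noncomputable section

variable {k : Type*} [Field k] {V : Type*} [Fintype V] [DecidableEq V]

def sp6pC (k : Type*) [Field k] {V : Type*} [Fintype V] [DecidableEq V] (C : Finset V) :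
    Ideal (MvPolynomial V k) :=
  Ideal.span ((fun v => (X v : MvPolynomial V k)) '' ↑C)

lemma sp6_prodX (e : Finset V) :
    (∏ v ∈ e, X v : MvPolynomial V k) = monomial (∑ v ∈ e, Finsupp.single v 1) 1 := by
  classical
  induction e using Finset.induction_on with
  | empty => simp [MvPolynomial.monomial_zero']
  | insert _ _ hni ih =>
    rename_i a s
    rw [Finset.prod_insert hni, Finset.sum_insert hni, ih, MvPolynomial.X,
      MvPolynomial.monomial_mul, one_mul]

/-- the weighting homomorphism -/
def sp6phi (k : Type*) [Field k] {V : Type*} [Fintype V] [DecidableEq V] (C : Finset V) :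
    MvPolynomial V k →ₐ[k] Polynomial (MvPolynomial V k) :=
  aeval (fun v => if v ∈ C then Polynomial.C (X v) * Polynomial.X else Polynomial.C (X v))

lemma sp6phi_monomial (C : Finset V) (b : V →₀ ℕ) (c : k) :
    sp6phi k C (monomial b c) =
      Polynomial.C (monomial b c) * Polynomial.X ^ (∑ v ∈ C, b v) := by
  classical
  rw [sp6phi, aeval_monomial]
  have h1 : (b.prod fun v n =>
      (if v ∈ C then Polynomial.C (X v : MvPolynomial V k) * Polynomial.X
        else Polynomial.C (X v)) ^ n) =
      Polynomial.C (b.prod fun v n => (X v : MvPolynomial V k) ^ n) *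
        Polynomial.X ^ (∑ v ∈ C, b v) := by
    rw [Finsupp.prod, Finsupp.prod]
    have h2 : ∀ v ∈ b.support,
        ((if v ∈ C then Polynomial.C (X v : MvPolynomial V k) * Polynomial.X
          else Polynomial.C (X v)) ^ b v) =
        Polynomial.C ((X v : MvPolynomial V k) ^ b v) *
          Polynomial.X ^ (if v ∈ C then b v else 0) := by
      intro v _
      by_cases hv : v ∈ C <;> simp [hv, mul_pow, map_pow]
    have h3 : ∑ x ∈ b.support, (if x ∈ C then b x else 0) = ∑ v ∈ C, b v := by
      rw [← Finset.sum_filter]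
      refine Finset.sum_subset (fun x hx => (Finset.mem_filter.mp hx).2) ?_
      intro x hxC hxn
      by_contra hb
      exact hxn (Finset.mem_filter.mpr ⟨Finsupp.mem_support_iff.mpr hb, hxC⟩)
    rw [Finset.prod_congr rfl h2, Finset.prod_mul_distrib, ← map_prod,
      Finset.prod_pow_eq_pow_sum, h3]
  rw [h1, MvPolynomial.monomial_eq]
  rw [Polynomial.algebraMap_apply, MvPolynomial.algebraMap_eq, map_mul]
  ring

lemma sp6_coeff_phi (C : Finset V) (g : MvPolynomial V k) (n : ℕ) :
    (sp6phi k C g).coeff n =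
      ∑ b ∈ g.support.filter (fun b => (∑ v ∈ C, b v) = n), monomial b (coeff b g) := by
  classical
  conv_lhs => rw [g.as_sum]
  rw [map_sum, Polynomial.finset_sum_coeff, Finset.sum_filter]
  apply Finset.sum_congr rfl
  intro b _
  rw [sp6phi_monomial, Polynomial.coeff_C_mul, Polynomial.coeff_X_pow]
  by_cases h : (∑ v ∈ C, b v) = n <;> simp [h, Ne.symm, eq_comm]

lemma sp6_support_weight (C : Finset V) (g : MvPolynomial V k) (n : ℕ)
    (h : (sp6phi k C g).coeff n = 0) : ∀ b ∈ g.support, (∑ v ∈ C, b v) ≠ n := by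
  intro b hb hbn
  rw [sp6_coeff_phi] at h
  have h2 := congrArg (MvPolynomial.coeff b) h
  rw [MvPolynomial.coeff_sum] at h2
  simp only [MvPolynomial.coeff_monomial, MvPolynomial.coeff_zero] at h2
  rw [Finset.sum_ite_eq' (g.support.filter (fun b => (∑ v ∈ C, b v) = n)) b
    (fun b' => coeff b' g)] at h2
  rw [if_pos (Finset.mem_filter.mpr ⟨hb, hbn⟩)] at h2
  exact MvPolynomial.mem_support_iff.mp hb h2

lemma sp6_mem_pC (C : Finset V) (g : MvPolynomial V k)
    (h : ∀ b ∈ g.support, ∃ v ∈ C, b v ≠ 0) : g ∈ sp6pC k C := by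
  rw [show g = ∑ b ∈ g.support, monomial b (coeff b g) from g.as_sum]
  apply Submodule.sum_mem
  intro b hb
  obtain ⟨v, hvC, hbv⟩ := h b hb
  have heq : monomial b (coeff b g) = X v * monomial (b - Finsupp.single v 1) (coeff b g) := by
    rw [MvPolynomial.X, MvPolynomial.monomial_mul, one_mul,
      add_tsub_cancel_of_le (Finsupp.single_le_iff.mpr (Nat.one_le_iff_ne_zero.mpr hbv))]
  rw [heq]
  exact Ideal.mul_mem_right _ _ (Ideal.subset_span ⟨v, hvC, rfl⟩)

lemma sp6_pC_weight (C : Finset V) {s f : MvPolynomial V k} (hs : s ∉ sp6pC k C)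
    (hsf : s * f ∈ (sp6pC k C)^2) : ∀ b ∈ f.support, 2 ≤ ∑ v ∈ C, b v := by
  classical
  have hs0 : (sp6phi k C s).coeff 0 ≠ 0 := by
    intro h0
    apply hs
    apply sp6_mem_pC
    intro b hb
    have hne := sp6_support_weight C s 0 h0 b hb
    by_contra hc; push_neg at hc
    exact hne (Finset.sum_eq_zero hc)
  have hmap : Ideal.map (sp6phi k C).toRingHom (sp6pC k C) ≤ Ideal.span {Polynomial.X} := by
    rw [Ideal.map_le_iff_le_comap, sp6pC, Ideal.span_le]
    rintro _ ⟨v, hv, rfl⟩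
    rw [SetLike.mem_coe, Ideal.mem_comap]
    have hXv : (sp6phi k C).toRingHom (X v) = Polynomial.C (X v) * Polynomial.X := by
      show sp6phi k C (X v) = _
      rw [sp6phi, aeval_X, if_pos (Finset.mem_coe.mp hv)]
    rw [hXv]
    exact Ideal.mul_mem_left _ _ (Ideal.subset_span rfl)
  have hX2 : (Polynomial.X)^2 ∣ (sp6phi k C) s * (sp6phi k C) f := by
    have h1 : (sp6phi k C) (s * f) ∈ Ideal.map (sp6phi k C).toRingHom ((sp6pC k C)^2) :=
      Ideal.mem_map_of_mem _ hsf
    rw [Ideal.map_pow] at h1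
    have h3 := Ideal.pow_right_mono hmap 2 h1
    rw [Ideal.span_singleton_pow] at h3
    rw [← map_mul]
    exact Ideal.mem_span_singleton.mp h3
  have hnd : ¬ (Polynomial.X ∣ (sp6phi k C) s) := fun hd => hs0 (Polynomial.X_dvd_iff.mp hd)
  have hPX : Prime (Polynomial.X : Polynomial (MvPolynomial V k)) := Polynomial.prime_X
  have hXf : (Polynomial.X)^2 ∣ (sp6phi k C) f := by
    have hdvd : Polynomial.X ∣ (sp6phi k C) s * (sp6phi k C) f :=
      dvd_trans (dvd_pow_self _ two_ne_zero) hX2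
    have hd1 : Polynomial.X ∣ (sp6phi k C) f := (hPX.2.2 _ _ hdvd).resolve_left hnd
    obtain ⟨r, hr⟩ := hd1
    rw [hr] at hX2 ⊢
    have hX0 : (Polynomial.X : Polynomial (MvPolynomial V k)) ≠ 0 := hPX.ne_zero
    obtain ⟨t, ht⟩ := hX2
    have hXsr : Polynomial.X ∣ (sp6phi k C) s * r := by
      have heq : Polynomial.X * ((sp6phi k C) s * r) = Polynomial.X * (Polynomial.X * t) := by
        calc Polynomial.X * ((sp6phi k C) s * r)
            = (sp6phi k C) s * (Polynomial.X * r) := by ring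
          _ = Polynomial.X ^ 2 * t := ht
          _ = Polynomial.X * (Polynomial.X * t) := by ring
      exact ⟨t, mul_left_cancel₀ hX0 heq⟩
    have hr2 : Polynomial.X ∣ r := (hPX.2.2 _ _ hXsr).resolve_left hnd
    obtain ⟨r2, hr2'⟩ := hr2
    exact ⟨r2, by rw [hr2']; ring⟩
  obtain ⟨q, hq⟩ := hXf
  have hc0 : (sp6phi k C f).coeff 0 = 0 := by
    rw [hq, Polynomial.mul_coeff_zero]
    simp [Polynomial.coeff_X_pow]
  have hc1 : (sp6phi k C f).coeff 1 = 0 := by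
    rw [hq, pow_two, mul_assoc, show (1:ℕ) = 0 + 1 from rfl, Polynomial.coeff_X_mul,
      Polynomial.mul_coeff_zero]
    simp
  intro b hb
  have h0 := sp6_support_weight C f 0 hc0 b hb
  have h1 := sp6_support_weight C f 1 hc1 b hb
  omega

def sp6psi (k : Type*) [Field k] {V : Type*} [Fintype V] [DecidableEq V] (C : Finset V) :
    MvPolynomial V k →+* MvPolynomial V k :=
  (Polynomial.evalRingHom (0 : MvPolynomial V k)).comp (sp6phi k C).toRingHom

lemma sp6psi_apply (C : Finset V) (g : MvPolynomial V k) :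
    sp6psi k C g = (sp6phi k C g).coeff 0 := by
  show Polynomial.eval 0 (sp6phi k C g) = _
  exact (Polynomial.coeff_zero_eq_eval_zero _).symm

lemma sp6_ker_psi (C : Finset V) : RingHom.ker (sp6psi k C) = sp6pC k C := by
  have hle : sp6pC k C ≤ RingHom.ker (sp6psi k C) := by
    rw [sp6pC, Ideal.span_le]
    rintro _ ⟨v, hv, rfl⟩
    rw [SetLike.mem_coe, RingHom.mem_ker, sp6psi_apply]
    have : sp6phi k C (X v) = Polynomial.C (X v) * Polynomial.X := by
      rw [sp6phi, aeval_X, if_pos (Finset.mem_coe.mp hv)]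
    rw [this]
    simp
  refine le_antisymm ?_ hle
  intro g hg
  rw [RingHom.mem_ker, sp6psi_apply] at hg
  apply sp6_mem_pC
  intro b hb
  have hne := sp6_support_weight C g 0 hg b hb
  by_contra hc; push_neg at hc
  exact hne (Finset.sum_eq_zero hc)

lemma sp6_pC_prime (C : Finset V) : (sp6pC k C).IsPrime := by
  rw [← sp6_ker_psi]
  exact RingHom.ker_isPrime _

lemma sp6_colon (E : Finset (Finset V)) (C : Finset V)
    (hC : ∀ e ∈ E, ∃ v ∈ e, v ∈ C)
    (hmin : ∀ w ∈ C, ∃ e ∈ E, w ∈ e ∧ ∀ v ∈ e, v ∈ C → v = w)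
    (r : MvPolynomial V k) :
    r * (∏ v ∈ univ \ C, X v) ∈ edgeIdeal k E ↔ r ∈ sp6pC k C := by
  classical
  set u : MvPolynomial V k := ∏ v ∈ univ \ C, X v with hu
  have hu0 : u ≠ 0 := by
    rw [hu, sp6_prodX]
    exact fun h => one_ne_zero (MvPolynomial.monomial_eq_zero.mp h)
  constructor
  · intro hru
    have hpsiu : sp6psi k C u = u := by
      rw [sp6psi_apply, hu, sp6_prodX, sp6phi_monomial]
      have hw0 : (∑ v ∈ C, (∑ w ∈ univ \ C, Finsupp.single w 1) v) = 0 := by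
        apply Finset.sum_eq_zero; intro v hv
        rw [Finsupp.finset_sum_apply]
        apply Finset.sum_eq_zero; intro w hw
        rw [Finsupp.single_apply, if_neg]
        exact fun hwv => (Finset.mem_sdiff.mp hw).2 (hwv ▸ hv)
      rw [hw0, pow_zero, mul_one]
      simp
    have hmapI : Ideal.map (sp6psi k C) (edgeIdeal k E) = ⊥ := by
      rw [edgeIdeal, Ideal.map_span]
      refine le_bot_iff.mp (Ideal.span_le.mpr ?_)
      rintro _ ⟨_, ⟨e, he, rfl⟩, rfl⟩
      simp only [SetLike.mem_coe, Ideal.mem_bot]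
      rw [sp6psi_apply, sp6_prodX, sp6phi_monomial, Polynomial.coeff_C_mul,
        Polynomial.coeff_X_pow]
      obtain ⟨v, hve, hvC⟩ := hC e (Finset.mem_coe.mp he)
      have h1 : 1 ≤ (∑ w ∈ e, Finsupp.single w (1:ℕ)) v := by
        rw [Finsupp.finset_sum_apply]
        have := Finset.single_le_sum (f := fun w => (Finsupp.single w (1:ℕ)) v)
          (fun i _ => Nat.zero_le _) hve
        simpa using this
      have hpos : 1 ≤ ∑ v' ∈ C, (∑ w ∈ e, Finsupp.single w (1:ℕ)) v' :=
        le_trans h1 (Finset.single_le_sum (f := fun v' => (∑ w ∈ e, Finsupp.single w (1:ℕ)) v')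
          (fun i _ => Nat.zero_le _) hvC)
      rw [if_neg (by omega), mul_zero]
    have h0 : sp6psi k C (r * u) = 0 := by
      have hmem : sp6psi k C (r * u) ∈ Ideal.map (sp6psi k C) (edgeIdeal k E) :=
        Ideal.mem_map_of_mem _ hru
      rw [hmapI] at hmem
      exact Ideal.mem_bot.mp hmem
    rw [map_mul, hpsiu] at h0
    have hr0 : sp6psi k C r = 0 := by
      rcases mul_eq_zero.mp h0 with h | h
      · exact h
      · exact absurd h hu0
    have : r ∈ RingHom.ker (sp6psi k C) := hr0
    rwa [sp6_ker_psi] at this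
  · intro hr
    rw [sp6pC] at hr
    refine Submodule.span_induction ?_ ?_ ?_ ?_ hr
    · rintro _ ⟨w, hw, rfl⟩
      obtain ⟨e, he, hwe, huniq⟩ := hmin w (Finset.mem_coe.mp hw)
      have hwnC : w ∉ univ \ C := fun h => (Finset.mem_sdiff.mp h).2 (Finset.mem_coe.mp hw)
      have heq : X w * u = ∏ v ∈ insert w (univ \ C), (X v : MvPolynomial V k) :=
        (Finset.prod_insert hwnC).symm
      have hsub : e ⊆ insert w (univ \ C) := by
        intro v hv
        by_cases hvC : v ∈ C
        · rw [huniq v hv hvC]; exact Finset.mem_insert_self _ _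
        · exact Finset.mem_insert_of_mem (Finset.mem_sdiff.mpr ⟨Finset.mem_univ v, hvC⟩)
      obtain ⟨c, hc⟩ := Finset.prod_dvd_prod_of_subset e (insert w (univ \ C))
        (fun v => (X v : MvPolynomial V k)) hsub
      rw [heq, hc]
      exact Ideal.mul_mem_right _ _ (Ideal.subset_span ⟨e, he, rfl⟩)
    · rw [zero_mul]; exact Submodule.zero_mem _
    · intro a b _ _ ha hb
      rw [add_mul]; exact Submodule.add_mem _ ha hb
    · intro a x _ hx
      rw [smul_eq_mul, mul_assoc]
      exact Ideal.mul_mem_left _ _ hx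

lemma sp6_assoc (E : Finset (Finset V)) (C : Finset V)
    (hC : ∀ e ∈ E, ∃ v ∈ e, v ∈ C)
    (hmin : ∀ w ∈ C, ∃ e ∈ E, w ∈ e ∧ ∀ v ∈ e, v ∈ C → v = w) :
    sp6pC k C ∈ associatedPrimes (MvPolynomial V k) (MvPolynomial V k ⧸ edgeIdeal k E) := by
  refine ⟨sp6_pC_prime C, Ideal.Quotient.mk (edgeIdeal k E) (∏ v ∈ univ \ C, X v), ?_⟩
  suffices hcol : ∀ r, r ∈ sp6pC k C ↔ r ∈ (⊥ : Submodule (MvPolynomial V k)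
      (MvPolynomial V k ⧸ edgeIdeal k E)).colon
      {Ideal.Quotient.mk (edgeIdeal k E) (∏ v ∈ univ \ C, X v)} by
    have he : sp6pC k C = _ := Ideal.ext hcol
    rw [← he, (sp6_pC_prime C).radical]
  intro r
  rw [Submodule.mem_colon_singleton, Submodule.mem_bot]
  have hsm : r • (Ideal.Quotient.mk (edgeIdeal k E) (∏ v ∈ univ \ C, X v)) =
      Ideal.Quotient.mk (edgeIdeal k E) (r * ∏ v ∈ univ \ C, X v) := rfl
  rw [hsm, Ideal.Quotient.eq_zero_iff_mem]
  exact (sp6_colon E C hC hmin r).symm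

lemma sp6_extract (p : Ideal (MvPolynomial V k)) (hp : p.IsPrime)
    (J : Ideal (MvPolynomial V k)) (f : MvPolynomial V k)
    (h : f ∈ Ideal.comap (algebraMap _ (Localization (@Ideal.primeCompl _ _ p hp)))
        (Ideal.map (algebraMap _ (Localization (@Ideal.primeCompl _ _ p hp))) J)) :
    ∃ s, s ∉ p ∧ s * f ∈ J := by
  haveI := hp
  rw [Ideal.mem_comap, IsLocalization.mem_map_algebraMap_iff p.primeCompl] at h
  obtain ⟨⟨a, s⟩, hx⟩ := h
  refine ⟨s, s.2, ?_⟩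
  have hinj : Function.Injective
      (algebraMap (MvPolynomial V k) (Localization p.primeCompl)) := by
    apply IsLocalization.injective (M := p.primeCompl)
    intro t ht
    exact mem_nonZeroDivisors_of_ne_zero (fun h0 => ht (h0 ▸ p.zero_mem))
  have heq : (s : MvPolynomial V k) * f = a := hinj (by rw [map_mul, mul_comm]; exact hx)
  rw [heq]; exact a.2

lemma sp6_I_le_pC (E : Finset (Finset V)) (C : Finset V)
    (hC : ∀ e ∈ E, ∃ v ∈ e, v ∈ C) : edgeIdeal k E ≤ sp6pC k C := by
  rw [edgeIdeal, Ideal.span_le]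
  rintro _ ⟨e, he, rfl⟩
  obtain ⟨v, hve, hvC⟩ := hC e (Finset.mem_coe.mp he)
  show (∏ x ∈ e, (X x : MvPolynomial V k)) ∈ sp6pC k C
  rw [← Finset.mul_prod_erase e _ hve]
  exact Ideal.mul_mem_right _ _ (Ideal.subset_span ⟨v, hvC, rfl⟩)

lemma sp6_min_cover (E : Finset (Finset V)) (C : Finset V)
    (hC : ∀ e ∈ E, ∃ v ∈ e, v ∈ C) :
    ∃ C' ⊆ C, (∀ e ∈ E, ∃ v ∈ e, v ∈ C') ∧
      ∀ w ∈ C', ∃ e ∈ E, w ∈ e ∧ ∀ v ∈ e, v ∈ C' → v = w := by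
  classical
  set T := C.powerset.filter (fun D => ∀ e ∈ E, ∃ v ∈ e, v ∈ D) with hT
  have hCT : C ∈ T := Finset.mem_filter.mpr ⟨Finset.mem_powerset_self C, hC⟩
  obtain ⟨C', hC'T, hmin⟩ := Finset.exists_min_image T Finset.card ⟨C, hCT⟩
  have hC'sub : C' ⊆ C := Finset.mem_powerset.mp (Finset.mem_filter.mp hC'T).1
  have hC'cov := (Finset.mem_filter.mp hC'T).2
  refine ⟨C', hC'sub, hC'cov, ?_⟩
  intro w hw
  have hnc : ¬ (∀ e ∈ E, ∃ v ∈ e, v ∈ C'.erase w) := by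
    intro hcov'
    have hmem : C'.erase w ∈ T := Finset.mem_filter.mpr
      ⟨Finset.mem_powerset.mpr ((Finset.erase_subset w C').trans hC'sub), hcov'⟩
    have h1 := hmin _ hmem
    have h2 := Finset.card_erase_lt_of_mem hw
    omega
  push_neg at hnc
  obtain ⟨e, he, hall⟩ := hnc
  obtain ⟨v0, hv0e, hv0C⟩ := hC'cov e he
  have hv0w : v0 = w := by
    by_contra hne
    exact (hall v0 hv0e) (Finset.mem_erase.mpr ⟨hne, hv0C⟩)
  refine ⟨e, he, hv0w ▸ hv0e, ?_⟩
  intro v hv hvC'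
  by_contra hne
  exact (hall v hv) (Finset.mem_erase.mpr ⟨hne, hvC'⟩)

end

end SP6Aux

/-- if the second symbolic and ordinary powers of the edge ideal of a
simple 3-uniform 3-partite hypergraph differ, the hypergraph contains a bad
subhypergraph of length 3. -/

theorem stmt6 {k V : Type*} [Field k] [Fintype V] [DecidableEq V]
    (E : Finset (Finset V))
    (huniform : ∀ e ∈ E, e.card = 3)
    (Xp : Fin 3 → Finset V)
    (hdisj : Pairwise fun i j => Disjoint (Xp i) (Xp j))
    (hcover : ∀ v : V, ∃ i, v ∈ Xp i)
    (hpartite : ∀ e ∈ E, ∀ i, (e ∩ Xp i).card = 1)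
    (hne : symbolicPower (edgeIdeal k E) 2 ≠ (edgeIdeal k E) ^ 2) :
    ∃ e₁ e₂ e₃ : Finset V, BadTriple E e₁ e₂ e₃ := by
  classical
  by_contra hbad
  apply hne
  apply le_antisymm
  · -- symbolic power ≤ ordinary square
    intro f hf
    rw [symbolicPower] at hf
    have hwt : ∀ b ∈ f.support, ∀ C : Finset V,
        (∀ e ∈ E, ∃ v ∈ e, v ∈ C) → 2 ≤ ∑ v ∈ C, b v := by
      intro b hb C hCcov
      obtain ⟨C', hC'sub, hC'cov, hC'min⟩ := sp6_min_cover E C hCcov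
      have hass := sp6_assoc (k := k) E C' hC'cov hC'min
      have hJ : f ∈ Ideal.comap
          (algebraMap _ (Localization (@Ideal.primeCompl _ _ (sp6pC k C') (sp6_pC_prime C'))))
          (Ideal.map
            (algebraMap _ (Localization (@Ideal.primeCompl _ _ (sp6pC k C') (sp6_pC_prime C'))))
            ((edgeIdeal k E) ^ 2)) := by
        exact Submodule.mem_sInf.mp hf _ ⟨sp6pC k C', sp6_pC_prime C', hass, rfl⟩
      obtain ⟨s, hs, hsf⟩ := sp6_extract _ (sp6_pC_prime C') _ f hJ
      have hsf2 : s * f ∈ (sp6pC k C') ^ 2 :=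
        Ideal.pow_right_mono (sp6_I_le_pC E C' hC'cov) 2 hsf
      have h2 := sp6_pC_weight C' hs hsf2 b hb
      calc 2 ≤ ∑ v ∈ C', b v := h2
        _ ≤ ∑ v ∈ C, b v := Finset.sum_le_sum_of_subset hC'sub
    rw [show f = ∑ b ∈ f.support, monomial b (coeff b f) from f.as_sum]
    apply Submodule.sum_mem
    intro b hb
    obtain ⟨e₁, he₁, e₂, he₂, hle⟩ := comb E huniform Xp hcover hpartite hbad
      (fun v => b v) (fun C hC => hwt b hb C hC)
    have happ : ∀ (e : Finset V) (v : V),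
        (∑ w ∈ e, Finsupp.single w (1:ℕ)) v = if v ∈ e then 1 else 0 := by
      intro e v
      rw [Finsupp.finset_sum_apply]
      by_cases hv : v ∈ e
      · rw [Finset.sum_eq_single v
          (fun w _ hw => by rw [Finsupp.single_apply, if_neg hw])
          (fun h => absurd hv h)]
        simp [hv]
      · rw [if_neg hv]
        refine Finset.sum_eq_zero fun w hw => ?_
        rw [Finsupp.single_apply, if_neg (fun c : w = v => hv (c ▸ hw))]
    have hs12 : (∑ v ∈ e₁, Finsupp.single v 1) + (∑ v ∈ e₂, Finsupp.single v 1) ≤ b := by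
      rw [Finsupp.le_def]
      intro v
      rw [Finsupp.add_apply, happ, happ]
      exact hle v
    have hmul : monomial b (coeff b f) =
        ((∏ v ∈ e₁, X v) * (∏ v ∈ e₂, X v)) *
          monomial (b - ((∑ v ∈ e₁, Finsupp.single v 1) + (∑ v ∈ e₂, Finsupp.single v 1)))
            (coeff b f) := by
      rw [sp6_prodX, sp6_prodX, MvPolynomial.monomial_mul, MvPolynomial.monomial_mul,
        one_mul, one_mul, add_tsub_cancel_of_le hs12]
    rw [hmul, pow_two]
    exact Ideal.mul_mem_right _ _ (Ideal.mul_mem_mul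
      (Ideal.subset_span ⟨e₁, he₁, rfl⟩) (Ideal.subset_span ⟨e₂, he₂, rfl⟩))
  · rw [symbolicPower]
    apply le_sInf
    rintro J ⟨p, hp, hass, rfl⟩
    exact Ideal.le_comap_map
end

section
/- Let C_n be the cycle on vertices x_1,...,x_n (n ≥ 2) and let 2 ≤ t ≤ n. The t-path hypergraph H_t(C_n), whose hyperedges are the vertex sets of paths with t vertices in C_n, is t-partite if and only if n ≡ 0 (mod t). -/
/-- the hyperedges of the t-path hypergraph of the cycle Cₙ: all sets of t
cyclically consecutive vertices. -/
def pathHyperedges (n t : ℕ) [NeZero n] : Finset (Finset (ZMod n)) :=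
  Finset.image
    (fun i : ZMod n => Finset.image (fun j : Fin t => i + ((j : ℕ) : ZMod n)) Finset.univ)
    Finset.univ

section aux

variable {n t : ℕ} [NeZero n]

/-- the edge starting at `c` -/
def pathEdge (n t : ℕ) [NeZero n] (c : ZMod n) : Finset (ZMod n) :=
  Finset.image (fun j : Fin t => c + ((j : ℕ) : ZMod n)) Finset.univ

lemma pathEdge_mem (c : ZMod n) : pathEdge n t c ∈ pathHyperedges n t :=
  Finset.mem_image_of_mem _ (Finset.mem_univ c)

lemma pathEdge_inj (htn : t ≤ n) (c : ZMod n) :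
    Function.Injective (fun j : Fin t => c + ((j : ℕ) : ZMod n)) := by
  intro j₁ j₂ h
  simp only [add_right_inj] at h
  have h' : ((j₁ : ℕ) : ZMod n).val = ((j₂ : ℕ) : ZMod n).val := by rw [h]
  rw [ZMod.val_cast_of_lt (lt_of_lt_of_le j₁.isLt htn),
    ZMod.val_cast_of_lt (lt_of_lt_of_le j₂.isLt htn)] at h'
  exact Fin.ext h'

end aux

/-- the t-path hypergraph of the cycle Cₙ (2 ≤ t ≤ n) is t-partite
iff t divides n. -/
theorem stmt10 (n t : ℕ) [NeZero n] (hn : 2 ≤ n) (ht : 2 ≤ t) (htn : t ≤ n) :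
    (∃ Xp : Fin t → Finset (ZMod n),
        (Pairwise fun i j => Disjoint (Xp i) (Xp j)) ∧
        (∀ v : ZMod n, ∃ i, v ∈ Xp i) ∧
        (∀ e ∈ pathHyperedges n t, ∀ i, (e ∩ Xp i).card = 1)) ↔
      n % t = 0 := by
  have htz : NeZero t := ⟨by omega⟩
  constructor
  · rintro ⟨Xp, hdisj, hcover, hedge⟩
    -- the color of a vertex
    set color : ZMod n → Fin t := fun v => (hcover v).choose with hcolor
    have hmem : ∀ v, v ∈ Xp (color v) := fun v => (hcover v).choose_spec
    have huniq : ∀ v i, v ∈ Xp i → i = color v := by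
      intro v i hv
      by_contra hne
      exact (Finset.disjoint_left.mp (hdisj hne) hv) (hmem v)
    -- injectivity of color on each edge
    have hinj : ∀ c : ZMod n, ∀ u ∈ pathEdge n t c, ∀ v ∈ pathEdge n t c,
        color u = color v → u = v := by
      intro c u hu v hv hcv
      have hcard := hedge _ (pathEdge_mem c) (color u)
      have hu' : u ∈ pathEdge n t c ∩ Xp (color u) :=
        Finset.mem_inter.mpr ⟨hu, hmem u⟩
      have hv' : v ∈ pathEdge n t c ∩ Xp (color u) :=
        Finset.mem_inter.mpr ⟨hv, hcv ▸ hmem v⟩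
      exact Finset.card_le_one.mp (le_of_eq hcard) u hu' v hv'
    have hmemEdge : ∀ (c : ZMod n) (j : Fin t), c + ((j : ℕ) : ZMod n) ∈ pathEdge n t c :=
      fun c j => Finset.mem_image_of_mem _ (Finset.mem_univ j)
    -- step lemma : color (c + t) = color c
    have hstep : ∀ c : ZMod n, color (c + ((t : ℕ) : ZMod n)) = color c := by
      intro c
      have hcard := hedge _ (pathEdge_mem (c := c + 1)) (color c)
      obtain ⟨w, hw⟩ := Finset.card_eq_one.mp hcard
      have hwmem : w ∈ pathEdge n t (c + 1) ∩ Xp (color c) := hw ▸ Finset.mem_singleton_self w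
      obtain ⟨hw1, hw2⟩ := Finset.mem_inter.mp hwmem
      have hwc : color w = color c := (huniq w _ hw2).symm
      obtain ⟨j, _, hj⟩ := Finset.mem_image.mp hw1
      by_cases hjt : (j : ℕ) = t - 1
      · -- w = c + t
        have hwt : w = c + ((t : ℕ) : ZMod n) := by
          rw [← hj, hjt, add_assoc]
          congr 1
          have : ((t - 1 : ℕ) : ZMod n) = (t : ℕ) - 1 := by
            have := Nat.cast_sub (R := ZMod n) (le_of_lt (by omega : 1 < t))
            simpa using this
          rw [this]; ring
        rw [← hwt, hwc]
      · -- contradiction: w would be in pathEdge c and equal to c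
        exfalso
        have hjlt : (j : ℕ) + 1 < t := by have := j.isLt; omega
        have hwmem' : w ∈ pathEdge n t c := by
          have : w = c + (((⟨(j : ℕ) + 1, hjlt⟩ : Fin t) : ℕ) : ZMod n) := by
            rw [← hj]; push_cast; ring
          rw [this]; exact hmemEdge c _
        have hcmem : c ∈ pathEdge n t c :=
          Finset.mem_image.mpr ⟨⟨0, by omega⟩, Finset.mem_univ _, by simp⟩
        have : w = c := hinj c w hwmem' c hcmem (by rw [hwc])
        rw [← hj] at this
        have h0 : (((j : ℕ) + 1 : ℕ) : ZMod n) = 0 := by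
          have := this
          push_cast at this ⊢
          linear_combination this - c - 1
        rw [ZMod.natCast_eq_zero_iff] at h0
        have := Nat.le_of_dvd (by omega) h0
        omega
    -- iterate the step
    have hiter : ∀ (k : ℕ) (c : ZMod n), color (c + ((k * t : ℕ) : ZMod n)) = color c := by
      intro k
      induction k with
      | zero => intro c; simp
      | succ k ih =>
        intro c
        have : c + (((k + 1) * t : ℕ) : ZMod n)
            = (c + ((t : ℕ) : ZMod n)) + ((k * t : ℕ) : ZMod n) := by push_cast; ring
        rw [this, ih, hstep]
    by_contra hr
    set r := n % t with hrdef
    have hr0 : 0 < r := Nat.pos_of_ne_zero hr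
    have hrt : r < t := Nat.mod_lt _ (by omega)
    have hqt : n / t * t = n - r := by have h1 := Nat.div_add_mod n t; have h2 : n / t * t = t * (n / t) := Nat.mul_comm _ _; omega
    set a : ZMod n := ((n - r : ℕ) : ZMod n) with ha
    have hca : color a = color 0 := by
      have := hiter (n / t) 0
      rw [hqt] at this
      simpa using this
    have hamem : a ∈ pathEdge n t a :=
      Finset.mem_image.mpr ⟨⟨0, by omega⟩, Finset.mem_univ _, by simp⟩
    have h0mem : (0 : ZMod n) ∈ pathEdge n t a := by
      have h0 : (0 : ZMod n) = a + (((⟨r, hrt⟩ : Fin t) : ℕ) : ZMod n) := by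
        rw [ha]
        have : ((n - r : ℕ) : ZMod n) + ((r : ℕ) : ZMod n) = ((n : ℕ) : ZMod n) := by
          rw [← Nat.cast_add]
          congr 1
          omega
        simpa [ZMod.natCast_self] using this.symm
      rw [h0]; exact Finset.mem_image_of_mem _ (Finset.mem_univ _)
    have : a = 0 := hinj a a hamem 0 h0mem (by rw [hca])
    rw [ha, ZMod.natCast_eq_zero_iff] at this
    have := Nat.le_of_dvd (by omega) this
    omega
  · -- backward direction
    intro hmod
    have hdvd : t ∣ n := Nat.dvd_of_mod_eq_zero hmod
    -- the natural cast ZMod n → ZMod t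
    set φ : ZMod n →+* ZMod t := ZMod.castHom hdvd (ZMod t) with hφ
    set g : Fin t → ZMod t := fun j => ((j : ℕ) : ZMod t) with hg
    have hginj : Function.Injective g := by
      intro j₁ j₂ h
      have h' : ((j₁ : ℕ) : ZMod t).val = ((j₂ : ℕ) : ZMod t).val := congrArg ZMod.val h
      rw [ZMod.val_cast_of_lt j₁.isLt, ZMod.val_cast_of_lt j₂.isLt] at h'
      exact Fin.ext h'
    have hgsurj : Function.Surjective g := by
      intro z
      exact ⟨⟨z.val, z.val_lt⟩, ZMod.natCast_rightInverse z⟩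
    refine ⟨fun i => Finset.univ.filter (fun v => φ v = g i), ?_, ?_, ?_⟩
    · intro i j hij
      rw [Finset.disjoint_left]
      intro v hv hv'
      simp only [Finset.mem_filter] at hv hv'
      exact hij (hginj (hv.2.symm.trans hv'.2))
    · intro v
      obtain ⟨i, hi⟩ := hgsurj (φ v)
      exact ⟨i, Finset.mem_filter.mpr ⟨Finset.mem_univ _, hi.symm⟩⟩
    · intro e he i
      obtain ⟨c, _, hc⟩ := Finset.mem_image.mp he
      subst hc
      have hint : Finset.image (fun j : Fin t => c + ((j : ℕ) : ZMod n)) Finset.univ ∩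
          Finset.univ.filter (fun v => φ v = g i)
          = (Finset.image (fun j : Fin t => c + ((j : ℕ) : ZMod n)) Finset.univ).filter
            (fun v => φ v = g i) := by
        ext v
        simp only [Finset.mem_inter, Finset.mem_filter, Finset.mem_univ, true_and]
      rw [hint, Finset.filter_image,
        Finset.card_image_of_injective _ (pathEdge_inj htn c)]
      -- the filter over Fin t has exactly one element
      obtain ⟨j₀, hj₀⟩ := hgsurj (g i - φ c)
      rw [Finset.card_eq_one]
      refine ⟨j₀, ?_⟩
      ext j
      simp only [Finset.mem_filter, Finset.mem_univ, true_and, Finset.mem_singleton]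
      constructor
      · intro h
        apply hginj
        rw [hj₀]
        have : φ (c + ((j : ℕ) : ZMod n)) = φ c + g j := by
          simp [hφ, hg, map_add]
        rw [this] at h
        linear_combination h
      · intro h
        subst h
        have : φ (c + ((j : ℕ) : ZMod n)) = φ c + g j := by
          simp [hφ, hg, map_add]
        rw [this, hj₀]
        ring
end
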